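/- arXiv:2212.12614 — 7 statements merged into one kernel-verified Lean document; each statement's English description precedes it below -/
import Mathlib

section
/- Normal form of a Christoffel symbol at a simple pole with non-negative-integer residue (Lemma lds): Let res ∈ ℂ with res ∉ {−1, −2, −3, …}, let ε > 0 and let h : B(0,ε) → ℂ be holomorphic. Then there exist r ∈ (0, ε] and an injective holomorphic map ρ : B(0,r) → ℂ with ρ(0) = 0 and ρ′(0) ≠ 0 such that for all z ∈ B(0,r) with z ≠ 0 one has res/z + h(z) = res·ρ′(z)/ρ(z) + ρ″(z)/ρ′(z). (In the coordinate w = ρ(z), the Christoffel symbol ζ(z) = res/z + h(z) takes the normal form res/w.) -/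
open Complex Metric Set

open Filter

/-- Coefficients of a holomorphic function on a disc around `0`, with a geometric bound
and pointwise convergence on a smaller disc. -/
lemma exists_coeffs_aux (f : ℂ → ℂ) {s : ℝ} (hs : 0 < s) (hf : DifferentiableOn ℂ f (ball 0 s)) :
    ∃ (a : ℕ → ℂ) (t C : ℝ), 0 < t ∧ t ≤ s ∧ 0 < C ∧ (∀ n, ‖a n‖ * t ^ n ≤ C) ∧
      (∀ z ∈ ball (0:ℂ) t, HasSum (fun n => a n * z ^ n) (f z)) ∧ a 0 = f 0 := by
  have h0 : (0:ℂ) ∈ ball (0:ℂ) s := by simpa using hs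
  have hA : AnalyticAt ℂ f 0 := hf.analyticAt (isOpen_ball.mem_nhds h0)
  obtain ⟨p, hp⟩ := hA
  have hev := hasFPowerSeriesAt_iff.1 hp
  rw [Metric.eventually_nhds_iff] at hev
  obtain ⟨δ, hδ, hδs⟩ := hev
  set t : ℝ := min δ s / 2 with ht_def
  have htpos : 0 < t := by positivity
  have hts : t ≤ s := by
    have : min δ s ≤ s := min_le_right _ _
    simp only [ht_def]; linarith
  have htδ : t < δ := by
    have : min δ s ≤ δ := min_le_left _ _
    simp only [ht_def]; linarith [lt_min hδ hs]
  have hsum : ∀ z ∈ ball (0:ℂ) t, HasSum (fun n => p.coeff n * z ^ n) (f z) := by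
    intro z hz
    have hz' : dist z 0 < δ := by
      rw [mem_ball] at hz; exact hz.trans htδ
    have := hδs hz'
    simpa [smul_eq_mul, mul_comm] using this
  have hsum_t : HasSum (fun n => ((t:ℂ)) ^ n • p.coeff n) (f (0 + t)) := by
    apply hδs
    simp [abs_of_pos htpos, htδ]
  have hterms : Tendsto (fun n => ‖((t:ℂ)) ^ n • p.coeff n‖) atTop (nhds 0) := by
    simpa using (hsum_t.summable.tendsto_atTop_zero).norm
  obtain ⟨C0, hC0⟩ := hterms.bddAbove_range
  rw [mem_upperBounds] at hC0
  refine ⟨p.coeff, t, max C0 1, htpos, hts, by positivity, ?_, hsum, ?_⟩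
  · intro n
    have := hC0 _ ⟨n, rfl⟩
    have he : ‖((t:ℂ)) ^ n • p.coeff n‖ = ‖p.coeff n‖ * t ^ n := by
      rw [norm_smul, norm_pow, Complex.norm_real]
      rw [Real.norm_of_nonneg htpos.le, mul_comm]
    simp only [] at this
    rw [he] at this
    exact this.trans (le_max_left _ _)
  · have := hp.coeff_zero 1
    simpa using this

set_option maxHeartbeats 1000000 in
/-- Normal form of a Christoffel symbol at a simple pole whose residue is not a
negative integer: there is a holomorphic change of coordinate `ρ` near `0`, fixing `0`,
with nonvanishing derivative at `0`, in which the symbol `res/z + h z` becomes `res/w`. -/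
theorem normal_form_simple_pole (res : ℂ) (hres : ∀ n : ℕ, res ≠ -(n + 1 : ℂ))
    (ε : ℝ) (hε : 0 < ε) (h : ℂ → ℂ) (hh : DifferentiableOn ℂ h (ball 0 ε)) :
    ∃ r : ℝ, r ∈ Set.Ioc 0 ε ∧ ∃ ρ : ℂ → ℂ,
      DifferentiableOn ℂ ρ (ball 0 r) ∧ Set.InjOn ρ (ball 0 r) ∧
      ρ 0 = 0 ∧ deriv ρ 0 ≠ 0 ∧
      ∀ z ∈ ball (0 : ℂ) r, z ≠ 0 →
        res / z + h z = res * deriv ρ z / ρ z + deriv (deriv ρ) z / deriv ρ z := by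
  have hden : ∀ n : ℕ, res + n + 1 ≠ 0 := by
    intro n hn
    exact hres n (by linear_combination hn)
  have hres1 : res + 1 ≠ 0 := by simpa using hden 0
  -- Step 1: coefficients of h
  obtain ⟨b, t, C, htpos, htε, hCpos, hbC, hbsum, -⟩ := exists_coeffs_aux h hε hh
  set r1 : ℝ := t / 2 with hr1_def
  have hr1pos : 0 < r1 := by positivity
  have hr1t : r1 < t := by simp only [hr1_def]; linarith
  -- Step 2: the primitive H of h with H 0 = 0
  set H : ℂ → ℂ := fun z => ∑' n : ℕ, (((n : ℂ) + 1)⁻¹ * b n) * z ^ (n + 1) with hH_def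
  have hu1 : Summable (fun n : ℕ => C * (1/2 : ℝ) ^ n) :=
    (summable_geometric_of_lt_one (by norm_num) (by norm_num)).mul_left C
  have hpre1 : ∀ n : ℕ, ∀ w ∈ ball (0:ℂ) r1,
      HasDerivAt (fun z => (((n : ℂ) + 1)⁻¹ * b n) * z ^ (n + 1)) (b n * w ^ n) w := by
    intro n w _
    have hd := (hasDerivAt_pow (n + 1) w).const_mul (((n : ℂ) + 1)⁻¹ * b n)
    have hne : ((n : ℂ) + 1) ≠ 0 := Nat.cast_add_one_ne_zero n
    have heq : (((n : ℂ) + 1)⁻¹ * b n) * (((n : ℕ) + 1 : ℕ) * w ^ ((n + 1) - 1)) = b n * w ^ n := by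
      push_cast [Nat.add_sub_cancel]
      field_simp
    rw [heq] at hd
    exact hd
  have hbound1 : ∀ n : ℕ, ∀ w ∈ ball (0:ℂ) r1, ‖b n * w ^ n‖ ≤ C * (1/2 : ℝ) ^ n := by
    intro n w hw
    rw [mem_ball, dist_zero_right] at hw
    calc ‖b n * w ^ n‖ = ‖b n‖ * ‖w‖ ^ n := by rw [norm_mul, norm_pow]
      _ ≤ ‖b n‖ * r1 ^ n := by gcongr <;> exact hw.le
      _ = ‖b n‖ * t ^ n * (1/2 : ℝ) ^ n := by
          rw [show r1 = t * (1/2 : ℝ) by rw [hr1_def]; ring, mul_pow]; ring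
      _ ≤ C * (1/2 : ℝ) ^ n := by
          apply mul_le_mul_of_nonneg_right (hbC n); positivity
  have hsum01 : Summable (fun n : ℕ => (((n : ℂ) + 1)⁻¹ * b n) * (0:ℂ) ^ (n + 1)) :=
    summable_zero.congr (fun n => by simp)
  have hHd : ∀ y ∈ ball (0:ℂ) r1, HasDerivAt H (h y) y := by
    intro y hy
    have hD := hasDerivAt_tsum_of_isPreconnected hu1 isOpen_ball
      (convex_ball (0:ℂ) r1).isPreconnected hpre1 hbound1 (mem_ball_self hr1pos) hsum01 hy
    have hty : (∑' n : ℕ, b n * y ^ n) = h y := by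
      have hyt : y ∈ ball (0:ℂ) t := by
        rw [mem_ball] at hy ⊢; linarith
      exact (hbsum y hyt).tsum_eq
    rw [hH_def]
    rw [hty] at hD
    exact hD
  have hH0 : H 0 = 0 := by
    have hz : ∀ n : ℕ, (((n : ℂ) + 1)⁻¹ * b n) * (0:ℂ) ^ (n + 1) = 0 := fun n => by simp
    calc H 0 = ∑' n : ℕ, (((n : ℂ) + 1)⁻¹ * b n) * (0:ℂ) ^ (n + 1) := rfl
      _ = 0 := by rw [tsum_congr hz, tsum_zero]
  -- Step 3: g = exp H
  set g : ℂ → ℂ := fun z => Complex.exp (H z) with hg_def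
  have hgd : ∀ y ∈ ball (0:ℂ) r1, HasDerivAt g (g y * h y) y := fun y hy => (hHd y hy).cexp
  have hg0 : g 0 = 1 := by simp [hg_def, hH0]
  have hgne : ∀ y, g y ≠ 0 := fun y => Complex.exp_ne_zero _
  -- Step 4: coefficients of g
  obtain ⟨a, t2, C2, ht2pos, ht2r1, hC2pos, haC, hasum, ha0⟩ :=
    exists_coeffs_aux g hr1pos (fun y hy => ((hgd y hy).differentiableAt).differentiableWithinAt)
  rw [hg0] at ha0
  -- Step 5: the multipliers c n and their bound
  set c : ℕ → ℂ := fun n => (res + 1) / (res + n + 1) with hc_def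
  have hkey : ∀ n : ℕ, ((n : ℂ) + (res + 1)) * c n = res + 1 := by
    intro n
    simp only [hc_def]
    rw [show ((n : ℂ) + (res + 1)) = res + n + 1 by ring, mul_div_cancel₀ _ (hden n)]
  obtain ⟨M, hMpos, hM⟩ : ∃ M : ℝ, 0 < M ∧ ∀ n, ‖c n‖ ≤ M := by
    have hLB : ∀ n : ℕ, (n : ℝ) + 1 - ‖res‖ ≤ ‖res + n + 1‖ := by
      intro n
      have h1 : ‖(res + n + 1) - res‖ ≤ ‖res + n + 1‖ + ‖res‖ := norm_sub_le _ _
      have h2 : (res + n + 1) - res = ((n : ℂ) + 1) := by ring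
      rw [h2] at h1
      have h3 : ‖((n : ℂ) + 1)‖ = (n : ℝ) + 1 := by
        rw [show ((n : ℂ) + 1) = ((n + 1 : ℕ) : ℂ) by push_cast; ring, Complex.norm_natCast]
        push_cast; ring
      rw [h3] at h1
      linarith
    have hdtop : Tendsto (fun n : ℕ => ‖res + n + 1‖) atTop atTop := by
      apply tendsto_atTop_mono hLB
      have h4 : Tendsto (fun n : ℕ => (n : ℝ) + (1 - ‖res‖)) atTop atTop :=
        tendsto_atTop_add_const_right atTop _ tendsto_natCast_atTop_atTop
      apply h4.congr
      intro n; ring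
    have htend : Tendsto (fun n : ℕ => ‖c n‖) atTop (nhds 0) := by
      have := Tendsto.div_atTop (tendsto_const_nhds (x := ‖res + 1‖)) hdtop
      apply this.congr
      intro n
      rw [hc_def]
      rw [norm_div]
    obtain ⟨M0, hM0⟩ := htend.bddAbove_range
    rw [mem_upperBounds] at hM0
    refine ⟨M0 + 1, ?_, fun n => by linarith [hM0 _ ⟨n, rfl⟩]⟩
    have : (0:ℝ) ≤ M0 := le_trans (norm_nonneg (c 0)) (hM0 _ ⟨0, rfl⟩)
    linarith
  -- Step 6: E and its derivative
  set E : ℂ → ℂ := fun z => ∑' n : ℕ, (c n * a n) * z ^ n with hE_def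
  set Ed : ℂ → ℂ := fun y => ∑' n : ℕ, (c n * a n) * ((n : ℂ) * y ^ (n - 1)) with hEd_def
  set r3 : ℝ := t2 / 2 with hr3_def
  have hr3pos : 0 < r3 := by positivity
  have hr3t2 : r3 < t2 := by simp only [hr3_def]; linarith
  have hpre3 : ∀ n : ℕ, ∀ w ∈ ball (0:ℂ) r3,
      HasDerivAt (fun z => (c n * a n) * z ^ n) ((c n * a n) * ((n : ℂ) * w ^ (n - 1))) w :=
    fun n w _ => (hasDerivAt_pow n w).const_mul _
  have hu3 : Summable (fun n : ℕ => (M * (2 * C2 / t2)) * ((n : ℝ) * (1/2 : ℝ) ^ n)) := by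
    have hg2 : Summable (fun n : ℕ => (n : ℝ) ^ 1 * (1/2 : ℝ) ^ n) :=
      summable_pow_mul_geometric_of_norm_lt_one 1 (by rw [Real.norm_of_nonneg] <;> norm_num)
    have := hg2.mul_left (M * (2 * C2 / t2))
    simpa [pow_one] using this
  have hbound3 : ∀ n : ℕ, ∀ w ∈ ball (0:ℂ) r3,
      ‖(c n * a n) * ((n : ℂ) * w ^ (n - 1))‖ ≤ (M * (2 * C2 / t2)) * ((n : ℝ) * (1/2 : ℝ) ^ n) := by
    intro n w hw
    rw [mem_ball, dist_zero_right] at hw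
    have haC' : ‖a n‖ ≤ C2 / t2 ^ n := by
      rw [le_div_iff₀ (by positivity)]; exact haC n
    have step1 : ‖(c n * a n) * ((n : ℂ) * w ^ (n - 1))‖
        ≤ M * (C2 / t2 ^ n) * ((n : ℝ) * r3 ^ (n - 1)) := by
      simp only [norm_mul, norm_pow, Complex.norm_natCast]
      gcongr
      all_goals first | exact hM n | exact haC' | exact hw.le
    refine step1.trans ?_
    cases n with
    | zero => simp
    | succ m =>
      apply le_of_eq
      have ht2ne : t2 ≠ 0 := ht2pos.ne'
      rw [hr3_def]
      rw [Nat.add_sub_cancel]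
      field_simp
      ring
  have hsum03 : Summable (fun n : ℕ => (c n * a n) * (0:ℂ) ^ n) := by
    apply summable_of_ne_finset_zero (s := {0})
    intro n hn
    have : n ≠ 0 := by simpa using hn
    simp [zero_pow this]
  have hEd' : ∀ y ∈ ball (0:ℂ) r3, HasDerivAt E (Ed y) y := by
    intro y hy
    exact hasDerivAt_tsum_of_isPreconnected
      (g := fun (n : ℕ) (z : ℂ) => (c n * a n) * z ^ n)
      (g' := fun (n : ℕ) (y : ℂ) => (c n * a n) * ((n : ℂ) * y ^ (n - 1)))
      hu3 isOpen_ball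
      (convex_ball (0:ℂ) r3).isPreconnected hpre3 hbound3 (mem_ball_self hr3pos) hsum03 hy
  have hsummE : ∀ y ∈ ball (0:ℂ) r3, Summable (fun n => (c n * a n) * y ^ n) := by
    intro y hy
    exact summable_of_summable_hasDerivAt_of_isPreconnected
      (g := fun (n : ℕ) (z : ℂ) => (c n * a n) * z ^ n)
      (g' := fun (n : ℕ) (y : ℂ) => (c n * a n) * ((n : ℂ) * y ^ (n - 1)))
      hu3 isOpen_ball
      (convex_ball (0:ℂ) r3).isPreconnected hpre3 hbound3 (mem_ball_self hr3pos) hsum03 hy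
  have hsummEd : ∀ y ∈ ball (0:ℂ) r3,
      Summable (fun n => (c n * a n) * ((n : ℂ) * y ^ (n - 1))) := by
    intro y hy
    exact Summable.of_norm_bounded hu3 (fun n => hbound3 n y hy)
  have hE0 : E 0 = 1 := by
    have hE00 : E 0 = ∑' n : ℕ, (c n * a n) * (0:ℂ) ^ n := rfl
    rw [hE00, tsum_eq_single 0 (fun n hn => by simp [zero_pow hn])]
    simp only [pow_zero, mul_one, hc_def, ha0, Nat.cast_zero, add_zero]
    exact div_self hres1
  -- Step 7: the ODE  z E' + (res+1) E = (res+1) g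
  have hODE : ∀ y ∈ ball (0:ℂ) r3, y * Ed y + (res + 1) * E y = (res + 1) * g y := by
    intro y hy
    have hy2 : y ∈ ball (0:ℂ) t2 := (ball_subset_ball hr3t2.le) hy
    have hgsum := hasum y hy2
    have s1 : Summable (fun n => y * ((c n * a n) * ((n : ℂ) * y ^ (n - 1)))) :=
      (hsummEd y hy).mul_left y
    have s2 : Summable (fun n => (res + 1) * ((c n * a n) * y ^ n)) :=
      (hsummE y hy).mul_left _
    have hstep : y * Ed y + (res + 1) * E y
        = ∑' n : ℕ, (y * ((c n * a n) * ((n : ℂ) * y ^ (n - 1)))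
            + (res + 1) * ((c n * a n) * y ^ n)) := by
      rw [hEd_def, hE_def, ← tsum_mul_left, ← tsum_mul_left, ← Summable.tsum_add s1 s2]
    rw [hstep]
    have hcong : ∀ n : ℕ, y * ((c n * a n) * ((n : ℂ) * y ^ (n - 1)))
        + (res + 1) * ((c n * a n) * y ^ n) = (res + 1) * (a n * y ^ n) := by
      intro n
      have hk := hkey n
      cases n with
      | zero =>
        push_cast at hk
        simp only [Nat.cast_zero, zero_mul, mul_zero, pow_zero, mul_one, zero_add]
        linear_combination a 0 * hk
      | succ m =>
        push_cast at hk
        rw [Nat.add_sub_cancel, pow_succ y m]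
        push_cast
        linear_combination (a (m + 1) * y ^ m * y) * hk
    rw [tsum_congr hcong, tsum_mul_left, hgsum.tsum_eq]
  -- Step 8: shrink so that E is close to 1
  obtain ⟨r5, hr5pos, hr5r3, hEnear⟩ : ∃ r5 : ℝ, 0 < r5 ∧ r5 ≤ r3 ∧
      ∀ y ∈ ball (0:ℂ) r5, ‖E y - 1‖ < 1/2 := by
    have hcont : ContinuousAt E 0 := (hEd' 0 (mem_ball_self hr3pos)).continuousAt
    obtain ⟨δ2, hδ2, hδ2'⟩ := Metric.continuousAt_iff.1 hcont (1/2) (by norm_num)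
    refine ⟨min δ2 r3, lt_min hδ2 hr3pos, min_le_right _ _, ?_⟩
    intro y hy
    rw [mem_ball] at hy
    have : dist y 0 < δ2 := hy.trans_le (min_le_left _ _)
    have := hδ2' this
    rwa [hE0, dist_eq_norm] at this
  have hslit : ∀ y ∈ ball (0:ℂ) r5, E y ∈ Complex.slitPlane := by
    intro y hy
    rw [Complex.mem_slitPlane_iff]
    left
    have h1 := hEnear y hy
    have h2 : |(E y - 1).re| ≤ ‖E y - 1‖ := Complex.abs_re_le_norm _
    simp only [Complex.sub_re, Complex.one_re] at h2
    have := abs_le.1 (h2.trans h1.le)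
    linarith [this.1]
  have hEne : ∀ y ∈ ball (0:ℂ) r5, E y ≠ 0 :=
    fun y hy => Complex.slitPlane_ne_zero (hslit y hy)
  -- Step 9: definition of ρ and its derivatives
  set φ : ℂ → ℂ := fun z => Complex.exp ((res + 1)⁻¹ * Complex.log (E z)) with hφ_def
  have hφne : ∀ y, φ y ≠ 0 := fun y => Complex.exp_ne_zero _
  set ρ : ℂ → ℂ := fun z => z * φ z with hρ_def
  set ρD : ℂ → ℂ := fun z => φ z * g z / E z with hρD_def
  have hball51 : ball (0:ℂ) r5 ⊆ ball 0 r1 := by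
    intro y hy
    rw [mem_ball] at hy ⊢
    have h5 : r5 ≤ r1 := le_trans hr5r3 (le_trans hr3t2.le ht2r1)
    linarith
  have hball53 : ball (0:ℂ) r5 ⊆ ball 0 r3 :=
    fun y hy => by rw [mem_ball] at hy ⊢; linarith
  have hφd : ∀ y ∈ ball (0:ℂ) r5,
      HasDerivAt φ (φ y * ((res + 1)⁻¹ * ((E y)⁻¹ * Ed y))) y := by
    intro y hy
    have hlog : HasDerivAt (fun w => Complex.log (E w)) ((E y)⁻¹ * Ed y) y :=
      (Complex.hasDerivAt_log (hslit y hy)).comp y (hEd' y (hball53 hy))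
    exact (hlog.const_mul ((res + 1)⁻¹)).cexp
  have hρd : ∀ y ∈ ball (0:ℂ) r5, HasDerivAt ρ (ρD y) y := by
    intro y hy
    have base : HasDerivAt ρ (1 * φ y + y * (φ y * ((res + 1)⁻¹ * ((E y)⁻¹ * Ed y)))) y :=
      (hasDerivAt_id y).mul (hφd y hy)
    convert base using 1
    have hode := hODE y (hball53 hy)
    field_simp [hρD_def, hEne y hy, hres1]
    linear_combination (-(φ y)) * hode + (φ y * g y * (res + 1)) * mul_inv_cancel₀ (hEne y hy)
  have hderivρ : ∀ y ∈ ball (0:ℂ) r5, deriv ρ y = ρD y := fun y hy => (hρd y hy).deriv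
  have hρDd : ∀ y ∈ ball (0:ℂ) r5,
      HasDerivAt ρD (ρD y * (h y - res * Ed y / ((res + 1) * E y))) y := by
    intro y hy
    have hnum : HasDerivAt (fun w => φ w * g w)
        ((φ y * ((res + 1)⁻¹ * ((E y)⁻¹ * Ed y))) * g y + φ y * (g y * h y)) y :=
      (hφd y hy).mul (hgd y (hball51 hy))
    have hq := hnum.div (hEd' y (hball53 hy)) (hEne y hy)
    convert hq using 1
    · rfl
    · rfl
    · rfl
    field_simp [hρD_def, hEne y hy, hres1]
    have hρE : ρD y * E y = φ y * g y := by
      show φ y * g y / E y * E y = _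
      exact div_mul_cancel₀ _ (hEne y hy)
    linear_combination (E y * h y * (1 + res) - res * Ed y) * hρE
  have hderiv2 : ∀ y ∈ ball (0:ℂ) r5,
      deriv (deriv ρ) y = ρD y * (h y - res * Ed y / ((res + 1) * E y)) := by
    intro y hy
    have hev : deriv ρ =ᶠ[nhds y] ρD :=
      eventually_of_mem (isOpen_ball.mem_nhds hy) hderivρ
    rw [hev.deriv_eq]
    exact (hρDd y hy).deriv
  -- values at 0
  have h05 : (0:ℂ) ∈ ball (0:ℂ) r5 := by simpa using hr5pos
  have hφ0 : φ 0 = 1 := by simp [hφ_def, hE0]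
  have hderivρ0 : deriv ρ 0 = 1 := by
    rw [hderivρ 0 h05]
    simp [hρD_def, hφ0, hg0, hE0]
  -- Step 10: injectivity near 0
  obtain ⟨r6, hr6pos, hinj⟩ : ∃ r6 : ℝ, 0 < r6 ∧ InjOn ρ (ball (0:ℂ) r6) := by
    have hdiff : DifferentiableOn ℂ ρ (ball 0 r5) :=
      fun y hy => (hρd y hy).differentiableAt.differentiableWithinAt
    have hA : AnalyticAt ℂ ρ 0 := hdiff.analyticAt (isOpen_ball.mem_nhds h05)
    obtain ⟨q, hq⟩ := hA
    have hq1 : (q 1 fun _ => 1) = 1 := by rw [← hq.deriv, hderivρ0]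
    have hs : HasStrictDerivAt ρ 1 0 := hq1 ▸ hq.hasStrictDerivAt
    have hF := hs.hasStrictFDerivAt_equiv one_ne_zero
    have hinjOn : InjOn ρ (HasStrictFDerivAt.toOpenPartialHomeomorph ρ hF).source := by
      have := (HasStrictFDerivAt.toOpenPartialHomeomorph ρ hF).injOn
      rwa [HasStrictFDerivAt.toOpenPartialHomeomorph_coe] at this
    have hopen := (HasStrictFDerivAt.toOpenPartialHomeomorph ρ hF).open_source
    have hmem := hF.mem_toOpenPartialHomeomorph_source
    obtain ⟨r6, hr6, hsub⟩ := Metric.isOpen_iff.1 hopen 0 hmem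
    exact ⟨r6, hr6, hinjOn.mono hsub⟩
  -- Conclusion
  refine ⟨min r5 r6, ⟨lt_min hr5pos hr6pos, ?_⟩, ρ, ?_, ?_, ?_, ?_, ?_⟩
  · calc min r5 r6 ≤ r5 := min_le_left _ _
      _ ≤ ε := by linarith [hr5r3, hr3t2, ht2r1, hr1t, htε]
  · intro y hy
    have hy5 : y ∈ ball (0:ℂ) r5 := by
      rw [mem_ball] at hy ⊢; exact hy.trans_le (min_le_left _ _)
    exact (hρd y hy5).differentiableAt.differentiableWithinAt
  · exact hinj.mono (ball_subset_ball (min_le_right _ _))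
  · simp [hρ_def]
  · rw [hderivρ0]; exact one_ne_zero
  · intro z hz hzne
    have hz5 : z ∈ ball (0:ℂ) r5 := by
      rw [mem_ball] at hz ⊢; exact hz.trans_le (min_le_left _ _)
    rw [hderivρ z hz5, hderiv2 z hz5]
    have hode := hODE z (hball53 hz5)
    have hEz := hEne z hz5
    have hφz := hφne z
    have hgz := hgne z
    have hρDz : ρD z ≠ 0 := by
      simp only [hρD_def]
      exact div_ne_zero (mul_ne_zero hφz hgz) hEz
    rw [mul_div_cancel_left₀ _ hρDz]
    simp only [hρD_def, hρ_def]
    field_simp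
    linear_combination res * hode
end

section
/- Asymptotics of straightening charts near an unbounded singularity, derivative form (Lemma uch, part 1, in the logarithmic coordinate): Let res ∈ ℂ with Re(res) < −1, let r > 0, and let h : B(0,r) → ℂ be holomorphic and bounded. Set H = {v ∈ ℂ : Re v < log r} and suppose φ̂ : H → ℂ is holomorphic with φ̂′(v) ≠ 0 for all v ∈ H and φ̂″(v)/φ̂′(v) = (1 + res) + e^v·h(e^v) for all v ∈ H. Then there exist a ∈ ℂ, a ≠ 0, and a holomorphic function r₁ : B(0,r) → ℂ with r₁(0) = 0 such that for all v ∈ H: φ̂′(v) = a·e^{(1+res)v}·(1 + r₁(e^v)). -/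
open Complex Metric Set

lemma exists_primitive_on_ball {r : ℝ} (hr : 0 < r) {h : ℂ → ℂ}
    (hh : DifferentiableOn ℂ h (ball 0 r)) :
    ∃ L : ℂ → ℂ, ∀ z ∈ ball (0 : ℂ) r, HasDerivAt L (h z) z := by
  set c : ℕ → ℂ := fun n => (n.factorial : ℂ)⁻¹ * iteratedDeriv n h 0 with hc
  refine ⟨fun z => ∑' n, c n / (n + 1) * z ^ (n + 1), ?_⟩
  intro z hz
  rw [mem_ball_zero_iff] at hz
  obtain ⟨ρ, hzρ, hρr⟩ := exists_between hz
  obtain ⟨ρ', hρρ', hρ'r⟩ := exists_between hρr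
  have hρ0 : 0 < ρ := lt_of_le_of_lt (norm_nonneg z) hzρ
  have hρ'0 : 0 < ρ' := hρ0.trans hρρ'
  have hmem : (ρ' : ℂ) ∈ ball (0 : ℂ) r := by
    simp only [mem_ball_zero_iff, Complex.norm_real, Real.norm_eq_abs, abs_of_pos hρ'0]
    exact hρ'r
  have hs : Summable fun n : ℕ => (n.factorial : ℂ)⁻¹ • ((ρ' : ℂ) - 0) ^ n • iteratedDeriv n h 0 :=
    (Complex.hasSum_taylorSeries_on_ball hh hmem).summable
  have hs' : Summable fun n : ℕ => c n * (ρ' : ℂ) ^ n := by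
    refine hs.congr fun n => ?_
    simp only [hc, smul_eq_mul, sub_zero]
    ring
  obtain ⟨C, hC⟩ : ∃ C : ℝ, ∀ n : ℕ, ‖c n * (ρ' : ℂ) ^ n‖ ≤ C := by
    have := hs'.tendsto_atTop_zero.norm.bddAbove_range
    obtain ⟨C, hC⟩ := this
    exact ⟨C, fun n => hC (Set.mem_range_self n)⟩
  have hC0 : 0 ≤ C := le_trans (norm_nonneg _) (hC 0)
  have hcn : ∀ n : ℕ, ‖c n‖ ≤ C / ρ' ^ n := by
    intro n
    rw [le_div_iff₀ (pow_pos hρ'0 n)]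
    have : ‖c n * (ρ' : ℂ) ^ n‖ = ‖c n‖ * ρ' ^ n := by
      conv_lhs => rw [norm_mul, norm_pow, Complex.norm_real, Real.norm_eq_abs,
        abs_of_pos hρ'0]
    rw [← this]
    exact hC n
  -- uniform bound on derivatives on ball 0 ρ
  set u : ℕ → ℝ := fun n => C * (ρ / ρ') ^ n with hu
  have husum : Summable u :=
    (summable_geometric_of_lt_one (by positivity)
      (by rw [div_lt_one hρ'0]; exact hρρ')).mul_left C
  have key : HasDerivAt (fun z => ∑' n, c n / (n + 1) * z ^ (n + 1))
      (∑' n, c n * z ^ n) z := by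
    refine hasDerivAt_tsum_of_isPreconnected husum (isOpen_ball (x := (0:ℂ)) (ε := ρ))
      (convex_ball (0:ℂ) ρ).isPreconnected (g' := fun n y => c n * y ^ n)
      (y₀ := (0 : ℂ)) ?_ ?_ ?_ ?_ ?_
    · intro n y _
      have h1 : HasDerivAt (fun w : ℂ => w ^ (n + 1)) ((n + 1 : ℂ) * y ^ n) y := by
        simpa using hasDerivAt_pow (n + 1) y
      have h2 := h1.const_mul (c n / (n + 1))
      have hn : (n : ℂ) + 1 ≠ 0 := Nat.cast_add_one_ne_zero n
      refine h2.congr_deriv ?_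
      rw [← mul_assoc, div_mul_cancel₀ _ hn]
    · intro n y hy
      rw [mem_ball_zero_iff] at hy
      rw [norm_mul, norm_pow, hu]
      calc ‖c n‖ * ‖y‖ ^ n ≤ (C / ρ' ^ n) * ρ ^ n := by
            apply mul_le_mul (hcn n) (pow_le_pow_left₀ (norm_nonneg y) hy.le n)
              (by positivity)
            exact div_nonneg hC0 (by positivity)
        _ = C * (ρ / ρ') ^ n := by
            rw [div_pow]; field_simp
    · exact mem_ball_zero_iff.mpr (by simpa using hρ0)
    · refine summable_zero.congr fun n => ?_
      simp
    · exact mem_ball_zero_iff.mpr hzρ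
  have hzr : z ∈ ball (0 : ℂ) r := mem_ball_zero_iff.mpr hz
  have := Complex.taylorSeries_eq_on_ball' hzr hh
  rw [show (∑' n, c n * z ^ n) = h z from by rw [← this]; congr 1; funext n; simp [hc]]
    at key
  exact key

/-- Asymptotics (derivative form) of a straightening chart near an unbounded singularity,
in the logarithmic coordinate: if `φ̂″/φ̂′ = (1 + res) + eᵛ h(eᵛ)` on the half plane
`Re v < log r` with `Re res < -1`, then `φ̂′(v) = a e^{(1+res)v} (1 + r₁(eᵛ))` with
`r₁` holomorphic on `B(0,r)` and `r₁ 0 = 0`. -/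
theorem straightening_chart_deriv_asymptotics
    (res : ℂ) (hres : res.re < -1) (r : ℝ) (hr : 0 < r)
    (h : ℂ → ℂ) (hh : DifferentiableOn ℂ h (ball 0 r))
    (hbdd : ∃ M : ℝ, ∀ z ∈ ball (0 : ℂ) r, ‖h z‖ ≤ M)
    (φ : ℂ → ℂ)
    (hφ : DifferentiableOn ℂ φ {v : ℂ | v.re < Real.log r})
    (hφ' : ∀ v : ℂ, v.re < Real.log r → deriv φ v ≠ 0)
    (heq : ∀ v : ℂ, v.re < Real.log r →
      deriv (deriv φ) v / deriv φ v = (1 + res) + Complex.exp v * h (Complex.exp v)) :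
    ∃ a : ℂ, a ≠ 0 ∧ ∃ r₁ : ℂ → ℂ,
      DifferentiableOn ℂ r₁ (ball 0 r) ∧ r₁ 0 = 0 ∧
      ∀ v : ℂ, v.re < Real.log r →
        deriv φ v = a * Complex.exp ((1 + res) * v) * (1 + r₁ (Complex.exp v)) := by
  obtain ⟨L, hL⟩ := exists_primitive_on_ball hr hh
  set H : Set ℂ := {v : ℂ | v.re < Real.log r} with hH
  have hHopen : IsOpen H := isOpen_lt Complex.continuous_re continuous_const
  have hHconv : Convex ℝ H := convex_halfSpace_re_lt (Real.log r)
  -- deriv φ is holomorphic on H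
  have hφan : AnalyticOnNhd ℂ φ H := hφ.analyticOnNhd hHopen
  have hderiv_an : AnalyticOnNhd ℂ (deriv φ) H := hφan.deriv
  have hmemball : ∀ v : ℂ, v ∈ H → Complex.exp v ∈ ball (0 : ℂ) r := by
    intro v hv
    rw [mem_ball_zero_iff, Complex.norm_exp]
    calc Real.exp v.re < Real.exp (Real.log r) := Real.exp_lt_exp.mpr hv
      _ = r := Real.exp_log hr
  set F : ℂ → ℂ := fun v => deriv φ v *
    Complex.exp (-((1 + res) * v) - L (Complex.exp v)) with hF
  have hF' : ∀ v ∈ H, HasDerivAt F 0 v := by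
    intro v hv
    have h1 : HasDerivAt (deriv φ) (deriv (deriv φ) v) v :=
      ((hderiv_an v hv).differentiableAt).hasDerivAt
    have h2 : HasDerivAt (fun w => L (Complex.exp w))
        (h (Complex.exp v) * Complex.exp v) v :=
      (hL _ (hmemball v hv)).comp v (Complex.hasDerivAt_exp v)
    have h3 : HasDerivAt (fun w => -((1 + res) * w) - L (Complex.exp w))
        (-(1 + res) - h (Complex.exp v) * Complex.exp v) v := by
      have := (((hasDerivAt_id v).const_mul ((1 : ℂ) + res)).neg).sub h2
      exact this.congr_deriv (by ring)
    have h4 := h3.cexp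
    have h5 := h1.mul h4
    have heq' : deriv (deriv φ) v =
        ((1 + res) + Complex.exp v * h (Complex.exp v)) * deriv φ v :=
      (div_eq_iff (hφ' v hv)).mp (heq v hv)
    refine h5.congr_deriv ?_
    rw [heq']
    ring
  -- F is constant on H
  have hFdiff : DifferentiableOn ℂ F H :=
    fun v hv => ((hF' v hv).differentiableAt).differentiableWithinAt
  have hFzero : ∀ v ∈ H, fderivWithin ℂ F H v = 0 := by
    intro v hv
    rw [fderivWithin_of_isOpen hHopen hv]
    have := (hF' v hv).hasFDerivAt.fderiv
    rw [this]
    ext1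
    simp
  set v₀ : ℂ := ((Real.log r - 1 : ℝ) : ℂ) with hv₀def
  have hv₀ : v₀ ∈ H := by
    simp only [hH, mem_setOf_eq, hv₀def, Complex.ofReal_re]
    linarith
  set cst : ℂ := F v₀ with hcst
  have hconst : ∀ v ∈ H, F v = cst := fun v hv =>
    hHconv.is_const_of_fderivWithin_eq_zero hFdiff hFzero hv hv₀
  have hcst0 : cst ≠ 0 :=
    mul_ne_zero (hφ' v₀ hv₀) (Complex.exp_ne_zero _)
  refine ⟨cst * Complex.exp (L 0), mul_ne_zero hcst0 (Complex.exp_ne_zero _),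
    fun z => Complex.exp (L z - L 0) - 1, ?_, by simp, ?_⟩
  · have hLdiff : DifferentiableOn ℂ L (ball 0 r) :=
      fun z hz => ((hL z hz).differentiableAt).differentiableWithinAt
    exact ((hLdiff.sub_const (L 0)).cexp).sub_const 1
  · intro v hv
    have hFv : deriv φ v * Complex.exp (-((1 + res) * v) - L (Complex.exp v)) = cst :=
      hconst v hv
    have key : deriv φ v = cst * Complex.exp ((1 + res) * v + L (Complex.exp v)) := by
      rw [← hFv, mul_assoc, ← Complex.exp_add]
      rw [show -((1 + res) * v) - L (Complex.exp v) + ((1 + res) * v + L (Complex.exp v))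
        = 0 from by ring, Complex.exp_zero, mul_one]
    rw [key, show (1 : ℂ) + (Complex.exp (L (Complex.exp v) - L 0) - 1)
      = Complex.exp (L (Complex.exp v) - L 0) from by ring]
    rw [show cst * Complex.exp (L 0) * Complex.exp ((1 + res) * v) *
        Complex.exp (L (Complex.exp v) - L 0)
      = cst * Complex.exp (L 0 + ((1 + res) * v + (L (Complex.exp v) - L 0))) from by
        rw [Complex.exp_add, Complex.exp_add]; ring]
    congr 1
    ring
end

section
/- Asymptotics of straightening charts near an unbounded singularity, integrated form (Lemma uch, part 2, in the logarithmic coordinate): Let res ∈ ℂ with Re(res) < −1, let r > 0, and let h : B(0,r) → ℂ be holomorphic and bounded. Set H = {v ∈ ℂ : Re v < log r} and suppose φ̂ : H → ℂ is holomorphic with φ̂′(v) ≠ 0 for all v ∈ H and φ̂″(v)/φ̂′(v) = (1 + res) + e^v·h(e^v) for all v ∈ H. Then there exists b ∈ ℂ, b ≠ 0, such that for all real α₀ < α₁ and all r′ ∈ (0,r) there exist constants C, C′ ≥ 0 with: for every v ∈ ℂ satisfying Re v ≤ log r′ and α₀ < Im((1+res)v) < α₁, one has |φ̂(v) − b·e^{(1+res)v}|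 ≤ max(1, e^{Re((2+res)v)})·(C′ + C·max(0, Re((1+res)v))). In particular φ̂(v)/(b·e^{(1+res)v}) → 1 as Re((1+res)v) → +∞ with v subject to these constraints. -/
open Complex Metric Set

/-- FTC estimate along a segment. -/
lemma seg_est (f f' : ℂ → ℂ) (u v : ℂ) (C : ℝ)
    (hd : ∀ w ∈ segment ℝ u v, HasDerivAt f (f' w) w)
    (hc : ContinuousOn f' (segment ℝ u v))
    (hC : ∀ w ∈ segment ℝ u v, ‖f' w‖ ≤ C) :
    ‖f v - f u‖ ≤ C * ‖v - u‖ := by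
  set γ : ℝ → ℂ := fun t => u + t • (v - u) with hγdef
  have hmem : ∀ t ∈ Set.Icc (0:ℝ) 1, γ t ∈ segment ℝ u v := by
    intro t ht
    rw [segment_eq_image']
    exact ⟨t, ht, rfl⟩
  have hγd : ∀ t : ℝ, HasDerivAt γ (v - u) t := by
    intro t
    exact (((hasDerivAt_id t).smul_const (v - u)).const_add u).congr_deriv (by simp)
  have hγc : Continuous γ := by
    apply continuous_const.add (continuous_id.smul continuous_const)
  have key : ∀ t ∈ Set.uIcc (0:ℝ) 1,
      HasDerivAt (fun t : ℝ => f (γ t)) ((v - u) * f' (γ t)) t := by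
    intro t ht
    rw [Set.uIcc_of_le zero_le_one] at ht
    have h1 := ((hd _ (hmem t ht)).hasFDerivAt.restrictScalars ℝ).comp_hasDerivAt t (hγd t)
    simpa [mul_comm, Function.comp_def] using h1
  have hcont : ContinuousOn (fun t : ℝ => (v - u) * f' (γ t)) (Set.uIcc (0:ℝ) 1) := by
    apply ContinuousOn.mul continuousOn_const
    apply hc.comp hγc.continuousOn
    intro t ht
    rw [Set.uIcc_of_le zero_le_one] at ht
    exact hmem t ht
  have heqi := intervalIntegral.integral_eq_sub_of_hasDerivAt key hcont.intervalIntegrable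
  have h1 : γ 1 = v := by simp [hγdef]
  have h0 : γ 0 = u := by simp [hγdef]
  have hb : ‖∫ t in (0:ℝ)..1, (v - u) * f' (γ t)‖ ≤ (‖v - u‖ * C) * |1 - 0| := by
    apply intervalIntegral.norm_integral_le_of_norm_le_const
    intro t ht
    rw [Set.uIoc_of_le zero_le_one] at ht
    have h2 := hC _ (hmem t ⟨le_of_lt ht.1, ht.2⟩)
    rw [norm_mul]
    exact mul_le_mul_of_nonneg_left h2 (norm_nonneg _)
  rw [heqi, h1, h0] at hb
  calc ‖f v - f u‖ ≤ (‖v - u‖ * C) * |1 - 0| := hb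
    _ = C * ‖v - u‖ := by simp [mul_comm]

/-- `‖exp z - 1‖ ≤ ‖z‖ * exp ‖z‖`. -/
lemma norm_exp_sub_one_le' (z : ℂ) : ‖Complex.exp z - 1‖ ≤ ‖z‖ * Real.exp ‖z‖ := by
  have := seg_est Complex.exp Complex.exp 0 z (Real.exp ‖z‖)
    (fun w _ => Complex.hasDerivAt_exp w) Complex.continuous_exp.continuousOn ?_
  · simpa [mul_comm] using this
  · intro w hw
    rw [segment_eq_image'] at hw
    obtain ⟨t, ht, rfl⟩ := hw
    rw [Complex.norm_exp]
    apply Real.exp_le_exp.mpr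
    have h1 : ‖(0:ℂ) + t • (z - 0)‖ ≤ ‖z‖ := by
      simp only [zero_add, sub_zero, norm_smul, Real.norm_eq_abs]
      calc |t| * ‖z‖ ≤ 1 * ‖z‖ := by
            apply mul_le_mul_of_nonneg_right _ (norm_nonneg _)
            rw [abs_le]; exact ⟨by linarith [ht.1], ht.2⟩
        _ = ‖z‖ := one_mul _
    calc ((0:ℂ) + t • (z - 0)).re ≤ |((0:ℂ) + t • (z - 0)).re| := le_abs_self _
      _ ≤ ‖(0:ℂ) + t • (z - 0)‖ := Complex.abs_re_le_norm _
      _ ≤ ‖z‖ := h1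

lemma exists_primitive (r : ℝ) (hr : 0 < r) (h : ℂ → ℂ)
    (hh : DifferentiableOn ℂ h (ball 0 r)) :
    ∃ G : ℂ → ℂ,
      (∀ v : ℂ, v.re < Real.log r → HasDerivAt G (Complex.exp v * h (Complex.exp v)) v) ∧
      (∀ r' : ℝ, 0 < r' → r' < r → ∃ K : ℝ, 0 ≤ K ∧
        ∀ v : ℂ, Real.exp v.re ≤ r' → ‖G v‖ ≤ K * Real.exp v.re) := by
  -- a power series for h valid on every smaller ball
  obtain ⟨p, hpb⟩ : ∃ p : FormalMultilinearSeries ℂ ℂ ℂ, ∀ ρ : ℝ, 0 < ρ → ρ < r →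
      HasFPowerSeriesOnBall h p 0 ρ.toNNReal := by
    have base : ∀ ρ' : ℝ, 0 < ρ' → ρ' < r →
        HasFPowerSeriesOnBall h (cauchyPowerSeries h 0 ρ'.toNNReal) 0 ρ'.toNNReal := by
      intro ρ' h1 h2
      apply DifferentiableOn.hasFPowerSeriesOnBall
      · apply hh.mono
        have : (ρ'.toNNReal : ℝ) = ρ' := Real.coe_toNNReal ρ' h1.le
        rw [this]
        exact closedBall_subset_ball h2
      · exact Real.toNNReal_pos.mpr h1
    refine ⟨cauchyPowerSeries h 0 (r/2).toNNReal, fun ρ hρ hρr => ?_⟩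
    have e : cauchyPowerSeries h 0 (r/2).toNNReal = cauchyPowerSeries h 0 ρ.toNNReal :=
      (base _ (half_pos hr) (half_lt_self hr)).hasFPowerSeriesAt.eq_formalMultilinearSeries
        (base ρ hρ hρr).hasFPowerSeriesAt
    rw [e]; exact base ρ hρ hρr
  set a : ℕ → ℂ := fun n => p.coeff n with ha
  have hcoeff : ∀ n, ‖a n‖ ≤ ‖p n‖ := by
    intro n
    exact le_of_eq (FormalMultilinearSeries.norm_apply_eq_norm_coef).symm
  have hsummable : ∀ ρ : ℝ, 0 ≤ ρ → ρ < r → Summable (fun n => ‖p n‖ * ρ ^ n) := by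
    intro ρ h0 hρ
    have h1 : 0 < (ρ + r)/2 := by linarith
    have h2 : (ρ + r)/2 < r := by linarith
    have h3 := (hpb _ h1 h2).r_le
    have h4 : (↑ρ.toNNReal : ENNReal) < p.radius := by
      refine lt_of_lt_of_le ?_ h3
      rw [ENNReal.coe_lt_coe]
      exact (Real.toNNReal_lt_toNNReal_iff h1).mpr (by linarith)
    have := p.summable_norm_mul_pow h4
    simpa [Real.coe_toNNReal ρ h0] using this
  have hsum : ∀ v : ℂ, Real.exp v.re < r →
      HasSum (fun n => a n * Complex.exp v ^ (n+1))
        (Complex.exp v * h (Complex.exp v)) := by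
    intro v hv
    have h1 : (0:ℝ) < Real.exp v.re := Real.exp_pos _
    set ρ := (Real.exp v.re + r)/2 with hρ
    have hρ1 : Real.exp v.re < ρ := by rw [hρ]; linarith
    have hρ2 : ρ < r := by rw [hρ]; linarith
    have hb := hpb ρ (by linarith) hρ2
    have hmem : Complex.exp v ∈ Metric.eball (0:ℂ) ρ.toNNReal := by
      rw [Metric.mem_eball, edist_dist, dist_zero_right, Complex.norm_exp]
      exact (ENNReal.ofReal_lt_ofReal_iff (by linarith)).mpr hρ1
    have h2 := hb.hasSum hmem
    rw [zero_add] at h2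
    have h3 := h2.mul_left (Complex.exp v)
    have e : (fun n => a n * Complex.exp v ^ (n+1))
        = fun i => Complex.exp v * (p i) fun _ => Complex.exp v := by
      funext n
      rw [FormalMultilinearSeries.apply_eq_pow_smul_coeff]
      simp [ha, smul_eq_mul]
      ring
    rw [e]; exact h3
  refine ⟨fun v => ∑' n : ℕ, a n / (n+1) * Complex.exp v ^ (n+1), ?_, ?_⟩
  · -- derivative
    intro v hv
    have hev : Real.exp v.re < r := by
      rw [← Real.exp_log hr]
      exact Real.exp_lt_exp.mpr hv
    have h1 : (0:ℝ) < Real.exp v.re := Real.exp_pos _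
    set ρ := (Real.exp v.re + r)/2 with hρ
    have hρpos : (0:ℝ) < ρ := by rw [hρ]; linarith
    have hρ1 : Real.exp v.re < ρ := by rw [hρ]; linarith
    have hρ2 : ρ < r := by rw [hρ]; linarith
    set t : Set ℂ := {w : ℂ | w.re < Real.log ρ} with ht
    have hvt : v ∈ t := by
      rw [ht, Set.mem_setOf_eq]
      exact (Real.lt_log_iff_exp_lt hρpos).mpr hρ1
    have hexpt : ∀ w : ℂ, w ∈ t → Real.exp w.re ≤ ρ := by
      intro w hw
      rw [ht, Set.mem_setOf_eq] at hw
      exact le_of_lt ((Real.lt_log_iff_exp_lt hρpos).mp hw)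
    have hto : IsOpen t := isOpen_lt Complex.continuous_re continuous_const
    have htc : IsPreconnected t := (convex_halfSpace_re_lt (Real.log ρ)).isPreconnected
    have hterm : ∀ (n : ℕ) (w : ℂ),
        HasDerivAt (fun z => a n / (n+1) * Complex.exp z ^ (n+1))
          (a n * Complex.exp w ^ (n+1)) w := by
      intro n w
      have h1 : HasDerivAt (fun z : ℂ => Complex.exp z ^ (n+1))
          (((n:ℂ)+1) * Complex.exp w ^ n * Complex.exp w) w := by
        have := (Complex.hasDerivAt_exp w).fun_pow (n+1)
        simpa using this
      have h2 := h1.const_mul (a n / ((n:ℂ)+1))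
      refine h2.congr_deriv ?_
      have hne : ((n:ℂ)+1) ≠ 0 := by
        exact Nat.cast_add_one_ne_zero n
      field_simp
      ring
    have hub : ∀ (n : ℕ) (w : ℂ), w ∈ t →
        ‖a n * Complex.exp w ^ (n+1)‖ ≤ ‖p n‖ * ρ ^ n * ρ := by
      intro n w hw
      rw [norm_mul, norm_pow, Complex.norm_exp]
      calc ‖a n‖ * Real.exp w.re ^ (n+1)
          ≤ ‖p n‖ * ρ ^ (n+1) :=
            mul_le_mul (hcoeff n) (pow_le_pow_left₀ (Real.exp_pos _).le (hexpt w hw) _)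
              (by positivity) (norm_nonneg _)
        _ = ‖p n‖ * ρ ^ n * ρ := by ring
    have hsmρ : Summable (fun n => ‖p n‖ * ρ ^ n * ρ) :=
      (hsummable ρ hρpos.le hρ2).mul_right ρ
    have hG0 : Summable (fun n => a n / ((n:ℂ)+1) * Complex.exp v ^ (n+1)) := by
      apply Summable.of_norm_bounded hsmρ
      intro n
      rw [norm_mul, norm_div, norm_pow, Complex.norm_exp]
      have hd1 : (1:ℝ) ≤ ‖((n:ℂ)+1)‖ := by
        have : ((n:ℂ)+1) = ((n+1 : ℕ) : ℂ) := by push_cast; ring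
        rw [this, Complex.norm_natCast]
        exact_mod_cast Nat.succ_le_succ (Nat.zero_le n)
      calc ‖a n‖ / ‖((n:ℂ)+1)‖ * Real.exp v.re ^ (n+1)
          ≤ ‖a n‖ * Real.exp v.re ^ (n+1) := by
            apply mul_le_mul_of_nonneg_right _ (by positivity)
            exact div_le_self (norm_nonneg _) hd1
        _ ≤ ‖p n‖ * ρ ^ (n+1) :=
            mul_le_mul (hcoeff n) (pow_le_pow_left₀ (Real.exp_pos _).le hρ1.le _)
              (by positivity) (norm_nonneg _)
        _ = ‖p n‖ * ρ ^ n * ρ := by ring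
    have hmain := hasDerivAt_tsum_of_isPreconnected hsmρ hto htc
      (fun n w _ => hterm n w) hub hvt hG0 hvt
    rwa [(hsum v hev).tsum_eq] at hmain
  · -- bound
    intro r' h0 hρr
    refine ⟨∑' n, ‖p n‖ * r' ^ n, tsum_nonneg (fun n => by positivity), fun v hv => ?_⟩
    have hsm := hsummable r' h0.le hρr
    apply tsum_of_norm_bounded (hsm.hasSum.mul_right (Real.exp v.re))
    intro n
    rw [norm_mul, norm_div, norm_pow, Complex.norm_exp]
    have hd1 : (1:ℝ) ≤ ‖((n:ℂ)+1)‖ := by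
      have : ((n:ℂ)+1) = ((n+1 : ℕ) : ℂ) := by push_cast; ring
      rw [this, Complex.norm_natCast]
      exact_mod_cast Nat.succ_le_succ (Nat.zero_le n)
    calc ‖a n‖ / ‖((n:ℂ)+1)‖ * Real.exp v.re ^ (n+1)
        ≤ ‖a n‖ * Real.exp v.re ^ (n+1) := by
          apply mul_le_mul_of_nonneg_right _ (by positivity)
          exact div_le_self (norm_nonneg _) hd1
      _ = ‖a n‖ * Real.exp v.re ^ n * Real.exp v.re := by ring
      _ ≤ ‖p n‖ * r' ^ n * Real.exp v.re := by
          apply mul_le_mul_of_nonneg_right _ (Real.exp_pos _).le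
          exact mul_le_mul (hcoeff n) (pow_le_pow_left₀ (Real.exp_pos _).le hv _)
            (by positivity) (norm_nonneg _)

set_option maxHeartbeats 1600000 in
/-- Asymptotics (integrated form) of a straightening chart near an unbounded singularity,
in the logarithmic coordinate: if `φ̂″/φ̂′ = (1 + res) + eᵛ h(eᵛ)` on the half plane
`Re v < log r` with `Re res < -1`, then there is `b ≠ 0` such that, on every region
`Re v ≤ log r'`, `α₀ < Im((1+res)v) < α₁`, one has
`|φ̂(v) − b e^{(1+res)v}| ≤ max(1, e^{Re((2+res)v)})·(C′ + C·max(0, Re((1+res)v)))`. -/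
theorem straightening_chart_asymptotics
    (res : ℂ) (hres : res.re < -1) (r : ℝ) (hr : 0 < r)
    (h : ℂ → ℂ) (hh : DifferentiableOn ℂ h (ball 0 r))
    (hbdd : ∃ M : ℝ, ∀ z ∈ ball (0 : ℂ) r, ‖h z‖ ≤ M)
    (φ : ℂ → ℂ)
    (hφ : DifferentiableOn ℂ φ {v : ℂ | v.re < Real.log r})
    (hφ' : ∀ v : ℂ, v.re < Real.log r → deriv φ v ≠ 0)
    (heq : ∀ v : ℂ, v.re < Real.log r →
      deriv (deriv φ) v / deriv φ v = (1 + res) + Complex.exp v * h (Complex.exp v)) :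
    ∃ b : ℂ, b ≠ 0 ∧
      ∀ α₀ α₁ : ℝ, α₀ < α₁ → ∀ r' : ℝ, 0 < r' → r' < r →
        ∃ C C' : ℝ, 0 ≤ C ∧ 0 ≤ C' ∧
          ∀ v : ℂ, v.re ≤ Real.log r' →
            α₀ < ((1 + res) * v).im → ((1 + res) * v).im < α₁ →
            ‖φ v - b * Complex.exp ((1 + res) * v)‖ ≤
              max 1 (Real.exp (((2 + res) * v).re)) *
                (C' + C * max 0 (((1 + res) * v).re)) := by
  have h1res : (1 + res).re < 0 := by
    rw [Complex.add_re, Complex.one_re]; linarith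
  have hs1ne : (1 + res) ≠ 0 := by
    intro h0
    rw [h0, Complex.zero_re] at h1res; linarith
  set L : ℝ := Real.log r with hLdef
  set H : Set ℂ := {v : ℂ | v.re < L} with hHdef
  have hHo : IsOpen H := isOpen_lt Complex.continuous_re continuous_const
  have hHcvx : Convex ℝ H := convex_halfSpace_re_lt L
  obtain ⟨G, hGd, hGb⟩ := exists_primitive r hr h hh
  set ψ : ℂ → ℂ := deriv φ with hψdef
  have hφd : ∀ v ∈ H, HasDerivAt φ (ψ v) v := fun v hv =>
    (hφ.differentiableAt (hHo.mem_nhds hv)).hasDerivAt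
  have hψan : AnalyticOnNhd ℂ ψ H := (hφ.analyticOnNhd hHo).deriv
  have hψd : ∀ v ∈ H, HasDerivAt ψ
      (((1+res) + Complex.exp v * h (Complex.exp v)) * ψ v) v := by
    intro v hv
    have hd := ((hψan v hv).differentiableAt).hasDerivAt
    have hne : ψ v ≠ 0 := hφ' v hv
    have he := heq v hv
    rw [div_eq_iff hne] at he
    rwa [show deriv ψ v = deriv (deriv φ) v from rfl, he] at hd
  set v₀ : ℂ := ((L - 1 : ℝ) : ℂ) with hv₀def
  have hv₀H : v₀ ∈ H := by
    show v₀.re < L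
    rw [hv₀def, Complex.ofReal_re]; linarith
  set F : ℂ → ℂ := fun w => ψ w * Complex.exp (-((1+res) * w) - G w) with hFdef
  have hFd : ∀ v ∈ H, HasDerivAt F 0 v := by
    intro v hv
    have hvr : v.re < L := hv
    have ha1 : HasDerivAt (fun w : ℂ => (1+res) * w) (1+res) v := by
      simpa using (hasDerivAt_id v).const_mul (1+res)
    have h1 : HasDerivAt (fun w : ℂ => -((1+res) * w) - G w)
        (-(1+res) - Complex.exp v * h (Complex.exp v)) v :=
      ha1.neg.sub (hGd v hvr)
    have h2 : HasDerivAt (fun w : ℂ => Complex.exp (-((1+res) * w) - G w))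
        (Complex.exp (-((1+res) * v) - G v)
          * (-(1+res) - Complex.exp v * h (Complex.exp v))) v :=
      (Complex.hasDerivAt_exp (-((1+res) * v) - G v)).comp v h1
    have h3 := (hψd v hv).mul h2
    refine h3.congr_deriv ?_
    ring
  set c : ℂ := F v₀ with hcdef
  have hcne : c ≠ 0 := mul_ne_zero (hφ' v₀ hv₀H) (Complex.exp_ne_zero _)
  have hψeq : ∀ v ∈ H, ψ v = c * Complex.exp ((1+res) * v + G v) := by
    intro v hv
    have hseg : segment ℝ v₀ v ⊆ H := hHcvx.segment_subset hv₀H hv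
    have hest := seg_est F (fun _ => 0) v₀ v 0 (fun w hw => hFd w (hseg hw))
      continuousOn_const (fun w _ => by simp)
    have hFv : F v = F v₀ := by
      rw [← sub_eq_zero]
      have hz : ‖F v - F v₀‖ ≤ 0 := by simpa using hest
      exact norm_le_zero_iff.mp hz
    have hkey : ψ v * Complex.exp (-((1+res) * v) - G v) = c := hFv
    calc ψ v = ψ v * Complex.exp (-((1+res) * v) - G v)
          * Complex.exp ((1+res) * v + G v) := by
          rw [mul_assoc, ← Complex.exp_add,
            show (-((1+res) * v) - G v) + ((1+res) * v + G v) = 0 by ring,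
            Complex.exp_zero, mul_one]
      _ = c * Complex.exp ((1+res) * v + G v) := by rw [hkey]
  refine ⟨c / (1+res), div_ne_zero hcne hs1ne, ?_⟩
  intro α₀ α₁ hα r' hr'0 hr'r
  set b : ℂ := c / (1+res) with hbdef
  have hbs : b * (1+res) = c := div_mul_cancel₀ c hs1ne
  set L' : ℝ := Real.log r' with hL'def
  have hL'L : L' < L := Real.log_lt_log hr'0 hr'r
  obtain ⟨K, hK0, hKG⟩ := hGb r' hr'0 hr'r
  set u₀ : ℂ := (L' : ℂ) with hu₀def
  set H' : Set ℂ := {w : ℂ | w.re ≤ L'} with hH'def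
  have hH'H : H' ⊆ H := fun w hw => lt_of_le_of_lt hw hL'L
  have hH'cvx : Convex ℝ H' := convex_halfSpace_re_le L'
  have hu₀H' : u₀ ∈ H' := by
    show u₀.re ≤ L'
    rw [hu₀def, Complex.ofReal_re]
  set Φ : ℂ → ℂ := fun w => φ w - b * Complex.exp ((1+res) * w) with hΦdef
  set Φ' : ℂ → ℂ := fun w =>
    c * Complex.exp ((1+res) * w) * (Complex.exp (G w) - 1) with hΦ'def
  have hΦd : ∀ w ∈ H, HasDerivAt Φ (Φ' w) w := by
    intro w hw
    have ha1 : HasDerivAt (fun z : ℂ => (1+res) * z) (1+res) w := by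
      simpa using (hasDerivAt_id w).const_mul (1+res)
    have h1 : HasDerivAt (fun z : ℂ => Complex.exp ((1+res) * z))
        (Complex.exp ((1+res) * w) * (1+res)) w :=
      (Complex.hasDerivAt_exp ((1+res) * w)).comp w ha1
    have h3 := (hφd w hw).sub (h1.const_mul b)
    have h4 : ψ w - b * (Complex.exp ((1+res) * w) * (1+res)) = Φ' w := by
      rw [hψeq w hw, hΦ'def, Complex.exp_add, ← hbs]
      ring
    rwa [h4] at h3
  have hΦ'cont : ∀ w ∈ H, ContinuousAt Φ' w := by
    intro w hw
    have hGc : ContinuousAt G w := (hGd w hw).continuousAt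
    have hc1 : ContinuousAt (fun z : ℂ => c * Complex.exp ((1+res) * z)) w := by
      apply ContinuousAt.mul continuousAt_const
      exact (Complex.continuous_exp.continuousAt).comp
        ((continuous_const.mul continuous_id).continuousAt)
    have hc2 : ContinuousAt (fun z : ℂ => Complex.exp (G z) - 1) w :=
      ((Complex.continuous_exp.continuousAt).comp hGc).sub continuousAt_const
    exact hc1.mul hc2
  -- constants
  set A₀ : ℝ := ((2+res) * u₀).re with hA₀def
  set K₄ : ℝ := ‖c‖ * K * Real.exp (K * r') * max (Real.exp A₀) 1 with hK₄def
  have hK₄0 : 0 ≤ K₄ := by positivity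
  set B : ℝ := max |α₀| |α₁| with hBdef
  have hB0 : 0 ≤ B := le_trans (abs_nonneg _) (le_max_left _ _)
  set e1 : ℝ := (1+res).re with he1def
  set e2 : ℝ := (1+res).im with he2def
  have he1neg : e1 < 0 := h1res
  set n2 : ℝ := e1^2 + e2^2 with hn2def
  have hn2 : 0 < n2 := by nlinarith [sq_nonneg e2, sq_nonneg e1, mul_pos (neg_pos.mpr he1neg) (neg_pos.mpr he1neg)]
  set K₃ : ℝ := (n2 * |L'| + |e2| * B) / (-e1) with hK₃def
  have hK₃0 : 0 ≤ K₃ := by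
    apply div_nonneg _ (by linarith)
    have : 0 ≤ n2 * |L'| := mul_nonneg hn2.le (abs_nonneg _)
    have : 0 ≤ |e2| * B := mul_nonneg (abs_nonneg _) hB0
    linarith
  set Ka : ℝ := ‖u₀‖ + ((|e1| + |e2|) * (K₃ + B)) / n2 with hKadef
  set Kb : ℝ := (|e1| + |e2|) / n2 with hKbdef
  have hKb0 : 0 ≤ Kb :=
    div_nonneg (add_nonneg (abs_nonneg _) (abs_nonneg _)) hn2.le
  have hKa0 : 0 ≤ Ka :=
    add_nonneg (norm_nonneg _)
      (div_nonneg (mul_nonneg (add_nonneg (abs_nonneg _) (abs_nonneg _))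
        (add_nonneg hK₃0 hB0)) hn2.le)
  have hKa_eq : n2 * Ka = n2 * ‖u₀‖ + (|e1| + |e2|) * (K₃ + B) := by
    rw [hKadef, mul_add, mul_div_cancel₀ _ hn2.ne']
  have hKb_eq : n2 * Kb = |e1| + |e2| := by
    rw [hKbdef, mul_div_cancel₀ _ hn2.ne']
  refine ⟨K₄ * Kb, ‖Φ u₀‖ + K₄ * Ka, mul_nonneg hK₄0 hKb0,
    add_nonneg (norm_nonneg _) (mul_nonneg hK₄0 hKa0), ?_⟩
  intro v hv1 hv2 hv3
  set μ : ℝ := ((1+res) * v).re with hμdef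
  set β : ℝ := ((1+res) * v).im with hβdef
  set E : ℝ := Real.exp (((2+res) * v).re) with hEdef
  have hvH' : v ∈ H' := hv1
  have hvH : v ∈ H := hH'H hvH'
  have hseg : segment ℝ u₀ v ⊆ H' := hH'cvx.segment_subset hu₀H' hvH'
  -- pointwise bound on the segment
  have hCseg : ∀ w ∈ segment ℝ u₀ v,
      ‖Φ' w‖ ≤ (‖c‖ * K * Real.exp (K * r')) * max (Real.exp A₀) E := by
    intro w hw
    have hwH' : w ∈ H' := hseg hw
    have hwre : Real.exp w.re ≤ r' := by
      rw [← Real.exp_log hr'0]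
      exact Real.exp_le_exp.mpr hwH'
    have hGw : ‖G w‖ ≤ K * Real.exp w.re := hKG w hwre
    have hGw' : ‖G w‖ ≤ K * r' :=
      le_trans hGw (mul_le_mul_of_nonneg_left hwre hK0)
    have h1 : ‖Complex.exp (G w) - 1‖ ≤ (K * Real.exp w.re) * Real.exp (K * r') := by
      refine le_trans (norm_exp_sub_one_le' (G w)) ?_
      exact mul_le_mul hGw (Real.exp_le_exp.mpr hGw') (Real.exp_pos _).le
        (by positivity)
    have h2 : ((2+res) * w).re ≤ max A₀ (((2+res) * v).re) := by
      obtain ⟨ta, tb, hta, htb, htab, rfl⟩ := hw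
      have hre : ((2+res) * (ta • u₀ + tb • v)).re
          = ta * A₀ + tb * ((2+res)*v).re := by
        rw [mul_add, mul_smul_comm, mul_smul_comm, Complex.add_re,
          Complex.smul_re, Complex.smul_re, hA₀def]
        simp [smul_eq_mul]
      rw [hre]
      have m1 : A₀ ≤ max A₀ (((2+res) * v).re) := le_max_left _ _
      have m2 : ((2+res) * v).re ≤ max A₀ (((2+res) * v).re) := le_max_right _ _
      calc ta * A₀ + tb * ((2+res)*v).re
          ≤ ta * max A₀ (((2+res) * v).re) + tb * max A₀ (((2+res) * v).re) :=
            add_le_add (mul_le_mul_of_nonneg_left m1 hta)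
              (mul_le_mul_of_nonneg_left m2 htb)
        _ = max A₀ (((2+res) * v).re) := by rw [← add_mul, htab, one_mul]
    have h2' : Real.exp (((2+res) * w).re) ≤ max (Real.exp A₀) E := by
      rcases le_total A₀ (((2+res) * v).re) with hc1 | hc1
      · rw [max_eq_right hc1] at h2
        exact le_trans (Real.exp_le_exp.mpr h2) (le_max_right _ _)
      · rw [max_eq_left hc1] at h2
        exact le_trans (Real.exp_le_exp.mpr h2) (le_max_left _ _)
    calc ‖Φ' w‖ = ‖c‖ * Real.exp (((1+res)*w).re) * ‖Complex.exp (G w) - 1‖ := by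
          rw [hΦ'def, norm_mul, norm_mul, Complex.norm_exp]
      _ ≤ ‖c‖ * Real.exp (((1+res)*w).re) * ((K * Real.exp w.re) * Real.exp (K * r')) :=
          mul_le_mul_of_nonneg_left h1 (by positivity)
      _ = (‖c‖ * K * Real.exp (K*r')) * (Real.exp (((1+res)*w).re) * Real.exp w.re) := by
          ring
      _ = (‖c‖ * K * Real.exp (K*r')) * Real.exp (((2+res)*w).re) := by
          rw [← Real.exp_add]
          congr 2
          rw [show (2+res) * w = (1+res) * w + w by ring, Complex.add_re]
      _ ≤ (‖c‖ * K * Real.exp (K*r')) * max (Real.exp A₀) E :=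
          mul_le_mul_of_nonneg_left h2' (by positivity)
  have hest := seg_est Φ Φ' u₀ v _ (fun w hw => hΦd w (hH'H (hseg hw)))
    (fun w hw => (hΦ'cont w (hH'H (hseg hw))).continuousWithinAt) hCseg
  -- geometry: ‖v - u₀‖ ≤ Ka + Kb * max 0 μ
  have hμx : μ = e1 * v.re - e2 * v.im := Complex.mul_re _ _
  have hβx : β = e1 * v.im + e2 * v.re := by
    rw [hβdef, Complex.mul_im]
  have hβB : |β| ≤ B := by
    rw [abs_le]
    constructor
    · have := neg_abs_le α₀
      have := le_max_left |α₀| |α₁|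
      linarith
    · have := le_abs_self α₁
      have := le_max_right |α₀| |α₁|
      linarith
  have hμlb : -K₃ ≤ μ := by
    have hd : e1 * μ = n2 * v.re - e2 * β := by
      rw [hμx, hβx, hn2def]; ring
    have h5 : e1 * μ ≤ n2 * |L'| + |e2| * B := by
      have hA : n2 * v.re ≤ n2 * |L'| :=
        mul_le_mul_of_nonneg_left (le_trans hv1 (le_abs_self L')) hn2.le
      have hBB : -(e2 * β) ≤ |e2| * B := by
        calc -(e2*β) ≤ |e2*β| := neg_le_abs _
          _ = |e2| * |β| := abs_mul _ _
          _ ≤ |e2| * B := mul_le_mul_of_nonneg_left hβB (abs_nonneg _)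
      linarith
    have h6 : K₃ * (-e1) = n2 * |L'| + |e2| * B := by
      rw [hK₃def]
      exact div_mul_cancel₀ _ (ne_of_gt (neg_pos.mpr he1neg))
    by_contra hcon
    push_neg at hcon
    have h7 : 0 < e1 * (μ + K₃) := mul_pos_of_neg_of_neg he1neg (by linarith)
    linarith [h5, h6]
  have hμabs : |μ| ≤ max 0 μ + K₃ := by
    rcases le_total 0 μ with hm | hm
    · rw [_root_.abs_of_nonneg hm, max_eq_right hm]; linarith
    · rw [_root_.abs_of_nonpos hm, max_eq_left hm]; linarith
  have hxb : n2 * |v.re| ≤ |e1| * |μ| + |e2| * B := by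
    have hid : n2 * v.re = e1 * μ + e2 * β := by
      rw [hμx, hβx, hn2def]; ring
    calc n2 * |v.re| = |n2 * v.re| := by
          rw [abs_mul, _root_.abs_of_pos hn2]
      _ = |e1 * μ + e2 * β| := by rw [hid]
      _ ≤ |e1 * μ| + |e2 * β| := abs_add_le _ _
      _ = |e1| * |μ| + |e2| * |β| := by rw [abs_mul, abs_mul]
      _ ≤ |e1| * |μ| + |e2| * B := by
          have := mul_le_mul_of_nonneg_left hβB (abs_nonneg e2)
          linarith
  have hyb : n2 * |v.im| ≤ |e1| * B + |e2| * |μ| := by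
    have hid : n2 * v.im = e1 * β - e2 * μ := by
      rw [hμx, hβx, hn2def]; ring
    calc n2 * |v.im| = |n2 * v.im| := by
          rw [abs_mul, _root_.abs_of_pos hn2]
      _ = |e1 * β - e2 * μ| := by rw [hid]
      _ ≤ |e1 * β| + |e2 * μ| := abs_sub _ _
      _ = |e1| * |β| + |e2| * |μ| := by rw [abs_mul, abs_mul]
      _ ≤ |e1| * B + |e2| * |μ| := by
          have := mul_le_mul_of_nonneg_left hβB (abs_nonneg e1)
          linarith
  have hvnorm : ‖v‖ ≤ |v.re| + |v.im| := by
    exact Complex.norm_le_abs_re_add_abs_im v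
  have hgeo : ‖v - u₀‖ ≤ Ka + Kb * max 0 μ := by
    have h8 : ‖v - u₀‖ ≤ ‖v‖ + ‖u₀‖ := norm_sub_le _ _
    have m1 := mul_le_mul_of_nonneg_left h8 hn2.le
    have m2 := mul_le_mul_of_nonneg_left hvnorm hn2.le
    have m3 := mul_le_mul_of_nonneg_left hμabs (abs_nonneg e1)
    have m4 := mul_le_mul_of_nonneg_left hμabs (abs_nonneg e2)
    have m5 : n2 * (Kb * max 0 μ) = (|e1| + |e2|) * max 0 μ := by
      rw [← mul_assoc, hKb_eq]
    have hg1 : n2 * ‖v - u₀‖ ≤ n2 * (Ka + Kb * max 0 μ) := by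
      have expand : n2 * (Ka + Kb * max 0 μ)
          = n2 * Ka + (|e1| + |e2|) * max 0 μ := by
        rw [mul_add, m5]
      rw [expand, hKa_eq]
      linarith [hxb, hyb, m1, m2, m3, m4]
    exact le_of_mul_le_mul_left hg1 hn2
  -- assemble
  have h9 : ‖Φ v‖ ≤ ‖Φ u₀‖
      + ((‖c‖ * K * Real.exp (K * r')) * max (Real.exp A₀) E) * ‖v - u₀‖ := by
    have := norm_sub_norm_le (Φ v) (Φ u₀)
    linarith
  have hmax : max (Real.exp A₀) E ≤ max (Real.exp A₀) 1 * max 1 E := by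
    have p1 : Real.exp A₀ ≤ max (Real.exp A₀) 1 * max 1 E := by
      calc Real.exp A₀ ≤ max (Real.exp A₀) 1 := le_max_left _ _
        _ = max (Real.exp A₀) 1 * 1 := (mul_one _).symm
        _ ≤ max (Real.exp A₀) 1 * max 1 E :=
            mul_le_mul_of_nonneg_left (le_max_left 1 E)
              (le_trans zero_le_one (le_max_right _ _))
    have p2 : E ≤ max (Real.exp A₀) 1 * max 1 E := by
      calc E ≤ max 1 E := le_max_right _ _
        _ = 1 * max 1 E := (one_mul _).symm
        _ ≤ max (Real.exp A₀) 1 * max 1 E :=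
            mul_le_mul_of_nonneg_right (le_max_right _ _)
              (le_trans zero_le_one (le_max_left _ _))
    exact max_le p1 p2
  have hup : ((‖c‖ * K * Real.exp (K * r')) * max (Real.exp A₀) E) * ‖v - u₀‖
      ≤ (K₄ * max 1 E) * (Ka + Kb * max 0 μ) := by
    apply mul_le_mul _ hgeo (norm_nonneg _) (by positivity)
    rw [hK₄def]
    calc ‖c‖ * K * Real.exp (K * r') * max (Real.exp A₀) E
        ≤ ‖c‖ * K * Real.exp (K * r') * (max (Real.exp A₀) 1 * max 1 E) :=
          mul_le_mul_of_nonneg_left hmax (by positivity)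
      _ = ‖c‖ * K * Real.exp (K * r') * max (Real.exp A₀) 1 * max 1 E := by ring
  have hgoal : ‖Φ v‖ ≤ max 1 E * ((‖Φ u₀‖ + K₄ * Ka) + K₄ * Kb * max 0 μ) := by
    have hone : (1:ℝ) ≤ max 1 E := le_max_left 1 E
    linarith [h9, hup, mul_nonneg (sub_nonneg.mpr hone) (norm_nonneg (Φ u₀)),
      mul_nonneg hK₄0 hKa0, mul_nonneg (mul_nonneg hK₄0 hKb0) (le_max_left 0 μ)]
  exact hgoal
end

section
/- Stability of the homotopy class under small perturbations fixing endpoints (Lemma GammaTop2): Let U ⊆ ℂ be open and let γ be an admissible path in U. Then there exists ε > 0 such that every admissible path γ̃ in U with γ̃(0) = γ(0), γ̃(1) = γ(1) and d(γ, γ̃) < ε is 𝒢-homotopic to γ. -/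
open Set

/-- A path in `U` parametrized by `[0,1]` is admissible if it is continuous, takes values
in `U`, and hits its endpoint only at time `1`. -/
def IsAdmissible (U : Set ℂ) (γ : ℝ → ℂ) : Prop :=
  ContinuousOn γ (Set.Icc 0 1) ∧ (∀ s ∈ Set.Icc (0:ℝ) 1, γ s ∈ U) ∧
    ∀ s ∈ Set.Ico (0:ℝ) 1, γ s ≠ γ 1

/-- Two admissible paths with the same endpoints are 𝒢-homotopic: there is a homotopy
in `U` fixing the endpoints and avoiding the common endpoint `γ 1` at all times `s < 1`. -/
def GHomotopic (U : Set ℂ) (γ γ' : ℝ → ℂ) : Prop :=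
  ∃ H : ℝ → ℝ → ℂ,
    ContinuousOn (fun p : ℝ × ℝ => H p.1 p.2) (Set.Icc 0 1 ×ˢ Set.Icc 0 1) ∧
    (∀ s ∈ Set.Icc (0:ℝ) 1, ∀ u ∈ Set.Icc (0:ℝ) 1, H s u ∈ U) ∧
    (∀ s ∈ Set.Icc (0:ℝ) 1, H s 0 = γ s) ∧
    (∀ s ∈ Set.Icc (0:ℝ) 1, H s 1 = γ' s) ∧
    (∀ u ∈ Set.Icc (0:ℝ) 1, H 0 u = γ 0) ∧
    (∀ u ∈ Set.Icc (0:ℝ) 1, H 1 u = γ 1) ∧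
    (∀ s ∈ Set.Ico (0:ℝ) 1, ∀ u ∈ Set.Icc (0:ℝ) 1, H s u ≠ γ 1)

/-- The sup distance between two paths parametrized by `[0,1]`. -/
noncomputable def pathDist (γ γ' : ℝ → ℂ) : ℝ :=
  sSup ((fun s => ‖γ' s - γ s‖) '' Set.Icc 0 1)

lemma continuousOn_if_le' {α β : Type*} [TopologicalSpace α] [TopologicalSpace β]
    {s : Set α} {f g : α → ℝ} {f' g' : α → β} [∀ x, Decidable (f x ≤ g x)]
    (hf : Continuous f) (hg : Continuous g)
    (hf' : ContinuousOn f' (s ∩ {x | f x ≤ g x}))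
    (hg' : ContinuousOn g' (s ∩ {x | g x ≤ f x}))
    (heq : ∀ x ∈ s, f x = g x → f' x = g' x) :
    ContinuousOn (fun x => if f x ≤ g x then f' x else g' x) s := by
  apply ContinuousOn.if
  · intro a ha
    exact heq a ha.1 (frontier_le_subset_eq hf hg ha.2)
  · rwa [(isClosed_le hf hg).closure_eq]
  · refine hg'.mono (inter_subset_inter_right _ ?_)
    intro x hx
    have hx' : x ∈ closure {x | g x < f x} := by
      simpa only [not_le] using hx
    exact closure_lt_subset_le hg hf hx'


lemma GHomotopic.symm' {U : Set ℂ} {γ γ' : ℝ → ℂ} (h : GHomotopic U γ γ') :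
    GHomotopic U γ' γ := by
  obtain ⟨H, Hc, HU, H0, H1, Hl, Hr, Hav⟩ := h
  have h01 : (0:ℝ) ∈ Icc (0:ℝ) 1 := ⟨le_refl 0, zero_le_one⟩
  have h11 : (1:ℝ) ∈ Icc (0:ℝ) 1 := ⟨zero_le_one, le_refl 1⟩
  have e0 : γ' 0 = γ 0 := by rw [← H1 0 h01, Hl 1 h11]
  have e1 : γ' 1 = γ 1 := by rw [← H1 1 h11, Hr 1 h11]
  have hmem : ∀ u ∈ Icc (0:ℝ) 1, 1 - u ∈ Icc (0:ℝ) 1 := fun u hu =>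
    ⟨by linarith [hu.2], by linarith [hu.1]⟩
  refine ⟨fun s u => H s (1 - u), ?_, ?_, ?_, ?_, ?_, ?_, ?_⟩
  · have hm : MapsTo (fun p : ℝ × ℝ => (p.1, 1 - p.2)) (Icc 0 1 ×ˢ Icc 0 1)
        (Icc (0:ℝ) 1 ×ˢ Icc (0:ℝ) 1) := by
      rintro ⟨s, u⟩ hp
      rw [mem_prod] at hp ⊢
      exact ⟨hp.1, hmem u hp.2⟩
    exact Hc.comp ((continuous_fst.prodMk (continuous_const.sub continuous_snd)).continuousOn) hm
  · exact fun s hs u hu => HU s hs _ (hmem u hu)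
  · intro s hs; show H s (1-0) = γ' s; rw [show (1:ℝ) - 0 = 1 by ring, H1 s hs]
  · intro s hs; show H s (1-1) = γ s; rw [show (1:ℝ) - 1 = 0 by ring, H0 s hs]
  · intro u hu; show H 0 (1-u) = γ' 0; rw [Hl _ (hmem u hu), e0]
  · intro u hu; show H 1 (1-u) = γ' 1; rw [Hr _ (hmem u hu), e1]
  · intro s hs u hu; show H s (1-u) ≠ γ' 1; rw [e1]; exact Hav s hs _ (hmem u hu)

lemma GHomotopic.trans' {U : Set ℂ} {γ₁ γ₂ γ₃ : ℝ → ℂ}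
    (h : GHomotopic U γ₁ γ₂) (h' : GHomotopic U γ₂ γ₃) : GHomotopic U γ₁ γ₃ := by
  obtain ⟨H, Hc, HU, H0, H1, Hl, Hr, Hav⟩ := h
  obtain ⟨K, Kc, KU, K0, K1, Kl, Kr, Kav⟩ := h'
  have h01 : (0:ℝ) ∈ Icc (0:ℝ) 1 := ⟨le_refl 0, zero_le_one⟩
  have h11 : (1:ℝ) ∈ Icc (0:ℝ) 1 := ⟨zero_le_one, le_refl 1⟩
  have e0 : γ₂ 0 = γ₁ 0 := by rw [← H1 0 h01, Hl 1 h11]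
  have e1 : γ₂ 1 = γ₁ 1 := by rw [← H1 1 h11, Hr 1 h11]
  have hm1 : ∀ u : ℝ, u ∈ Icc (0:ℝ) 1 → u ≤ 1/2 → (2*u) ∈ Icc (0:ℝ) 1 := fun u hu h2 =>
    ⟨by linarith [hu.1], by linarith⟩
  have hm2 : ∀ u : ℝ, u ∈ Icc (0:ℝ) 1 → 1/2 ≤ u → (2*u - 1) ∈ Icc (0:ℝ) 1 := fun u hu h2 =>
    ⟨by linarith, by linarith [hu.2]⟩
  refine ⟨fun s u => if u ≤ 1/2 then H s (2*u) else K s (2*u - 1), ?_, ?_, ?_, ?_, ?_, ?_, ?_⟩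
  · apply continuousOn_if_le' (f := fun p : ℝ × ℝ => p.2) (g := fun _ => (1:ℝ)/2)
      continuous_snd continuous_const
    · refine Hc.comp ((continuous_fst.prodMk (continuous_const.mul continuous_snd)).continuousOn) ?_
      rintro ⟨s, u⟩ ⟨hp, (h2 : u ≤ 1/2)⟩
      rw [mem_prod] at hp ⊢
      exact ⟨hp.1, hm1 u hp.2 h2⟩
    · refine Kc.comp ((continuous_fst.prodMk ((continuous_const.mul continuous_snd).sub continuous_const)).continuousOn) ?_
      rintro ⟨s, u⟩ ⟨hp, (h2 : 1/2 ≤ u)⟩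
      rw [mem_prod] at hp ⊢
      exact ⟨hp.1, hm2 u hp.2 h2⟩
    · rintro ⟨s, u⟩ hp (h2 : u = 1/2)
      rw [mem_prod] at hp
      simp only [h2]
      norm_num [H1 s hp.1, K0 s hp.1]
  · intro s hs u hu
    show (if u ≤ 1/2 then H s (2*u) else K s (2*u - 1)) ∈ U
    split_ifs with h2
    · exact HU s hs _ (hm1 u hu h2)
    · exact KU s hs _ (hm2 u hu (le_of_not_ge h2))
  · intro s hs
    show (if (0:ℝ) ≤ 1/2 then H s (2*0) else K s (2*0 - 1)) = γ₁ s
    rw [if_pos (by norm_num : (0:ℝ) ≤ 1/2), show 2*(0:ℝ) = 0 by ring, H0 s hs]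
  · intro s hs
    show (if (1:ℝ) ≤ 1/2 then H s (2*1) else K s (2*1 - 1)) = γ₃ s
    rw [if_neg (by norm_num : ¬ (1:ℝ) ≤ 1/2), show 2*(1:ℝ) - 1 = 1 by ring, K1 s hs]
  · intro u hu
    show (if u ≤ 1/2 then H 0 (2*u) else K 0 (2*u - 1)) = γ₁ 0
    split_ifs with h2
    · exact Hl _ (hm1 u hu h2)
    · rw [Kl _ (hm2 u hu (le_of_not_ge h2)), e0]
  · intro u hu
    show (if u ≤ 1/2 then H 1 (2*u) else K 1 (2*u - 1)) = γ₁ 1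
    split_ifs with h2
    · exact Hr _ (hm1 u hu h2)
    · rw [Kr _ (hm2 u hu (le_of_not_ge h2)), e1]
  · intro s hs u hu
    show (if u ≤ 1/2 then H s (2*u) else K s (2*u - 1)) ≠ γ₁ 1
    split_ifs with h2
    · exact Hav s hs _ (hm1 u hu h2)
    · rw [← e1]; exact Kav s hs _ (hm2 u hu (le_of_not_ge h2))

section
variable {U : Set ℂ} {γ : ℝ → ℂ}

lemma tail_trunc (hγ : IsAdmissible U γ) {a r : ℝ}
    (ha0 : 0 ≤ a) (ha1 : a < 1)
    (hball : Metric.ball (γ 1) r ⊆ U)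
    (htail : ∀ s ∈ Icc a 1, dist (γ s) (γ 1) < r) :
    GHomotopic U γ (fun s => if s ≤ a then γ s
      else γ a + (((s - a) / (1 - a) : ℝ) : ℂ) * (γ 1 - γ a)) := by
  obtain ⟨hγc, hγU, hγne⟩ := hγ
  set c : ℝ → ℝ := fun u => 1 - u * (1 - a) with hc
  have hca : ∀ u ∈ Icc (0:ℝ) 1, a ≤ c u := by
    intro u hu; simp only [hc]; nlinarith [hu.2]
  have hc1 : ∀ u ∈ Icc (0:ℝ) 1, c u ≤ 1 := by
    intro u hu; simp only [hc]; nlinarith [hu.1]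
  have hupos : ∀ s u : ℝ, s ∈ Icc (0:ℝ) 1 → u ∈ Icc (0:ℝ) 1 → ¬ s ≤ c u → 0 < u := by
    intro s u hs hu h
    rcases lt_or_eq_of_le hu.1 with h' | h'
    · exact h'
    · exfalso; apply h; simp only [hc, ← h']; linarith [hs.2]
  have hdpos : ∀ u : ℝ, 0 < u → 0 < 1 - c u := by
    intro u hu; simp only [hc]; nlinarith
  refine ⟨fun s u => if s ≤ c u then γ s
      else γ (c u) + (((s - c u) / (1 - c u) : ℝ) : ℂ) * (γ 1 - γ (c u)), ?_, ?_, ?_, ?_, ?_, ?_, ?_⟩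
  · -- continuity
    show ContinuousOn (fun p : ℝ × ℝ => if p.1 ≤ c p.2 then γ p.1
      else γ (c p.2) + (((p.1 - c p.2) / (1 - c p.2) : ℝ) : ℂ) * (γ 1 - γ (c p.2)))
      (Icc 0 1 ×ˢ Icc 0 1)
    have hcc : Continuous fun p : ℝ × ℝ => c p.2 := by
      simp only [hc]; fun_prop
    apply continuousOn_if_le' continuous_fst hcc
    · exact hγc.comp continuous_fst.continuousOn (fun p hp => (mem_prod.1 hp.1).1)
    · -- else branch on S₂
      have hγcc : ContinuousOn (fun p : ℝ × ℝ => γ (c p.2))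
          ((Icc 0 1 ×ˢ Icc 0 1) ∩ {p : ℝ × ℝ | c p.2 ≤ p.1}) := by
        refine hγc.comp hcc.continuousOn ?_
        intro p hp
        have hp2 := (mem_prod.1 hp.1).2
        exact ⟨le_trans ha0 (hca _ hp2), hc1 _ hp2⟩
      intro x hx
      obtain ⟨hxsq, (hxc : c x.2 ≤ x.1)⟩ := hx
      rw [mem_prod] at hxsq
      by_cases hu0 : x.2 = 0
      · -- the corner point (1,0): squeeze argument
        have hcx : c x.2 = 1 := by simp [hc, hu0]
        have hx1 : x.1 = 1 := le_antisymm hxsq.1.2 (by rw [hcx] at hxc; exact hxc)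
        have hbound : ∀ y : ℝ × ℝ, y ∈ (Icc 0 1 ×ˢ Icc 0 1) ∩ {p : ℝ × ℝ | c p.2 ≤ p.1} →
            ‖(γ (c y.2) + (((y.1 - c y.2) / (1 - c y.2) : ℝ) : ℂ) * (γ 1 - γ (c y.2))) - γ 1‖
              ≤ ‖γ (c y.2) - γ 1‖ := by
          intro y hy
          obtain ⟨hysq, (hyc : c y.2 ≤ y.1)⟩ := hy
          rw [mem_prod] at hysq
          set t : ℝ := (y.1 - c y.2) / (1 - c y.2) with ht
          have hid : (γ (c y.2) + ((t : ℝ) : ℂ) * (γ 1 - γ (c y.2))) - γ 1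
              = (((1 - t : ℝ)) : ℂ) * (γ (c y.2) - γ 1) := by push_cast; ring
          rw [hid, norm_mul, Complex.norm_real]
          have ht01 : 0 ≤ t ∧ t ≤ 1 := by
            by_cases hy0 : y.2 = 0
            · have : c y.2 = 1 := by simp [hc, hy0]
              have : t = 0 := by rw [ht, this]; simp
              rw [this]; norm_num
            · have hy0' : 0 < y.2 := lt_of_le_of_ne hysq.2.1 (Ne.symm hy0)
              have hd := hdpos _ hy0'
              constructor
              · exact div_nonneg (by linarith) hd.le
              · rw [div_le_one hd]; linarith [hysq.1.2]
          have : ‖(1 - t : ℝ)‖ ≤ 1 := by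
            rw [Real.norm_eq_abs, abs_of_nonneg (by linarith [ht01.2])]
            linarith [ht01.1]
          nlinarith [norm_nonneg (γ (c y.2) - γ 1), this]
        have htend0 : Filter.Tendsto (fun y : ℝ × ℝ => γ (c y.2) - γ 1)
            (nhdsWithin x ((Icc 0 1 ×ˢ Icc 0 1) ∩ {p : ℝ × ℝ | c p.2 ≤ p.1})) (nhds 0) := by
          have h1 : ContinuousWithinAt (fun p : ℝ × ℝ => γ (c p.2) - γ 1)
              ((Icc 0 1 ×ˢ Icc 0 1) ∩ {p : ℝ × ℝ | c p.2 ≤ p.1}) x :=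
            (hγcc x ⟨mem_prod.2 hxsq, hxc⟩).sub continuousWithinAt_const
          have h3 : γ (c x.2) - γ 1 = 0 := by rw [hcx]; simp
          simpa [ContinuousWithinAt, h3] using h1
        have hsq : Filter.Tendsto (fun y : ℝ × ℝ =>
            (γ (c y.2) + (((y.1 - c y.2) / (1 - c y.2) : ℝ) : ℂ) * (γ 1 - γ (c y.2))) - γ 1)
            (nhdsWithin x ((Icc 0 1 ×ˢ Icc 0 1) ∩ {p : ℝ × ℝ | c p.2 ≤ p.1})) (nhds 0) := by
          apply squeeze_zero_norm' _ (by simpa using htend0.norm)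
          filter_upwards [self_mem_nhdsWithin] with y hy
          exact hbound y hy
        have : Filter.Tendsto (fun y : ℝ × ℝ =>
            γ (c y.2) + (((y.1 - c y.2) / (1 - c y.2) : ℝ) : ℂ) * (γ 1 - γ (c y.2)))
            (nhdsWithin x ((Icc 0 1 ×ˢ Icc 0 1) ∩ {p : ℝ × ℝ | c p.2 ≤ p.1})) (nhds (γ 1)) := by
          have := hsq.add (tendsto_const_nhds (x := γ 1))
          simpa using this
        unfold ContinuousWithinAt
        convert this using 2
        simp [hcx, hx1]
      · -- x.2 ≠ 0 : all pieces continuous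
        have hx2pos : 0 < x.2 := lt_of_le_of_ne hxsq.2.1 (Ne.symm hu0)
        have hd : (1 : ℝ) - c x.2 ≠ 0 := ne_of_gt (hdpos _ hx2pos)
        have hgw := hγcc x ⟨mem_prod.2 hxsq, hxc⟩
        have htw : ContinuousWithinAt (fun p : ℝ × ℝ => (p.1 - c p.2) / (1 - c p.2))
            ((Icc 0 1 ×ˢ Icc 0 1) ∩ {p : ℝ × ℝ | c p.2 ≤ p.1}) x := by
          apply ContinuousWithinAt.div
          · exact (continuous_fst.sub hcc).continuousWithinAt
          · exact (continuous_const.sub hcc).continuousWithinAt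
          · exact hd
        exact hgw.add (((Complex.continuous_ofReal.continuousAt.comp_continuousWithinAt htw)).mul
          (continuousWithinAt_const.sub hgw))
    · intro x hx heq
      rw [heq]
      simp
  · -- membership in U
    intro s hs u hu
    show (if s ≤ c u then γ s
      else γ (c u) + (((s - c u) / (1 - c u) : ℝ) : ℂ) * (γ 1 - γ (c u))) ∈ U
    split_ifs with h
    · exact hγU s hs
    · have hu0 : 0 < u := hupos s u hs hu h
      have hd := hdpos u hu0
      have ht0 : 0 ≤ (s - c u) / (1 - c u) := div_nonneg (by push_neg at h; linarith) hd.le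
      have ht1 : (s - c u) / (1 - c u) ≤ 1 := by rw [div_le_one hd]; linarith [hs.2]
      apply hball
      rw [Metric.mem_ball, dist_eq_norm]
      have hid : (γ (c u) + (((s - c u) / (1 - c u) : ℝ) : ℂ) * (γ 1 - γ (c u))) - γ 1
          = (((1 - (s - c u) / (1 - c u) : ℝ)) : ℂ) * (γ (c u) - γ 1) := by push_cast; ring
      rw [hid, norm_mul, Complex.norm_real, Real.norm_eq_abs,
        abs_of_nonneg (by linarith : (0:ℝ) ≤ 1 - (s - c u) / (1 - c u))]
      have hn : ‖γ (c u) - γ 1‖ < r := by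
        rw [← dist_eq_norm]; exact htail _ ⟨hca u hu, hc1 u hu⟩
      have hr0 : 0 < r := lt_of_le_of_lt (norm_nonneg _) hn
      nlinarith [norm_nonneg (γ (c u) - γ 1)]
  · -- H s 0 = γ s
    intro s hs
    have hc0 : c 0 = 1 := by simp [hc]
    show (if s ≤ c 0 then γ s
      else γ (c 0) + (((s - c 0) / (1 - c 0) : ℝ) : ℂ) * (γ 1 - γ (c 0))) = γ s
    rw [if_pos (by rw [hc0]; exact hs.2)]
  · -- H s 1 = truncated path
    intro s hs
    have hc1' : c 1 = a := by simp [hc]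
    show (if s ≤ c 1 then γ s
      else γ (c 1) + (((s - c 1) / (1 - c 1) : ℝ) : ℂ) * (γ 1 - γ (c 1)))
      = if s ≤ a then γ s else γ a + (((s - a) / (1 - a) : ℝ) : ℂ) * (γ 1 - γ a)
    rw [hc1']
  · -- H 0 u = γ 0
    intro u hu
    show (if (0:ℝ) ≤ c u then γ 0
      else γ (c u) + ((((0:ℝ) - c u) / (1 - c u) : ℝ) : ℂ) * (γ 1 - γ (c u))) = γ 0
    rw [if_pos (le_trans ha0 (hca u hu))]
  · -- H 1 u = γ 1
    intro u hu
    show (if (1:ℝ) ≤ c u then γ 1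
      else γ (c u) + ((((1:ℝ) - c u) / (1 - c u) : ℝ) : ℂ) * (γ 1 - γ (c u))) = γ 1
    split_ifs with h
    · rfl
    · rw [div_self (by push_neg at h; exact ne_of_gt (by linarith))]
      simp
  · -- avoidance
    intro s hs u hu
    show (if s ≤ c u then γ s
      else γ (c u) + (((s - c u) / (1 - c u) : ℝ) : ℂ) * (γ 1 - γ (c u))) ≠ γ 1
    split_ifs with h
    · exact hγne s hs
    · have hu0 : 0 < u := hupos s u ⟨hs.1, hs.2.le⟩ hu h
      have hd := hdpos u hu0
      push_neg at h
      have hcu1 : c u < 1 := lt_trans h hs.2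
      have hne : γ (c u) ≠ γ 1 := hγne (c u) ⟨le_trans ha0 (hca u hu), hcu1⟩
      have ht1 : (s - c u) / (1 - c u) < 1 := by rw [div_lt_one hd]; linarith [hs.2]
      have hid : (γ (c u) + (((s - c u) / (1 - c u) : ℝ) : ℂ) * (γ 1 - γ (c u))) - γ 1
          = (((1 - (s - c u) / (1 - c u) : ℝ)) : ℂ) * (γ (c u) - γ 1) := by push_cast; ring
      intro hcontra
      have : (γ (c u) + (((s - c u) / (1 - c u) : ℝ) : ℂ) * (γ 1 - γ (c u))) - γ 1 = 0 := by
        rw [hcontra]; ring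
      rw [hid] at this
      rcases mul_eq_zero.1 this with h' | h'
      · rw [Complex.ofReal_eq_zero] at h'; linarith
      · exact hne (sub_eq_zero.1 h')

end

/-- Lemma GammaTop2: stability of the homotopy class under small perturbations fixing
the endpoints. -/
theorem homotopy_class_stable (U : Set ℂ) (hU : IsOpen U)
    (γ : ℝ → ℂ) (hγ : IsAdmissible U γ) :
    ∃ ε > (0:ℝ), ∀ γ' : ℝ → ℂ, IsAdmissible U γ' → γ' 0 = γ 0 → γ' 1 = γ 1 →
      pathDist γ γ' < ε → GHomotopic U γ γ' := by
  obtain ⟨hγc, hγU, hγne⟩ := hγ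
  have h1mem : (1:ℝ) ∈ Icc (0:ℝ) 1 := ⟨zero_le_one, le_refl 1⟩
  have hK : IsCompact (γ '' Icc 0 1) := (isCompact_Icc).image_of_continuousOn hγc
  obtain ⟨ε₀, hε₀, hthick⟩ := hK.exists_thickening_subset_open hU
    (by rintro _ ⟨s, hs, rfl⟩; exact hγU s hs)
  have hball : ∀ s ∈ Icc (0:ℝ) 1, Metric.ball (γ s) ε₀ ⊆ U := by
    intro s hs z hz
    exact hthick (Metric.mem_thickening_iff.2 ⟨γ s, ⟨s, hs, rfl⟩, hz⟩)
  obtain ⟨η, hη, hηs⟩ := Metric.continuousWithinAt_iff.1 (hγc 1 h1mem) (ε₀/4) (by linarith)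
  set a : ℝ := max 0 (1 - η/2) with ha
  have ha0 : 0 ≤ a := le_max_left _ _
  have ha1 : a < 1 := max_lt one_pos (by linarith)
  have h1a : (0:ℝ) < 1 - a := by linarith
  have htail : ∀ s ∈ Icc a 1, dist (γ s) (γ 1) < ε₀/4 := by
    intro s hs
    have h2 : 1 - η/2 ≤ a := le_max_right _ _
    have hs1 : s ≤ 1 := hs.2
    apply hηs ⟨le_trans ha0 hs.1, hs.2⟩
    rw [Real.dist_eq, abs_of_nonpos (by linarith)]
    linarith [hs.1]
  obtain ⟨s₀, hs₀, hmin⟩ := (isCompact_Icc (a := (0:ℝ)) (b := a)).exists_isMinOn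
    (nonempty_Icc.2 ha0)
    (((hγc.mono (Icc_subset_Icc le_rfl ha1.le)).sub continuousOn_const).norm
      : ContinuousOn (fun s => ‖γ s - γ 1‖) (Icc 0 a))
  set m : ℝ := dist (γ s₀) (γ 1) with hm
  have hm0 : 0 < m := dist_pos.2 (hγne s₀ ⟨hs₀.1, lt_of_le_of_lt hs₀.2 ha1⟩)
  have hmle : ∀ s ∈ Icc (0:ℝ) a, m ≤ dist (γ s) (γ 1) := by
    intro s hs
    have := (isMinOn_iff.1 hmin) s hs
    rw [hm, dist_eq_norm, dist_eq_norm]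
    exact this
  refine ⟨min (ε₀/4) (m/2), by positivity, ?_⟩
  intro γ' hadm' h0' h1' hd
  obtain ⟨hγ'c, hγ'U, hγ'ne⟩ := hadm'
  set ε : ℝ := min (ε₀/4) (m/2) with hεdef
  have hε1 : ε ≤ ε₀/4 := min_le_left _ _
  have hε2 : ε ≤ m/2 := min_le_right _ _
  have hpw : ∀ s ∈ Icc (0:ℝ) 1, dist (γ' s) (γ s) < ε := by
    intro s hs
    have hbdd : BddAbove ((fun s => ‖γ' s - γ s‖) '' Icc 0 1) := by
      have hcont : ContinuousOn (fun s => ‖γ' s - γ s‖) (Icc 0 1) := by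
        exact (hγ'c.sub hγc).norm
      exact ((isCompact_Icc.image_of_continuousOn hcont)).bddAbove
    calc dist (γ' s) (γ s) = ‖γ' s - γ s‖ := Complex.dist_eq _ _
      _ ≤ pathDist γ γ' := le_csSup hbdd ⟨s, hs, rfl⟩
      _ < ε := hd
  have h_tail' : ∀ s ∈ Icc a 1, dist (γ' s) (γ' 1) < ε₀/2 := by
    intro s hs
    have h1 := hpw s ⟨le_trans ha0 hs.1, hs.2⟩
    have h2 := htail s hs
    rw [h1']
    calc dist (γ' s) (γ 1) ≤ dist (γ' s) (γ s) + dist (γ s) (γ 1) := dist_triangle _ _ _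
      _ < ε₀/2 := by linarith
  have hball1 : Metric.ball (γ 1) ε₀ ⊆ U := hball 1 h1mem
  have hA : GHomotopic U γ (fun s => if s ≤ a then γ s
      else γ a + (((s - a) / (1 - a) : ℝ) : ℂ) * (γ 1 - γ a)) :=
    tail_trunc ⟨hγc, hγU, hγne⟩ ha0 ha1 hball1
      (fun s hs => lt_of_lt_of_le (htail s hs) (by linarith))
  have hC0 : GHomotopic U γ' (fun s => if s ≤ a then γ' s
      else γ' a + (((s - a) / (1 - a) : ℝ) : ℂ) * (γ' 1 - γ' a)) :=
    tail_trunc ⟨hγ'c, hγ'U, hγ'ne⟩ ha0 ha1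
      (by rw [h1']; exact (Metric.ball_subset_ball (by linarith)).trans hball1) h_tail'
  set γ₁ : ℝ → ℂ := fun s => if s ≤ a then γ s
      else γ a + (((s - a) / (1 - a) : ℝ) : ℂ) * (γ 1 - γ a) with hγ₁def
  set γ₁' : ℝ → ℂ := fun s => if s ≤ a then γ' s
      else γ' a + (((s - a) / (1 - a) : ℝ) : ℂ) * (γ' 1 - γ' a) with hγ₁'def
  -- facts about γ₁, γ₁'
  have hγ₁1 : γ₁ 1 = γ 1 := by
    simp only [hγ₁def]
    rw [if_neg (not_le.2 ha1), div_self (ne_of_gt h1a)]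
    push_cast; ring
  have hγ₁'1 : γ₁' 1 = γ 1 := by
    simp only [hγ₁'def]
    rw [if_neg (not_le.2 ha1), div_self (ne_of_gt h1a), ← h1']
    push_cast; ring
  have cont_trunc : ∀ δ : ℝ → ℂ, ContinuousOn δ (Icc 0 1) →
      ContinuousOn (fun s => if s ≤ a then δ s
        else δ a + (((s - a) / (1 - a) : ℝ) : ℂ) * (δ 1 - δ a)) (Icc 0 1) := by
    intro δ hδ
    apply continuousOn_if_le' continuous_id continuous_const
    · exact hδ.mono inter_subset_left
    · refine Continuous.continuousOn ?_
      refine continuous_const.add (Continuous.mul ?_ continuous_const)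
      exact Complex.continuous_ofReal.comp ((continuous_id.sub continuous_const).div_const _)
    · intro x _ h
      rw [show x = a from h]; simp
  have hγ₁cont : ContinuousOn γ₁ (Icc 0 1) := cont_trunc γ hγc
  have hγ₁'cont : ContinuousOn γ₁' (Icc 0 1) := cont_trunc γ' hγ'c
  -- the straight-line homotopy between γ₁ and γ₁'
  have hB : GHomotopic U γ₁ γ₁' := by
    have hqbound : ∀ s ∈ Icc (0:ℝ) 1, ∀ u ∈ Icc (0:ℝ) 1,
        dist (γ s + (u:ℂ) * (γ' s - γ s)) (γ s) ≤ ε := by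
      intro s hs u hu
      rw [dist_eq_norm, show γ s + (u:ℂ) * (γ' s - γ s) - γ s = (u:ℂ) * (γ' s - γ s) by ring,
        norm_mul, Complex.norm_real, Real.norm_eq_abs, abs_of_nonneg hu.1]
      have h1 := hpw s hs
      rw [dist_eq_norm] at h1
      nlinarith [norm_nonneg (γ' s - γ s), hu.2]
    refine ⟨fun s u => γ₁ s + (u:ℂ) * (γ₁' s - γ₁ s), ?_, ?_, ?_, ?_, ?_, ?_, ?_⟩
    · have c1 : ContinuousOn (fun p : ℝ × ℝ => γ₁ p.1) (Icc 0 1 ×ˢ Icc 0 1) :=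
        hγ₁cont.comp continuous_fst.continuousOn (fun p hp => (mem_prod.1 hp).1)
      have c2 : ContinuousOn (fun p : ℝ × ℝ => γ₁' p.1) (Icc 0 1 ×ˢ Icc 0 1) :=
        hγ₁'cont.comp continuous_fst.continuousOn (fun p hp => (mem_prod.1 hp).1)
      exact c1.add (((Complex.continuous_ofReal.comp continuous_snd).continuousOn).mul (c2.sub c1))
    · -- membership
      intro s hs u hu
      show γ₁ s + (u:ℂ) * (γ₁' s - γ₁ s) ∈ U
      by_cases hsa : s ≤ a
      · have e1 : γ₁ s = γ s := by simp only [hγ₁def]; rw [if_pos hsa]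
        have e2 : γ₁' s = γ' s := by simp only [hγ₁'def]; rw [if_pos hsa]
        rw [e1, e2]
        apply hball s hs
        rw [Metric.mem_ball]
        calc dist (γ s + (u:ℂ) * (γ' s - γ s)) (γ s) ≤ ε := hqbound s hs u hu
          _ < ε₀ := by linarith
      · push_neg at hsa
        have ht0 : 0 ≤ (s - a) / (1 - a) := div_nonneg (by linarith) h1a.le
        have ht1 : (s - a) / (1 - a) ≤ 1 := by rw [div_le_one h1a]; linarith [hs.2]
        have e1 : γ₁ s = γ a + (((s - a) / (1 - a) : ℝ) : ℂ) * (γ 1 - γ a) := by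
          simp only [hγ₁def]; rw [if_neg (not_le.2 hsa)]
        have e2 : γ₁' s = γ' a + (((s - a) / (1 - a) : ℝ) : ℂ) * (γ 1 - γ' a) := by
          simp only [hγ₁'def]; rw [if_neg (not_le.2 hsa), h1']
        rw [e1, e2]
        have hid : (γ a + (((s - a) / (1 - a) : ℝ) : ℂ) * (γ 1 - γ a))
            + (u:ℂ) * ((γ' a + (((s - a) / (1 - a) : ℝ) : ℂ) * (γ 1 - γ' a))
              - (γ a + (((s - a) / (1 - a) : ℝ) : ℂ) * (γ 1 - γ a))) - γ 1
            = (((1 - (s - a) / (1 - a) : ℝ)) : ℂ) * ((γ a + (u:ℂ) * (γ' a - γ a)) - γ 1) := by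
          push_cast; ring
        apply hball 1 h1mem
        rw [Metric.mem_ball, dist_eq_norm, hid, norm_mul, Complex.norm_real, Real.norm_eq_abs,
          abs_of_nonneg (by linarith : (0:ℝ) ≤ 1 - (s - a) / (1 - a))]
        have hq := hqbound a ⟨ha0, ha1.le⟩ u hu
        have hta := htail a ⟨le_refl a, ha1.le⟩
        have hqn : ‖(γ a + (u:ℂ) * (γ' a - γ a)) - γ 1‖ < ε₀/2 := by
          rw [← dist_eq_norm]
          calc dist (γ a + (u:ℂ) * (γ' a - γ a)) (γ 1)
              ≤ dist (γ a + (u:ℂ) * (γ' a - γ a)) (γ a) + dist (γ a) (γ 1) := dist_triangle _ _ _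
            _ < ε₀/2 := by linarith
        nlinarith [norm_nonneg ((γ a + (u:ℂ) * (γ' a - γ a)) - γ 1)]
    · intro s hs
      show γ₁ s + ((0:ℝ):ℂ) * (γ₁' s - γ₁ s) = γ₁ s
      push_cast; ring
    · intro s hs
      show γ₁ s + ((1:ℝ):ℂ) * (γ₁' s - γ₁ s) = γ₁' s
      push_cast; ring
    · intro u hu
      show γ₁ 0 + (u:ℂ) * (γ₁' 0 - γ₁ 0) = γ₁ 0
      have e1 : γ₁ 0 = γ 0 := by simp only [hγ₁def]; rw [if_pos ha0]
      have e2 : γ₁' 0 = γ 0 := by simp only [hγ₁'def]; rw [if_pos ha0]; exact h0'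
      rw [e1, e2]; ring
    · intro u hu
      show γ₁ 1 + (u:ℂ) * (γ₁' 1 - γ₁ 1) = γ₁ 1
      rw [hγ₁1, hγ₁'1]; ring
    · -- avoidance
      intro s hs u hu
      show γ₁ s + (u:ℂ) * (γ₁' s - γ₁ s) ≠ γ₁ 1
      rw [hγ₁1]
      by_cases hsa : s ≤ a
      · have e1 : γ₁ s = γ s := by simp only [hγ₁def]; rw [if_pos hsa]
        have e2 : γ₁' s = γ' s := by simp only [hγ₁'def]; rw [if_pos hsa]
        rw [e1, e2]
        intro hcontra
        have hv : dist (γ s + (u:ℂ) * (γ' s - γ s)) (γ s) ≤ ε :=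
          hqbound s ⟨hs.1, hs.2.le⟩ u hu
        have hsm : m ≤ dist (γ s) (γ 1) := hmle s ⟨hs.1, hsa⟩
        have htri : dist (γ s) (γ 1) ≤ dist (γ s) (γ s + (u:ℂ) * (γ' s - γ s))
            + dist (γ s + (u:ℂ) * (γ' s - γ s)) (γ 1) := dist_triangle _ _ _
        have hveq : dist (γ s + (u:ℂ) * (γ' s - γ s)) (γ 1) = 0 := by rw [hcontra]; simp
        rw [dist_comm] at hv
        linarith
      · push_neg at hsa
        have htlt : (s - a) / (1 - a) < 1 := by rw [div_lt_one h1a]; linarith [hs.2]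
        have e1 : γ₁ s = γ a + (((s - a) / (1 - a) : ℝ) : ℂ) * (γ 1 - γ a) := by
          simp only [hγ₁def]; rw [if_neg (not_le.2 hsa)]
        have e2 : γ₁' s = γ' a + (((s - a) / (1 - a) : ℝ) : ℂ) * (γ 1 - γ' a) := by
          simp only [hγ₁'def]; rw [if_neg (not_le.2 hsa), h1']
        rw [e1, e2]
        have hid : (γ a + (((s - a) / (1 - a) : ℝ) : ℂ) * (γ 1 - γ a))
            + (u:ℂ) * ((γ' a + (((s - a) / (1 - a) : ℝ) : ℂ) * (γ 1 - γ' a))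
              - (γ a + (((s - a) / (1 - a) : ℝ) : ℂ) * (γ 1 - γ a))) - γ 1
            = (((1 - (s - a) / (1 - a) : ℝ)) : ℂ) * ((γ a + (u:ℂ) * (γ' a - γ a)) - γ 1) := by
          push_cast; ring
        intro hcontra
        have hzero : (γ a + (((s - a) / (1 - a) : ℝ) : ℂ) * (γ 1 - γ a))
            + (u:ℂ) * ((γ' a + (((s - a) / (1 - a) : ℝ) : ℂ) * (γ 1 - γ' a))
              - (γ a + (((s - a) / (1 - a) : ℝ) : ℂ) * (γ 1 - γ a))) - γ 1 = 0 := by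
          rw [hcontra]; ring
        rw [hid] at hzero
        have hq := hqbound a ⟨ha0, ha1.le⟩ u hu
        have hsm : m ≤ dist (γ a) (γ 1) := hmle a ⟨ha0, le_refl a⟩
        have hqn : (0:ℝ) < ‖(γ a + (u:ℂ) * (γ' a - γ a)) - γ 1‖ := by
          rw [← dist_eq_norm]
          have htri : dist (γ a) (γ 1) ≤ dist (γ a) (γ a + (u:ℂ) * (γ' a - γ a))
              + dist (γ a + (u:ℂ) * (γ' a - γ a)) (γ 1) := dist_triangle _ _ _
          rw [dist_comm] at hq
          linarith
        rcases mul_eq_zero.1 hzero with h' | h'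
        · rw [Complex.ofReal_eq_zero] at h'; linarith
        · rw [h', norm_zero] at hqn; linarith
  exact hA.trans' (hB.trans' hC0.symm')
end

section
/- Prepending a small loop stays in the ε-neighbourhood of the class (Lemma GammaTop1): Let U ⊆ ℂ be open, let γ be an admissible path in U with z₀ = γ(0) and z₁ = γ(1). Let ε > 0 be such that B(z₀,ε) ⊆ U, and let δ : [0,1] → B(z₀,ε) be continuous with δ(1) = z₀ and δ(s) ≠ z₁ for all s ∈ [0,1]. Then the concatenation δ·γ (which is an admissible path in U from δ(0) to z₁) is 𝒢-homotopic to some admissible path γ̃ in U with d(γ, γ̃) < ε. -/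
open Set

/-- Concatenation of two paths parametrized by `[0,1]`: traverse `δ`, then `γ`. -/
noncomputable def pathConcat (δ γ : ℝ → ℂ) : ℝ → ℂ :=
  fun s => if s ≤ 1/2 then δ (2*s) else γ (2*s - 1)

/-- Gluing two continuous pieces along a common endpoint. -/
lemma contOn_piece {a b c : ℝ} (hab : a ≤ b) (hbc : b ≤ c) {f g : ℝ → ℂ}
    (hf : ContinuousOn f (Icc a b)) (hg : ContinuousOn g (Icc b c)) (hfg : f b = g b) :
    ContinuousOn (fun s => if s ≤ b then f s else g s) (Icc a c) := by
  have h1 : ContinuousOn (fun s => if s ≤ b then f s else g s) (Icc a b) :=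
    hf.congr (fun x hx => by simp [hx.2])
  have h2 : ContinuousOn (fun s => if s ≤ b then f s else g s) (Icc b c) := by
    refine hg.congr (fun x hx => ?_)
    rcases eq_or_lt_of_le hx.1 with h | h
    · simp [← h, hfg]
    · simp [not_le.2 h]
  intro x hx
  have hsub : Icc a c ⊆ Icc a b ∪ Icc b c := by
    intro y hy; rcases le_total y b with h | h
    · exact Or.inl ⟨hy.1, h⟩
    · exact Or.inr ⟨h, hy.2⟩
  refine ContinuousWithinAt.mono ?_ hsub
  rcases le_total x b with h | h
  · refine ((h1 x ⟨hx.1, h⟩).union ?_)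
    rcases eq_or_lt_of_le h with h' | h'
    · exact h2 x ⟨le_of_eq h'.symm, hx.2⟩
    · exact continuousWithinAt_of_notMem_closure
        (by simp [closure_Icc, hbc]; intro hc; exact absurd hc (not_le.2 h'))
  · refine (ContinuousWithinAt.union ?_ (h2 x ⟨h, hx.2⟩))
    rcases eq_or_lt_of_le h with h' | h'
    · exact h1 x ⟨hx.1, h'.ge⟩
    · exact continuousWithinAt_of_notMem_closure
        (by simp [closure_Icc, hab]; intro _; linarith)

set_option maxHeartbeats 1600000 in
/-- Lemma GammaTop1: prepending a small loop inside `B(γ 0, ε)` avoiding the endpoint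
yields a path 𝒢-homotopic to a path at sup distance `< ε` from `γ`. -/
theorem prepend_small_loop (U : Set ℂ) (hU : IsOpen U)
    (γ : ℝ → ℂ) (hγ : IsAdmissible U γ)
    (ε : ℝ) (hε : 0 < ε) (hball : Metric.ball (γ 0) ε ⊆ U)
    (δ : ℝ → ℂ) (hδc : ContinuousOn δ (Set.Icc 0 1))
    (hδmem : ∀ s ∈ Set.Icc (0:ℝ) 1, δ s ∈ Metric.ball (γ 0) ε)
    (hδ1 : δ 1 = γ 0) (hδne : ∀ s ∈ Set.Icc (0:ℝ) 1, δ s ≠ γ 1) :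
    IsAdmissible U (pathConcat δ γ) ∧
    pathConcat δ γ 0 = δ 0 ∧ pathConcat δ γ 1 = γ 1 ∧
    ∃ γ' : ℝ → ℂ, IsAdmissible U γ' ∧ pathDist γ γ' < ε ∧
      GHomotopic U (pathConcat δ γ) γ' := by
  obtain ⟨hγc, hγU, hγne⟩ := hγ
  -- Part 1: the concatenation is admissible
  have hc1 : pathConcat δ γ 1 = γ 1 := by norm_num [pathConcat]
  have hc0 : pathConcat δ γ 0 = δ 0 := by norm_num [pathConcat]
  have hccont : ContinuousOn (pathConcat δ γ) (Icc 0 1) := by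
    have hf : ContinuousOn (fun s => δ (2*s)) (Icc 0 (1/2)) := by
      refine hδc.comp ((continuous_const.mul continuous_id).continuousOn) ?_
      intro x hx; simp only [mem_Icc] at hx ⊢; constructor <;> linarith
    have hg : ContinuousOn (fun s => γ (2*s - 1)) (Icc (1/2) 1) := by
      refine hγc.comp (((continuous_const.mul continuous_id).sub continuous_const).continuousOn) ?_
      intro x hx; simp only [mem_Icc] at hx ⊢; constructor <;> linarith
    exact contOn_piece (by norm_num) (by norm_num) hf hg (by norm_num [hδ1])
  have hcmem : ∀ s ∈ Icc (0:ℝ) 1, pathConcat δ γ s ∈ U := by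
    intro s hs
    by_cases h : s ≤ 1/2
    · simp only [pathConcat, if_pos h]
      exact hball (hδmem _ ⟨by linarith [hs.1], by linarith⟩)
    · simp only [pathConcat, if_neg h]
      push_neg at h
      exact hγU _ ⟨by linarith, by linarith [hs.2]⟩
  have hcne : ∀ s ∈ Ico (0:ℝ) 1, pathConcat δ γ s ≠ pathConcat δ γ 1 := by
    intro s hs
    rw [hc1]
    by_cases h : s ≤ 1/2
    · simp only [pathConcat, if_pos h]
      exact hδne _ ⟨by linarith [hs.1], by linarith⟩
    · simp only [pathConcat, if_neg h]
      push_neg at h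
      exact hγne _ ⟨by linarith, by linarith [hs.2]⟩
  refine ⟨⟨hccont, hcmem, hcne⟩, hc0, hc1, ?_⟩
  -- Part 2: the choice of `η` and the nearby path `γ'`
  obtain ⟨sM, hsM, hmax⟩ := isCompact_Icc.exists_isMaxOn (nonempty_Icc.2 zero_le_one)
    ((hδc.sub continuousOn_const).norm)
  set M : ℝ := ‖δ sM - γ 0‖ with hMdef
  have hMlt : M < ε := by simpa [Metric.mem_ball, Complex.dist_eq] using hδmem sM hsM
  have hMbound : ∀ s ∈ Icc (0:ℝ) 1, ‖δ s - γ 0‖ ≤ M := fun s hs => hmax hs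
  have hM0 : 0 ≤ M := le_trans (norm_nonneg _) (hMbound 1 (by norm_num))
  obtain ⟨a, ha, hacont⟩ :=
    Metric.continuousWithinAt_iff.1 (hγc 0 (by norm_num)) (ε - M) (by linarith)
  obtain ⟨d, hd, hdcont⟩ := Metric.uniformContinuousOn_iff.1
    (isCompact_Icc.uniformContinuousOn_of_continuous hγc) (ε/2) (by linarith)
  set η : ℝ := min (min (a/2) (d/4)) (1/2) with hηdef
  have hη0 : 0 < η := by positivity
  have hηa : η < a := lt_of_le_of_lt (le_trans (min_le_left _ _) (min_le_left _ _)) (by linarith)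
  have hηd : η ≤ d/4 := le_trans (min_le_left _ _) (min_le_right _ _)
  have hηhalf : η ≤ 1/2 := min_le_right _ _
  have hη1 : η < 1 := by linarith
  have h1η : (0:ℝ) < 1 - η := by linarith
  have hηne : η ≠ 0 := hη0.ne'
  have hne : (1:ℝ)-η ≠ 0 := h1η.ne'
  set γ' : ℝ → ℂ := fun s => if s ≤ η then δ (s/η) else γ ((s-η)/(1-η)) with hγ'def
  have hγ'1 : γ' 1 = γ 1 := by
    simp only [hγ'def, if_neg (not_le.2 hη1)]
    rw [div_self hne]
  -- continuity of γ'
  have hγ'cont : ContinuousOn γ' (Icc 0 1) := by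
    have hf : ContinuousOn (fun s => δ (s/η)) (Icc 0 η) := by
      refine hδc.comp ((continuous_id.div_const _).continuousOn) ?_
      intro x hx; simp only [mem_Icc] at hx ⊢
      exact ⟨div_nonneg hx.1 hη0.le, by rw [div_le_one hη0]; exact hx.2⟩
    have hg : ContinuousOn (fun s => γ ((s-η)/(1-η))) (Icc η 1) := by
      refine hγc.comp (((continuous_id.sub continuous_const).div_const _).continuousOn) ?_
      intro x hx; simp only [mem_Icc] at hx ⊢
      constructor
      · exact div_nonneg (by linarith [hx.1]) h1η.le
      · rw [div_le_one h1η]; linarith [hx.2]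
    have hmatch : δ (η/η) = γ ((η-η)/(1-η)) := by
      rw [div_self hηne, sub_self, zero_div, hδ1]
    simpa only [hγ'def] using contOn_piece hη0.le hη1.le hf hg hmatch
  -- membership of γ'
  have hγ'mem : ∀ s ∈ Icc (0:ℝ) 1, γ' s ∈ U := by
    intro s hs
    by_cases h : s ≤ η
    · simp only [hγ'def, if_pos h]
      exact hball (hδmem _ ⟨div_nonneg hs.1 hη0.le, by rw [div_le_one hη0]; exact h⟩)
    · push_neg at h
      simp only [hγ'def, if_neg (not_le.2 h)]
      refine hγU _ ⟨div_nonneg (by linarith) h1η.le, ?_⟩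
      rw [div_le_one h1η]; linarith [hs.2]
  -- avoidance of the endpoint for γ'
  have hγ'ne : ∀ s ∈ Ico (0:ℝ) 1, γ' s ≠ γ' 1 := by
    intro s hs
    rw [hγ'1]
    by_cases h : s ≤ η
    · simp only [hγ'def, if_pos h]
      exact hδne _ ⟨div_nonneg hs.1 hη0.le, by rw [div_le_one hη0]; exact h⟩
    · push_neg at h
      simp only [hγ'def, if_neg (not_le.2 h)]
      refine hγne _ ⟨div_nonneg (by linarith) h1η.le, ?_⟩
      rw [div_lt_one h1η]; linarith [hs.2]
  -- pointwise distance bound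
  have hpt : ∀ s ∈ Icc (0:ℝ) 1, ‖γ' s - γ s‖ < ε := by
    intro s hs
    by_cases h : s ≤ η
    · simp only [hγ'def, if_pos h]
      have h1 : s/η ∈ Icc (0:ℝ) 1 := ⟨div_nonneg hs.1 hη0.le, by rw [div_le_one hη0]; exact h⟩
      have h2 : ‖δ (s/η) - γ 0‖ ≤ M := hMbound _ h1
      have h3 : dist (γ s) (γ 0) < ε - M :=
        hacont hs (by rw [Real.dist_eq, sub_zero, abs_of_nonneg hs.1]; linarith)
      rw [dist_eq_norm] at h3
      calc ‖δ (s/η) - γ s‖ = ‖(δ (s/η) - γ 0) + (γ 0 - γ s)‖ := by ring_nf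
        _ ≤ ‖δ (s/η) - γ 0‖ + ‖γ 0 - γ s‖ := norm_add_le _ _
        _ < M + (ε - M) := by
            have h4 : ‖γ 0 - γ s‖ = ‖γ s - γ 0‖ := norm_sub_rev _ _
            rw [h4]; linarith
        _ = ε := by ring
    · push_neg at h
      simp only [hγ'def, if_neg (not_le.2 h)]
      set t : ℝ := (s - η)/(1 - η) with htdef
      have ht01 : t ∈ Icc (0:ℝ) 1 := by
        constructor
        · apply div_nonneg (by linarith) (by linarith)
        · rw [div_le_one h1η]; linarith [hs.2]
      have htid : (1 - η) * t = s - η := by rw [mul_comm, div_mul_cancel₀ _ h1η.ne']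
      have hts : dist t s < d := by
        rw [Real.dist_eq, abs_lt]
        constructor <;> nlinarith [hs.1, hs.2]
      have h5 := hdcont t ht01 s hs hts
      rw [dist_eq_norm] at h5
      linarith
  -- the sup distance bound
  have hdist : pathDist γ γ' < ε := by
    obtain ⟨s0, hs0, hmax'⟩ := isCompact_Icc.exists_isMaxOn (nonempty_Icc.2 zero_le_one)
      (show ContinuousOn (fun s => ‖γ' s - γ s‖) (Icc 0 1) from
        (hγ'cont.sub hγc).norm)
    have hneim : ((fun s => ‖γ' s - γ s‖) '' Icc 0 1).Nonempty :=
      ⟨_, mem_image_of_mem _ (left_mem_Icc.2 zero_le_one)⟩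
    have hle : pathDist γ γ' ≤ ‖γ' s0 - γ s0‖ := by
      refine csSup_le hneim ?_
      rintro b ⟨x, hx, rfl⟩
      exact hmax' hx
    refine lt_of_le_of_lt hle ?_
    exact hpt s0 hs0
  -- Part 3: the homotopy by reparametrization
  refine ⟨γ', ⟨hγ'cont, hγ'mem, hγ'ne⟩, hdist, ?_⟩
  set φ : ℝ → ℝ := fun s => if s ≤ η then s/(2*η) else 1/2 + (s-η)/(2*(1-η)) with hφdef
  have hφcont : Continuous φ := by
    refine Continuous.if_le ?_ ?_ continuous_id continuous_const ?_
    · exact continuous_id.div_const _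
    · exact continuous_const.add ((continuous_id.sub continuous_const).div_const _)
    · intro x hx; rw [hx]; rw [div_eq_iff (by positivity)]; ring
  have hφ0 : φ 0 = 0 := by simp [hφdef, hη0.le]
  have hφ1 : φ 1 = 1 := by
    simp only [hφdef, if_neg (not_le.2 hη1)]
    field_simp
    ring
  have hφmem : ∀ s ∈ Icc (0:ℝ) 1, φ s ∈ Icc (0:ℝ) 1 := by
    intro s hs
    by_cases h : s ≤ η
    · simp only [hφdef, if_pos h]
      constructor
      · exact div_nonneg hs.1 (by positivity)
      · rw [div_le_one (by positivity)]; linarith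
    · push_neg at h
      simp only [hφdef, if_neg (not_le.2 h)]
      constructor
      · have : (0:ℝ) ≤ (s-η)/(2*(1-η)) := div_nonneg (by linarith) (by linarith)
        linarith
      · have : (s-η)/(2*(1-η)) ≤ 1/2 := by
          rw [div_le_iff₀ (by linarith)]; linarith [hs.2]
        linarith
  have hφlt : ∀ s ∈ Ico (0:ℝ) 1, φ s < 1 := by
    intro s hs
    by_cases h : s ≤ η
    · simp only [hφdef, if_pos h]
      have : s/(2*η) ≤ 1/2 := by rw [div_le_iff₀ (by positivity)]; linarith
      linarith
    · push_neg at h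
      simp only [hφdef, if_neg (not_le.2 h)]
      have : (s-η)/(2*(1-η)) < 1/2 := by
        rw [div_lt_iff₀ (by linarith)]; linarith [hs.2]
      linarith
  set ψ : ℝ → ℝ → ℝ := fun s u => (1-u)*s + u * φ s with hψdef
  have hψmem : ∀ s ∈ Icc (0:ℝ) 1, ∀ u ∈ Icc (0:ℝ) 1, ψ s u ∈ Icc (0:ℝ) 1 := by
    intro s hs u hu
    have h1 := hφmem s hs
    constructor
    · have := mul_nonneg (by linarith [hu.2] : (0:ℝ) ≤ 1-u) hs.1
      have := mul_nonneg hu.1 h1.1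
      simp only [hψdef]; linarith
    · simp only [hψdef]; nlinarith [hu.1, hu.2, hs.2, h1.2]
  have hψlt : ∀ s ∈ Ico (0:ℝ) 1, ∀ u ∈ Icc (0:ℝ) 1, ψ s u < 1 := by
    intro s hs u hu
    have h1 := hφlt s hs
    simp only [hψdef]
    rcases lt_or_eq_of_le hu.2 with h | h
    · nlinarith [mul_pos (sub_pos.2 h) (sub_pos.2 hs.2), mul_nonneg hu.1 (sub_nonneg.2 h1.le)]
    · rw [← h] at h1 ⊢; nlinarith [hs.1]
  refine ⟨fun s u => pathConcat δ γ (ψ s u), ?_, ?_, ?_, ?_, ?_, ?_, ?_⟩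
  · refine hccont.comp ?_ ?_
    · exact (((continuous_const.sub continuous_snd).mul continuous_fst).add
        (continuous_snd.mul (hφcont.comp continuous_fst))).continuousOn
    · rintro ⟨s, u⟩ ⟨hs, hu⟩
      exact hψmem s hs u hu
  · intro s hs u hu; exact hcmem _ (hψmem s hs u hu)
  · intro s hs
    show pathConcat δ γ (ψ s 0) = _
    have h0 : ψ s 0 = s := by simp [hψdef]
    rw [h0]
  · intro s hs
    show pathConcat δ γ (ψ s 1) = _
    have hψ1 : ψ s 1 = φ s := by simp [hψdef]
    rw [hψ1]
    by_cases h : s ≤ η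
    · have hφs : φ s = s/(2*η) := by simp [hφdef, h]
      rw [hφs]
      have hle : s/(2*η) ≤ 1/2 := by
        rw [div_le_iff₀ (by positivity)]; linarith
      simp only [pathConcat, hγ'def, if_pos hle, if_pos h]
      congr 1
      field_simp
    · push_neg at h
      have hφs : φ s = 1/2 + (s-η)/(2*(1-η)) := by simp [hφdef, not_le.2 h]
      rw [hφs]
      have hgt : ¬ (1/2 + (s-η)/(2*(1-η)) ≤ 1/2) := by
        have : (0:ℝ) < (s-η)/(2*(1-η)) := div_pos (by linarith) (by linarith)
        linarith
      simp only [pathConcat, hγ'def, if_neg hgt, if_neg (not_le.2 h)]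
      congr 1
      field_simp
      ring
  · intro u hu
    show pathConcat δ γ (ψ 0 u) = _
    have h0 : ψ 0 u = 0 := by simp [hψdef, hφ0]
    rw [h0]
  · intro u hu
    show pathConcat δ γ (ψ 1 u) = _
    have h0 : ψ 1 u = 1 := by simp [hψdef, hφ1]
    rw [h0]
  · intro s hs u hu
    exact hcne _ ⟨(hψmem s ⟨hs.1, hs.2.le⟩ u hu).1, hψlt s hs u hu⟩
end

section
/- Canonical representative of nearby homotopy classes (Lemma GammaTop3): Let U ⊆ ℂ be open and let γ be an admissible path in U with z₀ = γ(0) and z₁ = γ(1), z₀ ≠ z₁. Then there exists ε > 0 with ε < dist(γ([0,1]), ℂ∖U) and ε < |z₀ − z₁| such that: for every admissible path γ̃ in U with d(γ, γ̃) < ε, every continuous δ : [0,1] → B(z₀,ε) with δ(0) = γ̃(0) and δ(1) = z₀, and every homeomorphism ψ : U → U that equals the identity outside B(z₁,ε) and satisfies ψ(z₁) = γ̃(1), the concatenation δ·(ψ∘γ) is an admissible path in U and is 𝒢-homotopic to γ̃. -/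
open Set Complex

lemma myGlue {X Y : Type*} [TopologicalSpace X] [TopologicalSpace Y] {f : X → Y} {s t : Set X}
    (hs : IsClosed s) (ht : IsClosed t) (hfs : ContinuousOn f s) (hft : ContinuousOn f t) :
    ContinuousOn f (s ∪ t) := by
  intro x hx
  refine ContinuousWithinAt.union ?_ ?_
  · by_cases h : x ∈ s
    · exact hfs x h
    · exact continuousWithinAt_of_notMem_closure (by rwa [hs.closure_eq])
  · by_cases h : x ∈ t
    · exact hft x h
    · exact continuousWithinAt_of_notMem_closure (by rwa [ht.closure_eq])

lemma lift_unique {F G : ℝ → ℂ} {s : Set ℝ} (hc : IsPreconnected s)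
    (hF : ContinuousOn F s) (hG : ContinuousOn G s)
    (hexp : ∀ t ∈ s, Complex.exp (F t) = Complex.exp (G t))
    {x₀ : ℝ} (hx₀ : x₀ ∈ s) (h0 : F x₀ = G x₀) : EqOn F G s := by
  have hπ : (0:ℝ) < 2 * Real.pi := by positivity
  set g : ℝ → ℝ := fun t => (F t - G t).im / (2 * Real.pi) with hg
  have hgc : ContinuousOn g s := (Complex.continuous_im.comp_continuousOn (hF.sub hG)).div_const _
  have hint : ∀ t ∈ s, ∃ n : ℤ, F t - G t = (n:ℂ) * (2 * Real.pi * I) ∧ g t = n := by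
    intro t ht
    obtain ⟨n, hn⟩ := Complex.exp_eq_exp_iff_exists_int.mp (hexp t ht)
    have h1 : F t - G t = (n:ℂ) * (2 * Real.pi * I) := by rw [hn]; ring
    have h1' : F t - G t = ((2 * Real.pi * n : ℝ) : ℂ) * I := by rw [h1]; push_cast; ring
    have h2 : (F t - G t).im = 2 * Real.pi * n := by rw [h1', Complex.mul_I_im, Complex.ofReal_re]
    refine ⟨n, h1, ?_⟩
    simp only [hg, h2]
    field_simp

  have hg0 : g x₀ = 0 := by simp [hg, h0]
  intro t ht
  obtain ⟨n, hn1, hn⟩ := hint t ht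
  have hn0 : n = 0 := by
    by_contra hne
    rcases lt_or_gt_of_ne hne with h | h
    · have hle : (n:ℝ) ≤ -1 := by exact_mod_cast (by omega : n ≤ -1)
      have h1 : (-(1:ℝ)/2) ∈ Icc (g t) (g x₀) := by
        rw [hg0, hn]; constructor <;> linarith
      obtain ⟨t', ht's, ht'⟩ := hc.intermediate_value ht hx₀ hgc h1
      obtain ⟨m, _, hm⟩ := hint t' ht's
      rw [ht'] at hm
      have : (2*m : ℝ) = -1 := by linarith
      have : (2*m : ℤ) = -1 := by exact_mod_cast this
      omega
    · have hle : (1:ℝ) ≤ (n:ℝ) := by exact_mod_cast (by omega : 1 ≤ n)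
      have h1 : ((1:ℝ)/2) ∈ Icc (g x₀) (g t) := by
        rw [hg0, hn]; constructor <;> linarith
      obtain ⟨t', ht's, ht'⟩ := hc.intermediate_value hx₀ ht hgc h1
      obtain ⟨m, _, hm⟩ := hint t' ht's
      rw [ht'] at hm
      have : (2*m : ℝ) = 1 := by linarith
      have : (2*m : ℤ) = 1 := by exact_mod_cast this
      omega
  have : F t - G t = 0 := by rw [hn1, hn0]; simp
  linear_combination this

lemma exists_lift_Icc {f : ℝ → ℂ} {a : ℝ} (ha : 0 ≤ a)
    (hf : ContinuousOn f (Icc 0 a)) (h0 : ∀ t ∈ Icc 0 a, f t ≠ 0) :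
    ∃ F : ℝ → ℂ, ContinuousOn F (Icc 0 a) ∧ (∀ t ∈ Icc 0 a, Complex.exp (F t) = f t)
      ∧ F 0 = Complex.log (f 0) := by
  obtain ⟨tm, htm, hmin⟩ := isCompact_Icc.exists_isMinOn (⟨0, le_refl 0, ha⟩ : (Icc 0 a).Nonempty)
    hf.norm
  set m : ℝ := ‖f tm‖ with hm
  have hmpos : 0 < m := by
    rw [hm, norm_pos_iff]; exact h0 tm htm
  have huc := isCompact_Icc.uniformContinuousOn_of_continuous hf
  rw [Metric.uniformContinuousOn_iff] at huc
  obtain ⟨d, hd, hucd⟩ := huc m hmpos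
  obtain ⟨n, hn⟩ := exists_nat_gt (a / d)
  have hnpos : 0 < (n:ℝ) := lt_of_le_of_lt (div_nonneg ha hd.le) hn
  have hstep : a / n < d := by
    have h1 : a < ↑n * d := (div_lt_iff₀ hd).mp hn
    rw [div_lt_iff₀ hnpos, mul_comm]; exact h1
  have hstep0 : 0 ≤ a / n := div_nonneg ha hnpos.le
  have hratio : ∀ b t : ℝ, b ∈ Icc 0 a → t ∈ Icc 0 a → |t - b| < d →
      ‖f t / f b - 1‖ < 1 ∧ f t / f b ∈ Complex.slitPlane := by
    intro b t hb ht hbt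
    have h1 : ‖f t - f b‖ < m := by
      have := hucd t ht b hb (by rwa [Real.dist_eq])
      rwa [dist_eq_norm] at this
    have hfb : f b ≠ 0 := h0 b hb
    have hmfb : m ≤ ‖f b‖ := hmin hb
    have h2 : ‖f t / f b - 1‖ < 1 := by
      rw [show f t / f b - 1 = (f t - f b) / f b by field_simp, norm_div,
        div_lt_one (norm_pos_iff.mpr hfb)]
      exact lt_of_lt_of_le h1 hmfb
    refine ⟨h2, ?_⟩
    rw [Complex.mem_slitPlane_iff]
    left
    have h3 : |1 - (f t / f b).re| ≤ ‖f t / f b - 1‖ := by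
      rw [show (1:ℝ) - (f t / f b).re = -((f t / f b - 1).re) by simp, abs_neg]
      exact Complex.abs_re_le_norm _
    have h4 := h3.trans_lt h2
    rw [abs_lt] at h4
    linarith [h4.1]
  have main : ∀ i : ℕ, ∃ F : ℝ → ℂ, ContinuousOn F (Icc 0 (min ((i:ℝ)*(a/n)) a)) ∧
      (∀ t ∈ Icc 0 (min ((i:ℝ)*(a/n)) a), Complex.exp (F t) = f t) ∧ F 0 = Complex.log (f 0) := by
    intro i
    induction i with
    | zero =>
      refine ⟨fun _ => Complex.log (f 0), continuousOn_const, ?_, rfl⟩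
      intro t ht
      simp only [Nat.cast_zero, zero_mul, min_eq_left ha] at ht
      have ht0 : t = 0 := le_antisymm ht.2 ht.1
      rw [ht0]
      exact Complex.exp_log (h0 0 ⟨le_refl 0, ha⟩)
    | succ i ih =>
      obtain ⟨F, hFc, hFe, hF0⟩ := ih
      push_cast [Nat.cast_succ]
      set b := min ((i:ℝ)*(a/n)) a with hbdef
      set b' := min (((i:ℕ)+1:ℝ)*(a/n)) a with hb'def
      have hx : (((i:ℕ)+1:ℝ))*(a/n) = (i:ℝ)*(a/n) + a/n := by push_cast; ring
      have hb0 : 0 ≤ b := le_min (by positivity) ha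
      have hbb' : b ≤ b' := min_le_min (by nlinarith) (le_refl a)
      have hb'a : b' ≤ a := min_le_right _ _
      have hba : b ∈ Icc 0 a := ⟨hb0, min_le_right _ _⟩
      have hdiff : b' - b ≤ a / n := by
        rcases le_or_gt ((i:ℝ)*(a/n)) a with h | h
        · have h1 : b = (i:ℝ)*(a/n) := min_eq_left h
          have h2 : b' ≤ (i:ℝ)*(a/n) + a/n := by rw [hb'def, hx]; exact min_le_left _ _
          linarith
        · have h1 : b = a := min_eq_right h.le
          have h2 : b' = a := min_eq_right (by nlinarith)
          rw [h1, h2]; linarith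
      have hsub : Icc b b' ⊆ Icc 0 a := fun t ht => ⟨le_trans hb0 ht.1, le_trans ht.2 hb'a⟩
      have hclose : ∀ t ∈ Icc b b', |t - b| < d := by
        intro t ht
        have h1 : |t - b| = t - b := _root_.abs_of_nonneg (by linarith [ht.1])
        rw [h1]; linarith [ht.2]
      refine ⟨fun t => if t ≤ b then F t else F b + Complex.log (f t / f b), ?_, ?_, ?_⟩
      · have hsplit : Icc 0 b' = Icc 0 b ∪ Icc b b' := (Icc_union_Icc_eq_Icc hb0 hbb').symm
        rw [hsplit]
        apply myGlue isClosed_Icc isClosed_Icc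
        · exact hFc.congr fun t ht => by simp [if_pos ht.2]
        · have h2 : ContinuousOn (fun t => F b + Complex.log (f t / f b)) (Icc b b') := by
            refine continuousOn_const.add ?_
            intro t ht
            exact ((hf.mono hsub).div_const (f b) t ht).clog
              ((hratio b t hba (hsub ht) (hclose t ht)).2)
          refine h2.congr fun t ht => ?_
          by_cases htb : t ≤ b
          · have hteq : t = b := le_antisymm htb ht.1
            rw [if_pos htb, hteq]; beta_reduce; rw [div_self (h0 b hba), Complex.log_one, add_zero]
          · simp [if_neg htb]
      · intro t ht
        by_cases htb : t ≤ b
        · simp only [if_pos htb]; exact hFe t ⟨ht.1, htb⟩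
        · simp only [if_neg htb]
          have htmem : t ∈ Icc b b' := ⟨(not_le.mp htb).le, ht.2⟩
          have hne : f t / f b ≠ 0 := div_ne_zero (h0 t (hsub htmem)) (h0 b hba)
          rw [Complex.exp_add, hFe b ⟨hb0, le_refl b⟩, Complex.exp_log hne]
          rw [mul_comm]
          exact div_mul_cancel₀ _ (h0 b hba)
      · simp only [if_pos hb0]; exact hF0
  obtain ⟨F, hFc, hFe, hF0⟩ := main n
  have : min ((n:ℝ)*(a/n)) a = a := by
    rw [mul_div_cancel₀ a (ne_of_gt hnpos), min_self]
  rw [this] at hFc hFe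
  exact ⟨F, hFc, hFe, hF0⟩


lemma exists_lift_Ico {f : ℝ → ℂ} (hf : ContinuousOn f (Ico 0 1))
    (h0 : ∀ t ∈ Ico 0 1, f t ≠ 0) :
    ∃ D : ℝ → ℂ, ContinuousOn D (Ico 0 1) ∧ (∀ t ∈ Ico 0 1, Complex.exp (D t) = f t) ∧
      D 0 = Complex.log (f 0) := by
  have hsub : ∀ {a : ℝ}, a < 1 → Icc 0 a ⊆ Ico 0 1 := fun h t ht => ⟨ht.1, lt_of_le_of_lt ht.2 h⟩
  have hex : ∀ a : ℝ, 0 ≤ a → a < 1 → ∃ F : ℝ → ℂ, ContinuousOn F (Icc 0 a) ∧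
      (∀ t ∈ Icc 0 a, Complex.exp (F t) = f t) ∧ F 0 = Complex.log (f 0) :=
    fun a ha0 ha1 => exists_lift_Icc ha0 (hf.mono (hsub ha1)) (fun t ht => h0 t (hsub ha1 ht))
  set L : ℝ → ℝ → ℂ := fun a => if h : 0 ≤ a ∧ a < 1 then (hex a h.1 h.2).choose else 0 with hL
  have hLspec : ∀ a (h0a : 0 ≤ a) (h1a : a < 1), ContinuousOn (L a) (Icc 0 a) ∧
      (∀ t ∈ Icc 0 a, Complex.exp (L a t) = f t) ∧ L a 0 = Complex.log (f 0) := by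
    intro a h0a h1a
    have : L a = (hex a h0a h1a).choose := by rw [hL]; simp [h0a, h1a]
    rw [this]
    exact (hex a h0a h1a).choose_spec
  have hagree : ∀ a a' (h0a : 0 ≤ a) (h1a : a < 1) (h0a' : 0 ≤ a') (h1a' : a' < 1),
      a ≤ a' → EqOn (L a) (L a') (Icc 0 a) := by
    intro a a' h0a h1a h0a' h1a' haa'
    obtain ⟨hc, he, h00⟩ := hLspec a h0a h1a
    obtain ⟨hc', he', h00'⟩ := hLspec a' h0a' h1a'
    refine lift_unique isPreconnected_Icc hc (hc'.mono (Icc_subset_Icc_right haa')) ?_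
      (⟨le_refl 0, h0a⟩ : (0:ℝ) ∈ Icc 0 a) (by rw [h00, h00'])
    intro t ht
    rw [he t ht, he' t (Icc_subset_Icc_right haa' ht)]
  refine ⟨fun t => L ((1+t)/2) t, ?_, ?_, ?_⟩
  · intro t₀ ht₀
    set c : ℝ := (1+t₀)/2 with hc
    have hc0 : 0 ≤ c := by simp only [hc]; linarith [ht₀.1]
    have hc1 : c < 1 := by simp only [hc]; linarith [ht₀.2]
    have ht₀c : t₀ < c := by simp only [hc]; linarith [ht₀.2]
    have heq : ∀ t ∈ Ico 0 1 ∩ Iic c, L ((1+t)/2) t = L c t := by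
      intro t ⟨ht, htc⟩
      have h0t : 0 ≤ (1+t)/2 := by linarith [ht.1]
      have h1t : (1+t)/2 < 1 := by linarith [ht.2]
      have htmem : t ≤ (1+t)/2 := by linarith [ht.2]
      rcases le_or_gt ((1+t)/2) c with h | h
      · exact hagree _ c h0t h1t hc0 hc1 h ⟨ht.1, htmem⟩
      · exact (hagree c _ hc0 hc1 h0t h1t h.le ⟨ht.1, htc.out⟩).symm
    have hmem : Ico 0 1 ∩ Iic c ∈ nhdsWithin t₀ (Ico 0 1) :=
      Filter.inter_mem self_mem_nhdsWithin
        (mem_nhdsWithin_of_mem_nhds (Iic_mem_nhds ht₀c))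
    have hsub2 : Ico 0 1 ∩ Iic c ⊆ Icc 0 c := fun t ht => ⟨ht.1.1, ht.2.out⟩
    have hcw : ContinuousWithinAt (L c) (Ico 0 1 ∩ Iic c) t₀ :=
      ((hLspec c hc0 hc1).1.mono hsub2) t₀ ⟨ht₀, ht₀c.le⟩
    exact ((hcw.congr heq (heq t₀ ⟨ht₀, ht₀c.le⟩)).mono_of_mem_nhdsWithin hmem)
  · intro t ht
    have h0t : 0 ≤ (1+t)/2 := by linarith [ht.1]
    have h1t : (1+t)/2 < 1 := by linarith [ht.2]
    exact (hLspec _ h0t h1t).2.1 t ⟨ht.1, by linarith [ht.2]⟩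
  · have := (hLspec (1/2) (by norm_num) (by norm_num)).2.2
    simpa using this


lemma exp_interp_bound {x y r : ℝ} (hx : 0 < x) (hxy : x * Real.exp r = y) {v : ℝ}
    (hv0 : 0 ≤ v) (hv1 : v ≤ 1) : x * Real.exp (v*r) ≤ max x y := by
  rcases le_or_gt r 0 with h | h
  · have h1 : v * r ≤ 0 := mul_nonpos_of_nonneg_of_nonpos hv0 h
    have h2 : Real.exp (v*r) ≤ 1 := Real.exp_le_one_iff.mpr h1
    have : x * Real.exp (v*r) ≤ x := by nlinarith
    exact this.trans (le_max_left _ _)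
  · have hvr : v * r ≤ r := by nlinarith
    have h2 : Real.exp (v*r) ≤ Real.exp r := Real.exp_le_exp.mpr hvr
    have : x * Real.exp (v*r) ≤ y := by nlinarith
    exact this.trans (le_max_right _ _)

lemma comb_abs_le (a b z : ℂ) (μ : ℝ) (h0 : 0 ≤ μ) (h1 : μ ≤ 1) :
    ‖(1-(μ:ℂ))*a + (μ:ℂ)*b - z‖ ≤
      (1-μ)*‖a - z‖ + μ*‖b - z‖ := by
  have he : (1-(μ:ℂ))*a + (μ:ℂ)*b - z = (1-(μ:ℂ))*(a - z) + (μ:ℂ)*(b - z) := by ring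
  rw [he]
  refine (norm_add_le _ _).trans (le_of_eq ?_)
  rw [norm_mul, norm_mul]
  have h2 : ‖1-(μ:ℂ)‖ = 1 - μ := by
    rw [show (1-(μ:ℂ)) = (((1-μ:ℝ)):ℂ) by push_cast; ring, Complex.norm_real, Real.norm_eq_abs]
    exact _root_.abs_of_nonneg (by linarith)
  have h3 : ‖(μ:ℂ)‖ = μ := by
    rw [Complex.norm_real, Real.norm_eq_abs]; exact _root_.abs_of_nonneg h0
  rw [h2, h3]

set_option maxHeartbeats 1000000 in
/-- Lemma GammaTop3: canonical representative of nearby homotopy classes. For ε small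
enough, any admissible path `γ'` at sup distance `< ε` from `γ` is 𝒢-homotopic to
`δ·(ψ∘γ)`, for any path `δ` in `B(γ 0, ε)` joining the new start point to `γ 0` and any
homeomorphism `ψ` of the plane, equal to the identity outside `B(γ 1, ε)`, sending
`γ 1` to the new end point. -/
theorem canonical_representative (U : Set ℂ) (hU : IsOpen U)
    (γ : ℝ → ℂ) (hγ : IsAdmissible U γ) (hne : γ 0 ≠ γ 1) :
    ∃ ε > (0:ℝ),
      (∀ s ∈ Set.Icc (0:ℝ) 1, ENNReal.ofReal ε < EMetric.infEdist (γ s) Uᶜ) ∧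
      ε < ‖γ 0 - γ 1‖ ∧
      ∀ γ' : ℝ → ℂ, IsAdmissible U γ' → pathDist γ γ' < ε →
        ∀ δ : ℝ → ℂ, ContinuousOn δ (Set.Icc 0 1) →
          (∀ s ∈ Set.Icc (0:ℝ) 1, δ s ∈ Metric.ball (γ 0) ε) →
          δ 0 = γ' 0 → δ 1 = γ 0 →
          ∀ ψ : ℂ ≃ₜ ℂ, (∀ z ∉ Metric.ball (γ 1) ε, ψ z = z) → ψ (γ 1) = γ' 1 →
            IsAdmissible U (pathConcat δ (fun s => ψ (γ s))) ∧
            GHomotopic U (pathConcat δ (fun s => ψ (γ s))) γ' := by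
  obtain ⟨hγc, hγU, hγne⟩ := hγ
  have himg : IsCompact (γ '' Set.Icc 0 1) := isCompact_Icc.image_of_continuousOn hγc
  have himgU : γ '' Set.Icc 0 1 ⊆ U := by rintro _ ⟨s, hs, rfl⟩; exact hγU s hs
  obtain ⟨d, hd, hdsub⟩ := himg.exists_thickening_subset_open hU himgU
  have hball : ∀ s ∈ Set.Icc (0:ℝ) 1, Metric.ball (γ s) d ⊆ U := fun s hs =>
    (Metric.ball_subset_thickening (mem_image_of_mem γ hs) d).trans hdsub
  set z₀ := γ 0 with hz₀def
  set z₁ := γ 1 with hz₁def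
  -- choose t₁ < 1 with |γ t - z₁| < d/8 on [t₁, 1]
  have hcw1 : ContinuousWithinAt γ (Set.Icc 0 1) 1 := hγc 1 (by norm_num)
  rw [Metric.continuousWithinAt_iff] at hcw1
  obtain ⟨δ₁, hδ₁, hδ₁p⟩ := hcw1 (d/8) (by linarith)
  set t₁ : ℝ := max (1 - δ₁/2) (1/2) with ht₁def
  have ht₁l : (1:ℝ)/2 ≤ t₁ := le_max_right _ _
  have ht₁0 : (0:ℝ) < t₁ := by linarith
  have ht₁1 : t₁ < 1 := by
    apply max_lt (by linarith) (by norm_num)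
  have ht₁p : ∀ t ∈ Set.Icc t₁ 1, ‖γ t - z₁‖ < d/8 := by
    intro t ht
    have h1 : t ∈ Set.Icc (0:ℝ) 1 := ⟨by linarith [ht.1], ht.2⟩
    have h2 : dist t 1 < δ₁ := by
      rw [Real.dist_eq, abs_of_nonpos (by linarith [ht.2])]
      have := le_max_left (1 - δ₁/2) (1/2)
      have h3 : 1 - δ₁/2 ≤ t := le_trans this ht.1
      linarith
    have := hδ₁p h1 h2
    rwa [Complex.dist_eq] at this
  -- choose t₀ < t₁ with |γ t - z₁| < d/4 on [t₀, t₁]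
  have hcw2 : ContinuousWithinAt γ (Set.Icc 0 1) t₁ := hγc t₁ ⟨ht₁0.le, ht₁1.le⟩
  rw [Metric.continuousWithinAt_iff] at hcw2
  obtain ⟨δ₂, hδ₂, hδ₂p⟩ := hcw2 (d/8) (by linarith)
  set t₀ : ℝ := max (t₁ - δ₂/2) (t₁/2) with ht₀def
  have ht₀0 : 0 < t₀ := lt_of_lt_of_le (by linarith) (le_max_right _ _)
  have ht₀1 : t₀ < t₁ := max_lt (by linarith) (by linarith)
  have ht₀p : ∀ t ∈ Set.Icc t₀ t₁, ‖γ t - z₁‖ < d/4 := by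
    intro t ht
    have h1 : t ∈ Set.Icc (0:ℝ) 1 := ⟨by linarith [ht.1], by linarith [ht.2]⟩
    have h2 : dist t t₁ < δ₂ := by
      rw [Real.dist_eq, abs_of_nonpos (by linarith [ht.2])]
      have h3 : t₁ - δ₂/2 ≤ t := le_trans (le_max_left _ _) ht.1
      linarith
    have h4 := hδ₂p h1 h2
    rw [Complex.dist_eq] at h4
    have h5 := ht₁p t₁ ⟨le_refl _, ht₁1.le⟩
    calc ‖γ t - z₁‖ = ‖(γ t - γ t₁) + (γ t₁ - z₁)‖ := by ring_nf
    _ ≤ ‖γ t - γ t₁‖ + ‖γ t₁ - z₁‖ := norm_add_le _ _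
    _ < d/4 := by linarith
  -- minimum distance on [0, t₁]
  have hsub01 : Set.Icc 0 t₁ ⊆ Set.Icc (0:ℝ) 1 := Icc_subset_Icc_right ht₁1.le
  obtain ⟨tc, htc, hctmin⟩ := isCompact_Icc.exists_isMinOn
    (⟨0, le_refl 0, ht₁0.le⟩ : (Set.Icc 0 t₁).Nonempty)
    (continuous_norm.comp_continuousOn (((hγc.mono hsub01)).sub continuousOn_const))
  set c : ℝ := ‖γ tc - z₁‖ with hcdef
  have hc0 : 0 < c := by
    rw [hcdef]
    have : γ tc ≠ z₁ := hγne tc ⟨htc.1, lt_of_le_of_lt htc.2 ht₁1⟩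
    simpa [sub_eq_zero] using this
  have hcmin : ∀ t ∈ Set.Icc 0 t₁, c ≤ ‖γ t - z₁‖ := fun t ht => hctmin ht
  have hcd : c < d/8 := lt_of_le_of_lt (hcmin t₁ ⟨ht₁0.le, le_refl _⟩) (ht₁p t₁ ⟨le_refl _, ht₁1.le⟩)
  -- epsilon
  set ε : ℝ := min c (‖z₀ - z₁‖) / 100 with hεdef
  have habs01 : 0 < ‖z₀ - z₁‖ := by
    simpa [sub_eq_zero] using hne
  have hε : 0 < ε := by
    rw [hεdef]
    have := lt_min hc0 habs01
    positivity
  have hεc : 100 * ε ≤ c := by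
    rw [hεdef]
    have := min_le_left c (‖z₀ - z₁‖)
    linarith
  have hεz : 100 * ε ≤ ‖z₀ - z₁‖ := by
    rw [hεdef]
    have := min_le_right c (‖z₀ - z₁‖)
    linarith
  have hεd : ε < d := by nlinarith
  refine ⟨ε, hε, ?_, ?_, ?_⟩
  · intro s hs
    have h1 : ENNReal.ofReal d ≤ EMetric.infEdist (γ s) Uᶜ := by
      unfold EMetric.infEdist
      rw [EMetric.le_infEdist]
      intro y hy
      by_contra hlt
      push_neg at hlt
      have h2 : dist (γ s) y < d := by
        rw [edist_dist] at hlt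
        exact (ENNReal.ofReal_lt_ofReal_iff_of_nonneg dist_nonneg).mp hlt
      exact hy (hball s hs (Metric.mem_ball'.mpr h2))
    exact lt_of_lt_of_le (by rw [ENNReal.ofReal_lt_ofReal_iff hd]; exact hεd) h1
  · nlinarith
  intro γ' hadm' hdist δ hδc hδball hδ0 hδ1 ψ hψid hψ1
  obtain ⟨hγ'c, hγ'U, hγ'ne⟩ := hadm'
  -- pointwise distance
  have hpw : ∀ t ∈ Set.Icc (0:ℝ) 1, ‖γ' t - γ t‖ < ε := by
    intro t ht
    refine lt_of_le_of_lt ?_ hdist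
    exact le_csSup (isCompact_Icc.bddAbove_image
      (continuous_norm.comp_continuousOn (hγ'c.sub hγc))) (mem_image_of_mem _ ht)
  -- psi facts
  have hψsymm_id : ∀ z ∉ Metric.ball z₁ ε, ψ.symm z = z := by
    intro z hz
    have h1 : ψ.symm z = ψ.symm (ψ z) := by rw [hψid z hz]
    rw [h1, ψ.symm_apply_apply]
  have hψball : ∀ z ∈ Metric.ball z₁ ε, ψ z ∈ Metric.ball z₁ ε := by
    intro z hz
    by_contra h
    have := hψsymm_id (ψ z) h
    rw [ψ.symm_apply_apply] at this
    rw [this] at hz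
    exact h hz
  have hψsymmball : ∀ z ∈ Metric.ball z₁ ε, ψ.symm z ∈ Metric.ball z₁ ε := by
    intro z hz
    by_contra h
    have h2 := hψid (ψ.symm z) h
    rw [ψ.apply_symm_apply] at h2
    rw [h2] at hz
    exact h hz
  have hball0U : Metric.ball z₀ ε ⊆ U := fun w hw =>
    hball 0 (by norm_num) (by rw [← hz₀def]; exact Metric.ball_subset_ball hεd.le hw)
  have hball1U : Metric.ball z₁ ε ⊆ U := fun w hw =>
    hball 1 (by norm_num) (by rw [← hz₁def]; exact Metric.ball_subset_ball hεd.le hw)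
  have hψU : ∀ z, z ∈ U ↔ ψ z ∈ U := by
    intro z
    constructor
    · intro hz
      by_cases h : z ∈ Metric.ball z₁ ε
      · exact hball1U (hψball z h)
      · rwa [hψid z h]
    · intro hz
      by_cases h : z ∈ Metric.ball z₁ ε
      · exact hball1U h
      · rwa [hψid z h] at hz
  -- beta
  set β : ℝ → ℂ := fun t => ψ.symm (γ' t) with hβdef
  have hβc : ContinuousOn β (Set.Icc 0 1) := ψ.symm.continuous.comp_continuousOn hγ'c
  have hβU : ∀ t ∈ Set.Icc (0:ℝ) 1, β t ∈ U := by
    intro t ht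
    by_cases h : γ' t ∈ Metric.ball z₁ ε
    · exact hball1U (hψsymmball _ h)
    · rw [hβdef]; simp only; rw [hψsymm_id _ h]; exact hγ'U t ht
  have hβ1 : β 1 = z₁ := by rw [hβdef]; simp only; rw [← hψ1, ψ.symm_apply_apply]
  have hβne : ∀ t ∈ Set.Ico (0:ℝ) 1, β t ≠ z₁ := by
    intro t ht h
    have : γ' t = ψ z₁ := by rw [← ψ.apply_symm_apply (γ' t)]; rw [hβdef] at h; simp only at h; rw [h]
    rw [hψ1] at this
    exact hγ'ne t ht this
  have hβγ' : ∀ t, ‖β t - γ' t‖ < 2*ε := by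
    intro t
    have hβt : β t = ψ.symm (γ' t) := rfl
    by_cases h : γ' t ∈ Metric.ball z₁ ε
    · have h1 := hψsymmball _ h
      rw [Metric.mem_ball, Complex.dist_eq] at h h1
      rw [hβt]
      calc ‖ψ.symm (γ' t) - γ' t‖ ≤
          ‖ψ.symm (γ' t) - z₁‖ + ‖z₁ - γ' t‖ := norm_sub_le_norm_sub_add_norm_sub _ _ _
      _ = ‖ψ.symm (γ' t) - z₁‖ + ‖γ' t - z₁‖ := by
          rw [norm_sub_rev z₁ (γ' t)]
      _ < 2*ε := by linarith
    · rw [hβt, hψsymm_id _ h]; simpa using hε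
  have hβγ : ∀ t ∈ Set.Icc (0:ℝ) 1, ‖β t - γ t‖ < 3*ε := by
    intro t ht
    have h1 := hβγ' t
    have h2 := hpw t ht
    calc ‖β t - γ t‖ = ‖(β t - γ' t) + (γ' t - γ t)‖ := by ring_nf
    _ ≤ ‖β t - γ' t‖ + ‖γ' t - γ t‖ := norm_add_le _ _
    _ < 3*ε := by linarith
  have hfar : ∀ w, ‖w - z₀‖ < ε → w ∉ Metric.ball z₁ ε := by
    intro w hw hmem
    rw [Metric.mem_ball, Complex.dist_eq] at hmem
    have : ‖z₀ - z₁‖ ≤ ‖w - z₀‖ + ‖w - z₁‖ := by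
      calc ‖z₀ - z₁‖ ≤ ‖z₀ - w‖ + ‖w - z₁‖ :=
            norm_sub_le_norm_sub_add_norm_sub _ _ _
      _ = ‖w - z₀‖ + ‖w - z₁‖ := by rw [norm_sub_rev z₀ w]
    linarith
  have hβ0 : β 0 = γ' 0 := by
    rw [hβdef]; simp only
    exact hψsymm_id _ (hfar _ (hpw 0 (by norm_num)))
  have hψδ : ∀ s ∈ Set.Icc (0:ℝ) 1, ψ (δ s) = δ s := by
    intro s hs
    apply hψid
    apply hfar
    have := hδball s hs
    rwa [Metric.mem_ball, Complex.dist_eq] at this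
  -- the ratio R and its logarithm lift D
  set R : ℝ → ℂ := fun t => (β t - z₁) / (γ t - z₁) with hRdef
  have hγnz : ∀ t ∈ Set.Ico (0:ℝ) 1, γ t - z₁ ≠ 0 := fun t ht => sub_ne_zero.mpr (hγne t ht)
  have hIco01 : Set.Ico (0:ℝ) 1 ⊆ Set.Icc (0:ℝ) 1 := Ico_subset_Icc_self
  have hRc : ContinuousOn R (Set.Ico 0 1) :=
    ((hβc.mono hIco01).sub continuousOn_const).div
      ((hγc.mono hIco01).sub continuousOn_const) hγnz
  have hRne : ∀ t ∈ Set.Ico (0:ℝ) 1, R t ≠ 0 := fun t ht =>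
    div_ne_zero (sub_ne_zero.mpr (hβne t ht)) (hγnz t ht)
  obtain ⟨D, hDc, hDexp, hD0⟩ := exists_lift_Ico hRc hRne
  have hsub0t₁ : Set.Icc 0 t₁ ⊆ Set.Ico (0:ℝ) 1 := fun t ht =>
    ⟨ht.1, lt_of_le_of_lt ht.2 ht₁1⟩
  have hR1 : ∀ t ∈ Set.Icc 0 t₁, ‖R t - 1‖ < 1/2 := by
    intro t ht
    have h1 : R t - 1 = (β t - γ t) / (γ t - z₁) := by
      rw [hRdef]; simp only
      rw [div_sub_one (hγnz t (hsub0t₁ ht))]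
      congr 1
      ring
    rw [h1, norm_div]
    have h2 := hβγ t (hIco01 (hsub0t₁ ht))
    have h3 := hcmin t ht
    rw [div_lt_iff₀ (lt_of_lt_of_le hc0 h3)]
    nlinarith
  have hRre : ∀ t ∈ Set.Icc 0 t₁, 0 < (R t).re := by
    intro t ht
    have h1 := hR1 t ht
    have h2 : |(R t - 1).re| ≤ ‖R t - 1‖ := Complex.abs_re_le_norm _
    have h3 : (R t - 1).re = (R t).re - 1 := by simp
    rw [h3] at h2
    have h4 := abs_le.mp h2
    linarith [h4.1]
  have hDLog : EqOn D (fun t => Complex.log (R t)) (Set.Icc 0 t₁) := by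
    refine lift_unique isPreconnected_Icc (hDc.mono hsub0t₁) ?_ ?_
      (⟨le_refl 0, ht₁0.le⟩ : (0:ℝ) ∈ Set.Icc 0 t₁) hD0
    · intro t ht
      exact ((hRc.mono hsub0t₁) t ht).clog (Complex.mem_slitPlane_iff.mpr (Or.inl (hRre t ht)))
    · intro t ht
      rw [hDexp t (hsub0t₁ ht), Complex.exp_log (hRne t (hsub0t₁ ht))]
  have hImD : ∀ t ∈ Set.Icc 0 t₁, |(D t).im| < Real.pi/2 := by
    intro t ht
    rw [hDLog ht]
    simp only [Complex.log_im]
    exact Complex.abs_arg_lt_pi_div_two_iff.mpr (Or.inl (hRre t ht))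
  -- cutoff
  set lam : ℝ → ℝ := fun t => max 0 (min 1 ((t - t₀)/(t₁ - t₀))) with hlamdef
  have hlamc : Continuous lam :=
    continuous_const.max (continuous_const.min ((continuous_id.sub continuous_const).div_const _))
  have hlam0 : ∀ t, t ≤ t₀ → lam t = 0 := by
    intro t ht
    rw [hlamdef]; simp only
    rw [max_eq_left]
    exact le_trans (min_le_right _ _) (div_nonpos_of_nonpos_of_nonneg (by linarith) (by linarith))
  have hlam1 : ∀ t, t₁ ≤ t → lam t = 1 := by
    intro t ht
    rw [hlamdef]; simp only
    rw [min_eq_left (by rw [le_div_iff₀ (by linarith)]; linarith), max_eq_right zero_le_one]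
  have hlammem : ∀ t, 0 ≤ lam t ∧ lam t ≤ 1 := by
    intro t
    refine ⟨le_max_left _ _, ?_⟩
    rw [hlamdef]; simp only
    exact max_le (by linarith) (min_le_left _ _)
  -- the tail homotopy K
  set K : ℝ → ℝ → ℂ := fun t v => if t < 1 then
      ((1 - lam t : ℝ) : ℂ) * ((1 - (v:ℂ)) * γ t + (v:ℂ) * β t) +
      ((lam t : ℝ) : ℂ) * (z₁ + (γ t - z₁) * Complex.exp ((v:ℂ) * D t))
    else z₁ with hKdef
  have hK0 : ∀ t ∈ Set.Icc (0:ℝ) 1, K t 0 = γ t := by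
    intro t ht
    rw [hKdef]; simp only
    by_cases h : t < 1
    · rw [if_pos h]
      have h1 : ((0:ℝ):ℂ) * D t = 0 := by push_cast; ring
      rw [h1, Complex.exp_zero]
      push_cast
      ring
    · rw [if_neg h]
      have h3 : t = 1 := le_antisymm ht.2 (not_lt.mp h)
      rw [h3, hz₁def]
  have hK1 : ∀ t ∈ Set.Icc (0:ℝ) 1, K t 1 = β t := by
    intro t ht
    rw [hKdef]; simp only
    by_cases h : t < 1
    · rw [if_pos h]
      have h1 : ((1:ℝ):ℂ) * D t = D t := by push_cast; ring
      rw [h1, hDexp t ⟨ht.1, h⟩]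
      have h2 : (γ t - z₁) * R t = β t - z₁ := by
        rw [hRdef]; simp only
        rw [mul_comm]
        exact div_mul_cancel₀ _ (hγnz t ⟨ht.1, h⟩)
      rw [h2]
      push_cast
      ring
    · rw [if_neg h]
      have h3 : t = 1 := le_antisymm ht.2 (not_lt.mp h)
      rw [h3, hβ1]
  have hKt0 : ∀ v : ℝ, K 0 v = (1 - (v:ℂ)) * z₀ + (v:ℂ) * γ' 0 := by
    intro v
    rw [hKdef]; simp only
    rw [if_pos (by norm_num : (0:ℝ) < 1), hlam0 0 ht₀0.le, hβ0, hz₀def]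
    push_cast
    ring
  have hKt1 : ∀ v : ℝ, K 1 v = z₁ := by
    intro v
    rw [hKdef]; simp only
    rw [if_neg (lt_irrefl 1)]
  have hIcc01mem : ∀ t:ℝ, t ∈ Set.Ico (0:ℝ) 1 → t ∈ Set.Icc (0:ℝ) 1 := fun t ht => hIco01 ht
  -- decomposition of K - z₁
  have hKsub : ∀ t v : ℝ, t < 1 → K t v - z₁ =
      ((1 - lam t : ℝ):ℂ) * ((1 - (v:ℂ)) * γ t + (v:ℂ) * β t - z₁) +
      ((lam t:ℝ):ℂ) * ((γ t - z₁) * Complex.exp ((v:ℂ) * D t)) := by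
    intro t v h
    rw [hKdef]; simp only
    rw [if_pos h]
    push_cast
    ring
  -- X estimate
  have hXest : ∀ t ∈ Set.Icc (0:ℝ) 1, ∀ v ∈ Set.Icc (0:ℝ) 1,
      ‖(1 - (v:ℂ)) * γ t + (v:ℂ) * β t - γ t‖ < 3*ε := by
    intro t ht v hv
    have h1 : (1 - (v:ℂ)) * γ t + (v:ℂ) * β t - γ t = (v:ℂ) * (β t - γ t) := by ring
    rw [h1, norm_mul, Complex.norm_real, Real.norm_eq_abs, _root_.abs_of_nonneg hv.1]
    have h2 := hβγ t ht
    nlinarith [norm_nonneg (β t - γ t), hv.2]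
  -- Y estimate
  have hYest : ∀ t ∈ Set.Ico (0:ℝ) 1, ∀ v ∈ Set.Icc (0:ℝ) 1,
      ‖(γ t - z₁) * Complex.exp ((v:ℂ) * D t)‖ ≤
        max (‖γ t - z₁‖) (‖β t - z₁‖) := by
    intro t ht v hv
    rw [norm_mul, Complex.norm_exp]
    have h2 : ((v:ℂ) * D t).re = v * (D t).re := by
      simp [Complex.re_ofReal_mul]
    rw [h2]
    refine exp_interp_bound (norm_pos_iff.mpr (hγnz t ht)) ?_ hv.1 hv.2
    have h3 : Real.exp ((D t).re) = ‖R t‖ := by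
      rw [← Complex.norm_exp, hDexp t ht]
    rw [h3, hRdef]; simp only [norm_div]
    rw [mul_comm]
    exact div_mul_cancel₀ _ (ne_of_gt (norm_pos_iff.mpr (hγnz t ht)))
  -- avoidance
  have hKne : ∀ t ∈ Set.Ico (0:ℝ) 1, ∀ v ∈ Set.Icc (0:ℝ) 1, K t v ≠ z₁ := by
    intro t ht v hv
    rcases le_or_gt t t₁ with hcase | hcase
    · have htt₁ : t ∈ Set.Icc 0 t₁ := ⟨ht.1, hcase⟩
      have hwne : γ t - z₁ ≠ 0 := hγnz t ht
      have hXre : 0 < (((1 - (v:ℂ)) * γ t + (v:ℂ) * β t - z₁) / (γ t - z₁)).re := by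
        have h1 : ((1 - (v:ℂ)) * γ t + (v:ℂ) * β t - z₁) / (γ t - z₁)
            = (1 - (v:ℂ)) + (v:ℂ) * R t := by
          rw [hRdef]; simp only
          field_simp
          ring
        rw [h1]
        have h2 : ((1 - (v:ℂ)) + (v:ℂ) * R t).re = (1 - v) + v * (R t).re := by
          simp [Complex.add_re, Complex.sub_re, Complex.re_ofReal_mul]
        rw [h2]
        have h3 := hRre t htt₁
        rcases eq_or_lt_of_le hv.1 with h4 | h4
        · rw [← h4]; norm_num
        · nlinarith [hv.2]
      have hYre : 0 < (((γ t - z₁) * Complex.exp ((v:ℂ) * D t)) / (γ t - z₁)).re := by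
        have h1 : ((γ t - z₁) * Complex.exp ((v:ℂ) * D t)) / (γ t - z₁)
            = Complex.exp ((v:ℂ) * D t) := by
          rw [mul_comm]
          exact mul_div_cancel_right₀ _ hwne
        rw [h1, Complex.exp_re]
        have h2 : ((v:ℂ) * D t).re = v * (D t).re := by simp [Complex.re_ofReal_mul]
        have h3 : ((v:ℂ) * D t).im = v * (D t).im := by simp [Complex.im_ofReal_mul]
        rw [h2, h3]
        refine mul_pos (Real.exp_pos _) (Real.cos_pos_of_mem_Ioo ⟨?_, ?_⟩)
        · have h4 := abs_lt.mp (hImD t htt₁)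
          rcases le_or_gt 0 ((D t).im) with h5 | h5
          · nlinarith [mul_nonneg hv.1 h5]
          · nlinarith [mul_nonneg (by linarith [hv.2] : (0:ℝ) ≤ 1 - v)
              (by linarith : (0:ℝ) ≤ -(D t).im)]
        · have h4 := abs_lt.mp (hImD t htt₁)
          rcases le_or_gt 0 ((D t).im) with h5 | h5
          · nlinarith [mul_nonneg (by linarith [hv.2] : (0:ℝ) ≤ 1 - v) h5]
          · nlinarith [mul_nonneg hv.1 (by linarith : (0:ℝ) ≤ -(D t).im)]
      intro hKeq
      have h6 : 0 < ((K t v - z₁) / (γ t - z₁)).re := by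
        rw [hKsub t v ht.2, add_div, mul_div_assoc, mul_div_assoc, Complex.add_re,
          Complex.re_ofReal_mul, Complex.re_ofReal_mul]
        have hl := hlammem t
        nlinarith [hXre, hYre, mul_nonneg (by linarith [hl.2] : (0:ℝ) ≤ 1 - lam t) hXre.le,
          mul_nonneg hl.1 hYre.le, hl.1, hl.2]
      rw [hKeq, sub_self, zero_div] at h6
      simp at h6
    · have hKY : K t v = z₁ + (γ t - z₁) * Complex.exp ((v:ℂ) * D t) := by
        rw [hKdef]; simp only
        rw [if_pos ht.2, hlam1 t hcase.le]
        push_cast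
        ring
      rw [hKY]
      intro hKeq
      have h7 : (γ t - z₁) * Complex.exp ((v:ℂ) * D t) = 0 := by linear_combination hKeq
      exact (mul_ne_zero (hγnz t ht) (Complex.exp_ne_zero _)) h7
  -- membership in U
  have hKU : ∀ t ∈ Set.Icc (0:ℝ) 1, ∀ v ∈ Set.Icc (0:ℝ) 1, K t v ∈ U := by
    intro t ht v hv
    rcases lt_or_eq_of_le ht.2 with h | h
    swap
    · rw [h, hKt1]
      exact hγU 1 (by norm_num)
    have htIco : t ∈ Set.Ico (0:ℝ) 1 := ⟨ht.1, h⟩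
    have hεsmall : 3*ε < d/8 := by nlinarith
    rcases le_or_gt t t₀ with h0 | h0
    · have hKX : K t v = (1 - (v:ℂ)) * γ t + (v:ℂ) * β t := by
        rw [hKdef]; simp only
        rw [if_pos h, hlam0 t h0]
        push_cast
        ring
      apply hball t ht
      rw [Metric.mem_ball, Complex.dist_eq, hKX]
      have := hXest t ht v hv
      linarith
    · -- |K - z₁| < d in both remaining cases
      have hout : ‖K t v - z₁‖ < d := by
        have hγb : ‖γ t - z₁‖ < d/4 := by
          rcases le_or_gt t t₁ with h1 | h1
          · exact ht₀p t ⟨h0.le, h1⟩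
          · have := ht₁p t ⟨h1.le, ht.2⟩
            linarith
        have hβb : ‖β t - z₁‖ < d/4 + 3*ε := by
          have h2 := hβγ t ht
          calc ‖β t - z₁‖ ≤ ‖β t - γ t‖ + ‖γ t - z₁‖ :=
                norm_sub_le_norm_sub_add_norm_sub _ _ _
          _ < d/4 + 3*ε := by linarith
        have hXb : ‖(1 - (v:ℂ)) * γ t + (v:ℂ) * β t - z₁‖ < d/4 + 3*ε := by
          have h3 := hXest t ht v hv
          calc ‖(1 - (v:ℂ)) * γ t + (v:ℂ) * β t - z₁‖
              ≤ ‖(1 - (v:ℂ)) * γ t + (v:ℂ) * β t - γ t‖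
                + ‖γ t - z₁‖ := norm_sub_le_norm_sub_add_norm_sub _ _ _
          _ < d/4 + 3*ε := by linarith
        have hYb : ‖(γ t - z₁) * Complex.exp ((v:ℂ) * D t)‖ < d/4 + 3*ε := by
          refine lt_of_le_of_lt (hYest t htIco v hv) ?_
          rw [max_lt_iff]
          constructor
          · linarith
          · linarith
        rw [hKsub t v h]
        have hl := hlammem t
        calc ‖_‖ ≤
            ‖((1 - lam t : ℝ):ℂ) * ((1 - (v:ℂ)) * γ t + (v:ℂ) * β t - z₁)‖
            + ‖((lam t:ℝ):ℂ) * ((γ t - z₁) * Complex.exp ((v:ℂ) * D t))‖ :=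
            norm_add_le _ _
        _ = (1 - lam t) * ‖(1 - (v:ℂ)) * γ t + (v:ℂ) * β t - z₁‖
            + lam t * ‖(γ t - z₁) * Complex.exp ((v:ℂ) * D t)‖ := by
            rw [norm_mul, norm_mul, Complex.norm_real, Real.norm_eq_abs, Complex.norm_real, Real.norm_eq_abs,
              _root_.abs_of_nonneg (by linarith [hl.2]), _root_.abs_of_nonneg hl.1]
        _ < d := by
            nlinarith [mul_nonneg (by linarith [hl.2] : (0:ℝ) ≤ 1 - lam t)
                (norm_nonneg ((1 - (v:ℂ)) * γ t + (v:ℂ) * β t - z₁)),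
              mul_nonneg hl.1 (norm_nonneg ((γ t - z₁) * Complex.exp ((v:ℂ) * D t))),
              mul_le_mul_of_nonneg_left hXb.le (by linarith [hl.2] : (0:ℝ) ≤ 1 - lam t),
              mul_le_mul_of_nonneg_left hYb.le hl.1]
      apply hball 1 (by norm_num)
      rw [Metric.mem_ball, Complex.dist_eq]
      rw [hz₁def] at hout
      exact hout
  have hKtail : ∀ t v : ℝ, t₁ ≤ t → t < 1 →
      K t v = z₁ + (γ t - z₁) * Complex.exp ((v:ℂ) * D t) := by
    intro t v h1 h2
    rw [hKdef]; simp only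
    rw [if_pos h2, hlam1 t h1]
    push_cast
    ring
  have hKcont : ContinuousOn (fun p : ℝ × ℝ => K p.1 p.2)
      (Set.Icc 0 1 ×ˢ Set.Icc 0 1) := by
    intro p hp
    rcases lt_or_eq_of_le hp.1.2 with h | h
    · set S := (Set.Icc (0:ℝ) 1 ×ˢ Set.Icc (0:ℝ) 1) ∩
        (Set.Iio (1:ℝ) ×ˢ (Set.univ : Set ℝ)) with hS
      have hmemS : p ∈ S := ⟨hp, ⟨h, trivial⟩⟩
      have hSsub1 : ∀ q ∈ S, q.1 ∈ Set.Ico (0:ℝ) 1 := fun q hq => ⟨hq.1.1.1, hq.2.1⟩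
      have hγS : ContinuousOn (fun p : ℝ × ℝ => γ p.1) S :=
        hγc.comp continuous_fst.continuousOn (fun q hq => hIco01 (hSsub1 q hq))
      have hβS : ContinuousOn (fun p : ℝ × ℝ => β p.1) S :=
        hβc.comp continuous_fst.continuousOn (fun q hq => hIco01 (hSsub1 q hq))
      have hDS : ContinuousOn (fun p : ℝ × ℝ => D p.1) S :=
        hDc.comp continuous_fst.continuousOn hSsub1
      have hvS : ContinuousOn (fun p : ℝ × ℝ => ((p.2 : ℝ) : ℂ)) S :=
        (Complex.continuous_ofReal.comp continuous_snd).continuousOn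
      have hlamS : ContinuousOn (fun p : ℝ × ℝ => ((lam p.1 : ℝ) : ℂ)) S :=
        (Complex.continuous_ofReal.comp (hlamc.comp continuous_fst)).continuousOn
      have hlamS' : ContinuousOn (fun p : ℝ × ℝ => ((1 - lam p.1 : ℝ) : ℂ)) S :=
        (Complex.continuous_ofReal.comp
          ((continuous_const.sub hlamc).comp continuous_fst)).continuousOn
      have hFc : ContinuousOn (fun p : ℝ × ℝ =>
          ((1 - lam p.1 : ℝ) : ℂ) * ((1 - (p.2:ℂ)) * γ p.1 + (p.2:ℂ) * β p.1) +
          ((lam p.1 : ℝ) : ℂ) * (z₁ + (γ p.1 - z₁) * Complex.exp ((p.2:ℂ) * D p.1))) S := by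
        refine (hlamS'.mul (((continuousOn_const.sub hvS).mul hγS).add (hvS.mul hβS))).add
          (hlamS.mul (continuousOn_const.add ((hγS.sub continuousOn_const).mul ?_)))
        exact Complex.continuous_exp.comp_continuousOn (hvS.mul hDS)
      have hEq : EqOn (fun p : ℝ × ℝ => K p.1 p.2) (fun p : ℝ × ℝ =>
          ((1 - lam p.1 : ℝ) : ℂ) * ((1 - (p.2:ℂ)) * γ p.1 + (p.2:ℂ) * β p.1) +
          ((lam p.1 : ℝ) : ℂ) * (z₁ + (γ p.1 - z₁) * Complex.exp ((p.2:ℂ) * D p.1))) S := by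
        intro q hq
        simp only
        rw [hKdef]; simp only
        rw [if_pos (show q.1 < 1 from hq.2.1)]
      have hmem : S ∈ nhdsWithin p (Set.Icc (0:ℝ) 1 ×ˢ Set.Icc (0:ℝ) 1) := by
        rw [hS]
        exact Filter.inter_mem self_mem_nhdsWithin (mem_nhdsWithin_of_mem_nhds
          ((isOpen_Iio.prod isOpen_univ).mem_nhds ⟨h, trivial⟩))
      have h1 : ContinuousWithinAt (fun p : ℝ × ℝ => K p.1 p.2) S p :=
        ((hFc p hmemS).congr hEq (hEq hmemS))
      exact h1.mono_of_mem_nhdsWithin hmem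
    · -- p.1 = 1
      have hKp : K p.1 p.2 = z₁ := by rw [h]; exact hKt1 p.2
      rw [ContinuousWithinAt, hKp]
      rw [Metric.tendsto_nhds]
      intro e he
      have hcwγ : ContinuousWithinAt γ (Set.Icc 0 1) 1 := hγc 1 (by norm_num)
      rw [Metric.continuousWithinAt_iff] at hcwγ
      obtain ⟨δ₃, hδ₃, hδ₃p⟩ := hcwγ (e/2) (by linarith)
      have hcwβ : ContinuousWithinAt β (Set.Icc 0 1) 1 := hβc 1 (by norm_num)
      rw [Metric.continuousWithinAt_iff] at hcwβ
      obtain ⟨δ₄, hδ₄, hδ₄p⟩ := hcwβ (e/2) (by linarith)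
      set D₀ : ℝ := min (min δ₃ δ₄) (1 - t₁) with hD₀
      have hD₀pos : 0 < D₀ := by
        apply lt_min (lt_min hδ₃ hδ₄)
        linarith
      rw [Filter.eventually_iff_exists_mem]
      refine ⟨{q : ℝ × ℝ | dist q p < D₀} ∩ (Set.Icc (0:ℝ) 1 ×ˢ Set.Icc (0:ℝ) 1), ?_, ?_⟩
      · exact Filter.inter_mem (mem_nhdsWithin_of_mem_nhds
          (Metric.ball_mem_nhds p hD₀pos)) self_mem_nhdsWithin
      · rintro ⟨t, v⟩ ⟨hqd, hq⟩
        simp only [Set.mem_setOf_eq] at hqd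
        have hqt : dist t 1 < D₀ := by
          have h1 : dist t p.1 ≤ dist (t, v) p := by
            rw [Prod.dist_eq]
            exact le_max_left _ _
          rw [← h] ; exact lt_of_le_of_lt h1 hqd
        have htmem : t ∈ Set.Icc (0:ℝ) 1 := hq.1
        rcases lt_or_eq_of_le htmem.2 with ht1 | ht1
        · have htt₁ : t₁ ≤ t := by
            have h2 : |t - 1| < 1 - t₁ := lt_of_lt_of_le (by rwa [Real.dist_eq] at hqt)
              (le_trans (min_le_right _ _) (le_refl _))
            have h3 := abs_lt.mp h2
            linarith [h3.1]
          have hγb : ‖γ t - z₁‖ < e/2 := by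
            have := hδ₃p htmem (lt_of_lt_of_le hqt (le_trans (min_le_left _ _) (min_le_left _ _)))
            rwa [Complex.dist_eq] at this
          have hβb : ‖β t - z₁‖ < e/2 := by
            have := hδ₄p htmem (lt_of_lt_of_le hqt (le_trans (min_le_left _ _) (min_le_right _ _)))
            rw [Complex.dist_eq] at this
            rwa [hβ1] at this
          rw [hKtail t v htt₁ ht1]
          rw [Complex.dist_eq]
          have h5 : z₁ + (γ t - z₁) * Complex.exp ((v:ℂ) * D t) - z₁ =
              (γ t - z₁) * Complex.exp ((v:ℂ) * D t) := by ring
          rw [h5]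
          have h6 := hYest t ⟨htmem.1, ht1⟩ v hq.2
          rw [max_lt_iff] at *
          calc ‖(γ t - z₁) * Complex.exp ((v:ℂ) * D t)‖ ≤
              max (‖γ t - z₁‖) (‖β t - z₁‖) := h6
          _ < e := by rw [max_lt_iff]; constructor <;> linarith
        · rw [ht1, hKt1, dist_self]
          exact he
  -- facts about σ
  have hψz₀ : ψ z₀ = z₀ := hψid _ (hfar z₀ (by simpa using hε))
  have hσ1 : pathConcat δ (fun s => ψ (γ s)) 1 = ψ z₁ := by
    simp only [pathConcat]
    rw [if_neg (by norm_num : ¬ (1:ℝ) ≤ 1/2)]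
    have h1 : (2*(1:ℝ) - 1) = 1 := by norm_num
    rw [h1, ← hz₁def]
  have hψz₁ball : ψ z₁ ∈ Metric.ball z₁ ε := hψball z₁ (Metric.mem_ball_self hε)
  -- the global homotopy G (before applying ψ)
  set G : ℝ → ℝ → ℂ := fun s u =>
    if u ≤ 1/2 then
      (if s ≤ 1/2 then (1 - ((2*u:ℝ):ℂ)) * δ (2*s) + ((2*u:ℝ):ℂ) * γ' 0
       else K (2*s - 1) (2*u))
    else β ((2 - 2*u) * (max 0 (2*s - 1)) + (2*u - 1) * s) with hGdef
  -- the inner time parameter for the upper part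
  have hτmem : ∀ s ∈ Set.Icc (0:ℝ) 1, ∀ u ∈ Set.Icc (0:ℝ) 1, 1/2 ≤ u →
      ((2 - 2*u) * (max 0 (2*s - 1)) + (2*u - 1) * s) ∈ Set.Icc (0:ℝ) 1 := by
    intro s hs u hu hu2
    have ha0 : 0 ≤ max 0 (2*s - 1) := le_max_left _ _
    have ha1 : max 0 (2*s - 1) ≤ 1 := max_le (by norm_num) (by linarith [hs.2])
    constructor
    · have h1 : 0 ≤ (2 - 2*u) * (max 0 (2*s - 1)) := mul_nonneg (by linarith [hu.2]) ha0
      have h2 : 0 ≤ (2*u - 1) * s := mul_nonneg (by linarith) hs.1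
      linarith
    · have h3 := mul_le_mul_of_nonneg_left ha1 (by linarith [hu.2] : (0:ℝ) ≤ 2 - 2*u)
      have h4 := mul_le_mul_of_nonneg_left hs.2 (by linarith : (0:ℝ) ≤ 2*u - 1)
      linarith
  have hτlt : ∀ s ∈ Set.Ico (0:ℝ) 1, ∀ u ∈ Set.Icc (0:ℝ) 1, ¬(u ≤ 1/2) →
      ((2 - 2*u) * (max 0 (2*s - 1)) + (2*u - 1) * s) < 1 := by
    intro s hs u hu hu2
    push_neg at hu2
    have ha1 : max 0 (2*s - 1) ≤ 1 := max_le (by norm_num) (by linarith [hs.2.le])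
    have h3 := mul_le_mul_of_nonneg_left ha1 (by linarith [hu.2] : (0:ℝ) ≤ 2 - 2*u)
    have h4 : (2*u - 1) * s < (2*u - 1) * 1 :=
      mul_lt_mul_of_pos_left (by linarith [hs.2]) (by linarith)
    linarith
  have hf1ball : ∀ s ∈ Set.Icc (0:ℝ) 1, ∀ u ∈ Set.Icc (0:ℝ) 1, s ≤ 1/2 → u ≤ 1/2 →
      ‖(1 - ((2*u:ℝ):ℂ)) * δ (2*s) + ((2*u:ℝ):ℂ) * γ' 0 - z₀‖ < ε := by
    intro s hs u hu hs2 hu2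
    have h2s : (2*s) ∈ Set.Icc (0:ℝ) 1 := ⟨by linarith [hs.1], by linarith⟩
    have hδb : ‖δ (2*s) - z₀‖ < ε := by
      have := hδball _ h2s
      rwa [Metric.mem_ball, Complex.dist_eq] at this
    have hqb : ‖γ' 0 - z₀‖ < ε := by
      rw [hz₀def]
      exact hpw 0 (by norm_num)
    have hcomb := comb_abs_le (δ (2*s)) (γ' 0) z₀ (2*u) (by linarith [hu.1]) (by linarith)
    refine lt_of_le_of_lt hcomb ?_
    rcases lt_or_eq_of_le hu2 with h | h
    · nlinarith [mul_pos (show (0:ℝ) < 1-2*u by linarith)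
        (show (0:ℝ) < ε - ‖δ (2*s) - z₀‖ by linarith),
        mul_nonneg (show (0:ℝ) ≤ 2*u by linarith [hu.1])
        (show (0:ℝ) ≤ ε - ‖γ' 0 - z₀‖ by linarith)]
    · subst h
      norm_num
      linarith [hqb, hδb]
  have hσadm : IsAdmissible U (pathConcat δ (fun s => ψ (γ s))) := by
    refine ⟨?_, ?_, ?_⟩
    · have hsplit : Set.Icc (0:ℝ) 1 = Set.Icc 0 (1/2) ∪ Set.Icc (1/2) 1 :=
        (Set.Icc_union_Icc_eq_Icc (by norm_num) (by norm_num)).symm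
      rw [hsplit]
      apply myGlue isClosed_Icc isClosed_Icc
      · have h1 : ContinuousOn (fun s : ℝ => δ (2*s)) (Set.Icc 0 (1/2)) :=
          hδc.comp (continuous_const.mul continuous_id).continuousOn
            (fun x hx => ⟨by linarith [hx.1], by linarith [hx.2]⟩)
        refine h1.congr fun s hs => ?_
        simp only [pathConcat]
        rw [if_pos hs.2]
      · have h2 : ContinuousOn (fun s : ℝ => ψ (γ (2*s - 1))) (Set.Icc (1/2) 1) := by
          apply ψ.continuous.comp_continuousOn
          exact hγc.comp ((continuous_const.mul continuous_id).sub continuous_const).continuousOn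
            (fun x hx => ⟨by linarith [hx.1], by linarith [hx.2]⟩)
        refine h2.congr fun s hs => ?_
        simp only [pathConcat]
        by_cases hh : s ≤ 1/2
        · have hs2 : s = 1/2 := le_antisymm hh hs.1
          rw [if_pos hh, hs2]
          norm_num
          rw [hδ1, ← hz₀def]
          exact hψz₀.symm
        · rw [if_neg hh]
    · intro s hs
      simp only [pathConcat]
      split_ifs with hh
      · exact hball0U (hδball _ ⟨by linarith [hs.1], by linarith⟩)
      · push_neg at hh
        exact (hψU _).mp (hγU _ ⟨by linarith, by linarith [hs.2]⟩)
    · intro s hs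
      rw [hσ1]
      simp only [pathConcat]
      split_ifs with hh
      · intro heq
        have h1 : ‖δ (2*s) - z₀‖ < ε := by
          have := hδball _ (⟨by linarith [hs.1], by linarith⟩ : (2*s) ∈ Set.Icc (0:ℝ) 1)
          rwa [Metric.mem_ball, Complex.dist_eq] at this
        exact (hfar _ h1) (heq ▸ hψz₁ball)
      · intro heq
        push_neg at hh
        exact hγne (2*s - 1) ⟨by linarith, by linarith [hs.2]⟩ (ψ.injective heq)
  refine ⟨hσadm, fun s u => ψ (G s u), ?_, ?_, ?_, ?_, ?_, ?_, ?_⟩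
  · -- continuity of the homotopy
    apply ψ.continuous.comp_continuousOn
    have hsq : Set.Icc (0:ℝ) 1 ×ˢ Set.Icc (0:ℝ) 1 =
        ((Set.Icc (0:ℝ) (1/2) ×ˢ Set.Icc (0:ℝ) (1/2)) ∪
          (Set.Icc (1/2) 1 ×ˢ Set.Icc (0:ℝ) (1/2))) ∪
        (Set.Icc (0:ℝ) 1 ×ˢ Set.Icc (1/2) 1) := by
      rw [← Set.union_prod, Set.Icc_union_Icc_eq_Icc (by norm_num) (by norm_num),
        ← Set.prod_union, Set.Icc_union_Icc_eq_Icc (by norm_num) (by norm_num)]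
    rw [hsq]
    apply myGlue (IsClosed.union (isClosed_Icc.prod isClosed_Icc)
      (isClosed_Icc.prod isClosed_Icc)) (isClosed_Icc.prod isClosed_Icc)
    · apply myGlue (isClosed_Icc.prod isClosed_Icc) (isClosed_Icc.prod isClosed_Icc)
      · have hf1 : ContinuousOn (fun q : ℝ×ℝ =>
            (1 - ((2*q.2:ℝ):ℂ)) * δ (2*q.1) + ((2*q.2:ℝ):ℂ) * γ' 0)
            (Set.Icc (0:ℝ) (1/2) ×ˢ Set.Icc (0:ℝ) (1/2)) := by
          have hδq : ContinuousOn (fun q : ℝ×ℝ => δ (2*q.1))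
              (Set.Icc (0:ℝ) (1/2) ×ˢ Set.Icc (0:ℝ) (1/2)) :=
            hδc.comp (continuous_const.mul continuous_fst).continuousOn
              (fun q hq => ⟨by linarith [hq.1.1], by linarith [hq.1.2]⟩)
          have hcast : Continuous (fun q : ℝ×ℝ => ((2*q.2:ℝ):ℂ)) :=
            Complex.continuous_ofReal.comp (continuous_const.mul continuous_snd)
          exact ((continuous_const.sub hcast).continuousOn.mul hδq).add
            (hcast.continuousOn.mul continuousOn_const)
        refine hf1.congr fun q hq => ?_
        rw [hGdef]; simp only
        rw [if_pos hq.2.2, if_pos hq.1.2]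
      · have hmapc : Continuous (fun q : ℝ×ℝ => (2*q.1 - 1, 2*q.2)) :=
          ((continuous_const.mul continuous_fst).sub continuous_const).prodMk
            (continuous_const.mul continuous_snd)
        have hf2 : ContinuousOn (fun q : ℝ×ℝ => K (2*q.1 - 1) (2*q.2))
            (Set.Icc (1/2) 1 ×ˢ Set.Icc (0:ℝ) (1/2)) := by
          refine hKcont.comp hmapc.continuousOn (fun q hq => Set.mk_mem_prod ?_ ?_)
          · exact ⟨by linarith [hq.1.1], by linarith [hq.1.2]⟩
          · exact ⟨by linarith [hq.2.1], by linarith [hq.2.2]⟩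
        refine hf2.congr fun q hq => ?_
        rw [hGdef]; simp only
        rw [if_pos hq.2.2]
        by_cases hh : q.1 ≤ 1/2
        · have hq1 : q.1 = 1/2 := le_antisymm hh hq.1.1
          rw [if_pos hh, hq1]
          have h1 : (2*(1/2:ℝ) - 1) = 0 := by norm_num
          have h2 : (2*(1/2:ℝ)) = 1 := by norm_num
          rw [h1, h2, hδ1, hKt0]
        · rw [if_neg hh]
    · have hinner : Continuous (fun q : ℝ×ℝ =>
          (2 - 2*q.2) * (max 0 (2*q.1 - 1)) + (2*q.2 - 1) * q.1) := by
        apply Continuous.add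
        · exact (continuous_const.sub (continuous_const.mul continuous_snd)).mul
            (continuous_const.max ((continuous_const.mul continuous_fst).sub continuous_const))
        · exact ((continuous_const.mul continuous_snd).sub continuous_const).mul continuous_fst
      have hf3 : ContinuousOn (fun q : ℝ×ℝ =>
          β ((2 - 2*q.2) * (max 0 (2*q.1 - 1)) + (2*q.2 - 1) * q.1))
          (Set.Icc (0:ℝ) 1 ×ˢ Set.Icc (1/2) 1) := by
        refine hβc.comp hinner.continuousOn (fun q hq => ?_)
        exact hτmem q.1 hq.1 q.2 ⟨by linarith [hq.2.1], hq.2.2⟩ hq.2.1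
      refine hf3.congr fun q hq => ?_
      rw [hGdef]; simp only
      by_cases hu : q.2 ≤ 1/2
      · have hu2 : q.2 = 1/2 := le_antisymm hu hq.2.1
        rw [if_pos hu]
        by_cases hh : q.1 ≤ 1/2
        · rw [if_pos hh, hu2]
          have hmax : max 0 (2*q.1 - 1) = 0 := max_eq_left (by linarith)
          rw [hmax]
          norm_num
          exact hβ0.symm
        · rw [if_neg hh, hu2]
          push_neg at hh
          have h2s : (2*q.1 - 1) ∈ Set.Icc (0:ℝ) 1 := ⟨by linarith, by linarith [hq.1.2]⟩
          have hmax : max 0 (2*q.1 - 1) = 2*q.1 - 1 := max_eq_right (by linarith)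
          rw [hmax]
          have h2 : (2*(1/2:ℝ)) = 1 := by norm_num
          rw [h2]
          norm_num
          exact hK1 _ h2s
      · rw [if_neg hu]
  · -- values in U
    intro s hs u hu
    rw [← hψU]
    rw [hGdef]; simp only
    by_cases hu2 : u ≤ 1/2
    · rw [if_pos hu2]
      by_cases hs2 : s ≤ 1/2
      · rw [if_pos hs2]
        apply hball0U
        rw [Metric.mem_ball, Complex.dist_eq]
        exact hf1ball s hs u hu hs2 hu2
      · rw [if_neg hs2]
        push_neg at hs2
        exact hKU _ ⟨by linarith, by linarith [hs.2]⟩ _ ⟨by linarith [hu.1], by linarith⟩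
    · rw [if_neg hu2]
      exact hβU _ (hτmem s hs u hu (by linarith [not_le.mp hu2]))
  · -- u = 0 : starting path
    intro s hs
    rw [hGdef]; simp only [pathConcat]
    rw [if_pos (by norm_num : (0:ℝ) ≤ 1/2)]
    have h0 : (2*(0:ℝ)) = 0 := by norm_num
    by_cases hs2 : s ≤ 1/2
    · rw [if_pos hs2, if_pos hs2]
      have h2 : (1 - ((2*(0:ℝ):ℝ):ℂ)) * δ (2*s) + ((2*(0:ℝ):ℝ):ℂ) * γ' 0 = δ (2*s) := by
        push_cast
        ring
      rw [h2]
      exact hψδ _ ⟨by linarith [hs.1], by linarith⟩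
    · rw [if_neg hs2, if_neg hs2]
      push_neg at hs2
      rw [h0, hK0 _ ⟨by linarith, by linarith [hs.2]⟩]
  · -- u = 1 : target path
    intro s hs
    rw [hGdef]; simp only
    rw [if_neg (by norm_num : ¬(1:ℝ) ≤ 1/2)]
    have h1 : (2 - 2*(1:ℝ)) * (max 0 (2*s - 1)) + (2*(1:ℝ) - 1) * s = s := by norm_num
    rw [h1]
    have hβs : β s = ψ.symm (γ' s) := rfl
    rw [hβs]
    exact ψ.apply_symm_apply (γ' s)
  · -- s = 0 edge
    intro u hu
    have hψq : ψ (γ' 0) = γ' 0 :=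
      hψid _ (hfar _ (by rw [hz₀def]; exact hpw 0 (by norm_num)))
    rw [hGdef]; simp only [pathConcat]
    rw [if_pos (by norm_num : (0:ℝ) ≤ 1/2)]
    have h0 : (2*(0:ℝ)) = 0 := by norm_num
    rw [h0]
    by_cases hu2 : u ≤ 1/2
    · rw [if_pos hu2, if_pos (by norm_num : (0:ℝ) ≤ 1/2)]
      have h2 : (1 - ((2*u:ℝ):ℂ)) * δ 0 + ((2*u:ℝ):ℂ) * γ' 0 = γ' 0 := by
        rw [hδ0]
        push_cast
        ring
      rw [h2, hψq, hδ0]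
    · rw [if_neg hu2]
      have h3 : (2 - 2*u) * (max 0 ((0:ℝ) - 1)) + (2*u - 1) * 0 = 0 := by
        rw [show ((0:ℝ)-1) = -1 by norm_num, max_eq_left (by norm_num : (-1:ℝ) ≤ 0)]
        ring
      rw [h3, hβ0, hψq, if_pos (by norm_num : (0:ℝ) ≤ 1/2), hδ0]
  · -- s = 1 edge
    intro u hu
    rw [hσ1, hGdef]; simp only
    by_cases hu2 : u ≤ 1/2
    · rw [if_pos hu2, if_neg (by norm_num : ¬(1:ℝ) ≤ 1/2)]
      have h1 : (2*(1:ℝ) - 1) = 1 := by norm_num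
      rw [h1, hKt1]
    · rw [if_neg hu2]
      have h2 : (2 - 2*u) * (max 0 (2*(1:ℝ) - 1)) + (2*u - 1) * 1 = 1 := by
        rw [show (2*(1:ℝ)-1) = 1 by norm_num, max_eq_right (by norm_num : (0:ℝ) ≤ 1)]
        ring
      rw [h2, hβ1]
  · -- avoidance
    intro s hs u hu
    rw [hσ1]
    intro heq
    have hGne : G s u ≠ z₁ := by
      rw [hGdef]; simp only
      by_cases hu2 : u ≤ 1/2
      · rw [if_pos hu2]
        by_cases hs2 : s ≤ 1/2
        · rw [if_pos hs2]
          intro h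
          have h1 := hf1ball s (hIco01 hs) u hu hs2 hu2
          rw [h] at h1
          exact (hfar z₁ h1) (Metric.mem_ball_self hε)
        · rw [if_neg hs2]
          push_neg at hs2
          exact hKne _ ⟨by linarith, by linarith [hs.2]⟩ _ ⟨by linarith [hu.1], by linarith⟩
      · rw [if_neg hu2]
        exact hβne _ ⟨(hτmem s (hIco01 hs) u hu (by linarith [not_le.mp hu2])).1,
          hτlt s hs u hu hu2⟩
    exact hGne (ψ.injective heq)
end

section
/- Local L¹ convergence of the piecewise-constant square averages (Lemma mnm): Let μ : ℂ → ℂ be Lebesgue-measurable with essential supremum of |μ| strictly less than 1. For each integer n ≥ 1 define μₙ : ℂ → ℂ by: on each half-open square Q = [i/n,(i+1)/n) × [j/n,(j+1)/n) with integers −n² ≤ i,j ≤ n²−1 (these squares partition [−n,n)²), set μₙ equal to the constant n²·∫_Q μ dLeb, and set μₙ = 0 outside [−n,n)². Then for every compact subset S of ℂ, ∫_S |μₙ − μ| dLeb → 0 as n → ∞. -/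
open MeasureTheory Filter

open Set in
private lemma sq_floor_set_eq (n : ℕ) (hn : 0 < n) (k : ℤ) :
    {x : ℝ | ⌊(n:ℝ) * x⌋ = k} = Set.Ico ((k:ℝ)/n) ((k+1)/n) := by
  have hn' : (0:ℝ) < n := by exact_mod_cast hn
  ext x
  simp only [mem_setOf_eq, mem_Ico, Int.floor_eq_iff, div_le_iff₀ hn', lt_div_iff₀ hn']
  constructor
  · rintro ⟨h1, h2⟩
    refine ⟨by linarith, ?_⟩
    push_cast at h2 ⊢; linarith
  · rintro ⟨h1, h2⟩
    refine ⟨by linarith, ?_⟩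
    push_cast at h2 ⊢; linarith

private lemma sq_measurableSet_rect {A B : Set ℝ} (hA : MeasurableSet A) (hB : MeasurableSet B) :
    MeasurableSet {z : ℂ | z.re ∈ A ∧ z.im ∈ B} :=
  Complex.measurableEquivRealProd.measurable (hA.prod hB)

private lemma sq_volume_rect {A B : Set ℝ} (hA : MeasurableSet A) (hB : MeasurableSet B) :
    volume {z : ℂ | z.re ∈ A ∧ z.im ∈ B} = volume A * volume B := by
  have h : {z : ℂ | z.re ∈ A ∧ z.im ∈ B} = Complex.measurableEquivRealProd ⁻¹' (A ×ˢ B) := rfl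
  rw [h, Complex.volume_preserving_equiv_real_prod.measure_preimage
    (hA.prod hB).nullMeasurableSet]
  rw [MeasureTheory.Measure.volume_eq_prod, MeasureTheory.Measure.prod_prod]

/-- The square of the grid. -/
private def Qset (n : ℕ) (k l : ℤ) : Set ℂ :=
  {w : ℂ | ⌊(n:ℝ) * w.re⌋ = k ∧ ⌊(n:ℝ) * w.im⌋ = l}

private lemma sq_Qset_rect (n : ℕ) (hn : 0 < n) (k l : ℤ) :
    Qset n k l = {z : ℂ | z.re ∈ Set.Ico ((k:ℝ)/n) ((k+1)/n) ∧
      z.im ∈ Set.Ico ((l:ℝ)/n) ((l+1)/n)} := by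
  unfold Qset
  rw [← sq_floor_set_eq n hn k, ← sq_floor_set_eq n hn l]
  rfl

private lemma sq_measurableSet_Qset (n : ℕ) (hn : 0 < n) (k l : ℤ) :
    MeasurableSet (Qset n k l) := by
  rw [sq_Qset_rect n hn k l]
  exact sq_measurableSet_rect measurableSet_Ico measurableSet_Ico

private lemma sq_volume_Qset (n : ℕ) (hn : 0 < n) (k l : ℤ) :
    volume (Qset n k l) = ENNReal.ofReal (1/n) * ENNReal.ofReal (1/n) := by
  rw [sq_Qset_rect n hn k l, sq_volume_rect measurableSet_Ico measurableSet_Ico,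
    Real.volume_Ico, Real.volume_Ico]
  congr 2 <;> field_simp <;> ring

private lemma sq_abs_lt_one_of_floor_eq {a b : ℝ} (h : ⌊a + b⌋ = ⌊a⌋) : |b| < 1 := by
  have h1 := Int.floor_le a
  have h2 := Int.lt_floor_add_one a
  have h3 := Int.floor_le (a + b)
  have h4 := Int.lt_floor_add_one (a + b)
  rw [h] at h3 h4
  rw [abs_lt]
  constructor <;> linarith

private lemma sq_tendsto_translate_L1 (f : ℂ → ℂ) (hf : Integrable f) :
    Tendsto (fun v : ℂ => ∫⁻ z, ‖f (z + v) - f z‖₊) (nhds 0) (nhds 0) := by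
  have hmem : MemLp f 1 volume := memLp_one_iff_integrable.2 hf
  set F : Lp ℂ 1 volume := hmem.toLp f with hF
  have hgm : ∀ v : ℂ, MeasurePreserving (fun z : ℂ => z + v) volume volume :=
    fun v => measurePreserving_add_right volume v
  set g : ℂ → C(ℂ, ℂ) := fun v => ⟨fun z => z + v, continuous_id.add continuous_const⟩ with hg
  have hgc : Continuous g := by
    apply ContinuousMap.continuous_of_continuous_uncurry
    exact continuous_snd.add continuous_fst
  set Φ : ℂ → Lp ℂ 1 volume := fun v => Lp.compMeasurePreserving (g v) (hgm v) F with hΦdef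
  have hΦ : Continuous Φ :=
    Continuous.compMeasurePreservingLp continuous_const hgc _ ENNReal.one_ne_top
  have hnorm : Tendsto (fun v => ‖Φ v - Φ 0‖) (nhds 0) (nhds 0) :=
    tendsto_iff_norm_sub_tendsto_zero.mp (hΦ.tendsto 0)
  have heq : ∀ v : ℂ, (∫⁻ z, ‖f (z + v) - f z‖₊) = ENNReal.ofReal ‖Φ v - Φ 0‖ := by
    intro v
    have e1 : (⇑(Φ v) : ℂ → ℂ) =ᵐ[volume] fun z => f (z + v) :=
      (Lp.coeFn_compMeasurePreserving F (hgm v)).trans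
        ((hgm v).quasiMeasurePreserving.ae_eq_comp (hmem.coeFn_toLp))
    have e0 : (⇑(Φ 0) : ℂ → ℂ) =ᵐ[volume] f := by
      refine ((Lp.coeFn_compMeasurePreserving F (hgm 0)).trans
        ((hgm 0).quasiMeasurePreserving.ae_eq_comp (hmem.coeFn_toLp))).trans ?_
      filter_upwards with z
      simp [Function.comp]
    have e2 : (⇑(Φ v - Φ 0) : ℂ → ℂ) =ᵐ[volume] fun z => f (z + v) - f z := by
      filter_upwards [Lp.coeFn_sub (Φ v) (Φ 0), e1, e0] with z h1 h2 h3
      rw [h1, Pi.sub_apply, h2, h3]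
    rw [show (∫⁻ z, (‖f (z + v) - f z‖₊ : ENNReal)) = ∫⁻ z, ‖f (z + v) - f z‖ₑ from rfl,
      ← eLpNorm_one_eq_lintegral_enorm, ← eLpNorm_congr_ae e2, Lp.norm_def,
      ENNReal.ofReal_toReal (Lp.eLpNorm_ne_top _)]
  rw [funext heq]
  have h4 : Tendsto ENNReal.ofReal (nhds 0) (nhds (ENNReal.ofReal 0)) :=
    ENNReal.continuous_ofReal.tendsto 0
  rw [ENNReal.ofReal_zero] at h4
  exact h4.comp hnorm

private lemma sq_box_measurable (n : ℕ) :
    MeasurableSet {z : ℂ | -(n:ℝ) ≤ z.re ∧ z.re < n ∧ -(n:ℝ) ≤ z.im ∧ z.im < n} :=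
  ((measurableSet_le measurable_const Complex.measurable_re).inter
    ((measurableSet_lt Complex.measurable_re measurable_const).inter
      ((measurableSet_le measurable_const Complex.measurable_im).inter
        (measurableSet_lt Complex.measurable_im measurable_const))))

/-- The piecewise-constant approximation of `μ` of step `1/n`: on each half-open square
`[i/n,(i+1)/n) × [j/n,(j+1)/n)` contained in `[-n,n)²` it is the average of `μ` over the
square, and it vanishes outside `[-n,n)²`. -/
noncomputable def sqApprox (μ : ℂ → ℂ) (n : ℕ) (z : ℂ) : ℂ :=
  if -(n:ℝ) ≤ z.re ∧ z.re < n ∧ -(n:ℝ) ≤ z.im ∧ z.im < n then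
    (n:ℂ)^2 * ∫ w in {w : ℂ | ⌊(n:ℝ) * w.re⌋ = ⌊(n:ℝ) * z.re⌋ ∧
      ⌊(n:ℝ) * w.im⌋ = ⌊(n:ℝ) * z.im⌋}, μ w
  else 0

private lemma sq_sqApprox_measurable (μ : ℂ → ℂ) (n : ℕ) :
    Measurable (sqApprox μ n) := by
  unfold sqApprox
  refine Measurable.ite (sq_box_measurable n) ?_ measurable_const
  have h1 : Measurable fun z : ℂ => (⌊(n:ℝ) * z.re⌋, ⌊(n:ℝ) * z.im⌋) :=
    ((Int.measurable_floor.comp ((measurable_const_mul _).comp Complex.measurable_re)).prodMk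
     (Int.measurable_floor.comp ((measurable_const_mul _).comp Complex.measurable_im)))
  have h2 : Measurable (fun p : ℤ × ℤ => (n:ℂ)^2 * ∫ w in {w : ℂ | ⌊(n:ℝ) * w.re⌋ = p.1 ∧
      ⌊(n:ℝ) * w.im⌋ = p.2}, μ w) := measurable_of_countable _
  have h3 := h2.comp h1
  simpa [Function.comp_def] using h3

/-- Lemma mnm: local `L¹` convergence of the piecewise-constant square averages. -/
theorem sqApprox_tendsto_L1 (μ : ℂ → ℂ) (hmeas : Measurable μ)
    (hbound : eLpNorm μ ⊤ volume < 1) :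
    ∀ S : Set ℂ, IsCompact S →
      Tendsto (fun n : ℕ => ∫ z in S, ‖sqApprox μ n z - μ z‖)
        atTop (nhds 0) := by
  intro S hS
  obtain ⟨R, hRS⟩ := hS.isBounded.subset_closedBall 0
  have hSm : MeasurableSet S := hS.isClosed.measurableSet
  -- a.e. bound on μ
  have hae : ∀ᵐ z : ℂ, ‖μ z‖ ≤ 1 := by
    have h := ae_le_essSup (μ := volume) (f := fun z : ℂ => (‖μ z‖₊ : ENNReal))
    rw [eLpNorm_exponent_top, eLpNormEssSup] at hbound
    filter_upwards [h] with z hz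
    have h2 : (‖μ z‖₊ : ENNReal) ≤ 1 := hz.trans hbound.le
    have h3 : ‖μ z‖₊ ≤ 1 := by exact_mod_cast h2
    exact_mod_cast h3
  -- integrability on finite-measure sets
  have hint : ∀ t : Set ℂ, MeasurableSet t → volume t < ⊤ → IntegrableOn μ t volume := by
    intro t ht htv
    refine Integrable.mono' (g := fun _ => (1:ℝ))
      (integrableOn_const htv.ne) hmeas.aestronglyMeasurable.restrict ?_
    exact ae_restrict_of_ae hae
  -- the localized version of μ
  set f : ℂ → ℂ := (Metric.closedBall (0:ℂ) (R+2)).indicator μ with hfdef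
  have hfi : Integrable f := by
    rw [hfdef, integrable_indicator_iff measurableSet_closedBall]
    exact hint _ measurableSet_closedBall (isCompact_closedBall (0:ℂ) (R+2)).measure_lt_top
  have hT := sq_tendsto_translate_L1 f hfi
  -- key lintegral convergence
  have key : Tendsto (fun n : ℕ => ∫⁻ z in S, (‖sqApprox μ n z - μ z‖₊ : ENNReal))
      atTop (nhds 0) := by
    rw [ENNReal.tendsto_nhds_zero]
    intro ε hε
    obtain ⟨r, hr0, hrε⟩ : ∃ r : ℝ, 0 < r ∧ ENNReal.ofReal r ≤ ε / 4 := by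
      rcases eq_or_ne (ε / 4) ⊤ with h | h
      · exact ⟨1, one_pos, by simp [h]⟩
      · refine ⟨(ε/4).toReal, ?_, by rw [ENNReal.ofReal_toReal h]⟩
        refine ENNReal.toReal_pos ?_ h
        simp only [ne_eq, ENNReal.div_eq_zero_iff]
        push_neg
        exact ⟨hε.ne', by norm_num⟩
    have hev : ∀ᶠ v : ℂ in nhds 0, (∫⁻ z, ‖f (z + v) - f z‖₊) ≤ ENNReal.ofReal r :=
      hT.eventually (eventually_le_nhds (by simpa using ENNReal.ofReal_pos.2 hr0))
    obtain ⟨δ, hδ0, hδ⟩ := Metric.eventually_nhds_iff.mp hev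
    obtain ⟨N, hN⟩ := exists_nat_gt (max (max R 2) (2/δ))
    filter_upwards [eventually_ge_atTop N] with n hn
    have hnN : (N:ℝ) ≤ n := by exact_mod_cast hn
    have hn2 : (2:ℝ) < n := lt_of_le_of_lt (le_max_right R 2) ((le_max_left _ _).trans_lt (hN.trans_le hnN))
    have hnR : R < (n:ℝ) := lt_of_le_of_lt (le_max_left R 2) ((le_max_left _ _).trans_lt (hN.trans_le hnN))
    have hnδ : 2/δ < (n:ℝ) := (le_max_right _ _).trans_lt (hN.trans_le hnN)
    have hn0 : 0 < n := by exact_mod_cast (by linarith : (0:ℝ) < n)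
    have hn0' : (0:ℝ) < n := by exact_mod_cast hn0
    have h2nδ : 2/(n:ℝ) < δ := by
      rw [div_lt_iff₀ hn0']
      rw [div_lt_iff₀ hδ0] at hnδ
      linarith [mul_comm δ (n:ℝ)]
    have h2n1 : 2/(n:ℝ) ≤ 1 := by rw [div_le_one hn0']; linarith
    -- the kernel
    set K : ℂ × ℂ → ENNReal := fun p =>
      if ⌊(n:ℝ)*p.2.re⌋ = ⌊(n:ℝ)*p.1.re⌋ ∧ ⌊(n:ℝ)*p.2.im⌋ = ⌊(n:ℝ)*p.1.im⌋
      then (‖μ p.2 - μ p.1‖₊ : ENNReal) else 0 with hKdef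
    have hKapp : ∀ a b : ℂ, K (a, b) =
        if ⌊(n:ℝ)*b.re⌋ = ⌊(n:ℝ)*a.re⌋ ∧ ⌊(n:ℝ)*b.im⌋ = ⌊(n:ℝ)*a.im⌋
        then (‖μ b - μ a‖₊ : ENNReal) else 0 := fun a b => rfl
    have hKmeas : Measurable K := by
      refine Measurable.ite ?_ ?_ measurable_const
      · refine MeasurableSet.inter ?_ ?_
        · exact measurableSet_eq_fun
            (Int.measurable_floor.comp ((measurable_const_mul _).comp
              (Complex.measurable_re.comp measurable_snd)))
            (Int.measurable_floor.comp ((measurable_const_mul _).comp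
              (Complex.measurable_re.comp measurable_fst)))
        · exact measurableSet_eq_fun
            (Int.measurable_floor.comp ((measurable_const_mul _).comp
              (Complex.measurable_im.comp measurable_snd)))
            (Int.measurable_floor.comp ((measurable_const_mul _).comp
              (Complex.measurable_im.comp measurable_fst)))
      · exact ((hmeas.comp measurable_snd).sub (hmeas.comp measurable_fst)).enorm
    -- pointwise representation on squares
    have hB : ∀ z : ℂ, (∫⁻ w in Qset n ⌊(n:ℝ)*z.re⌋ ⌊(n:ℝ)*z.im⌋, (‖μ w - μ z‖₊ : ENNReal))
        = ∫⁻ v, K (z, z + v) := by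
      intro z
      have hind : ∀ w : ℂ, K (z, w)
          = (Qset n ⌊(n:ℝ)*z.re⌋ ⌊(n:ℝ)*z.im⌋).indicator (fun w => (‖μ w - μ z‖₊ : ENNReal)) w := by
        intro w
        by_cases h : w ∈ Qset n ⌊(n:ℝ)*z.re⌋ ⌊(n:ℝ)*z.im⌋
        · rw [Set.indicator_of_mem h, hKapp, if_pos (by exact h)]
        · rw [Set.indicator_of_notMem h, hKapp, if_neg (by exact h)]
      have h1 := lintegral_add_left_eq_self (μ := volume) (fun w => K (z, w)) z
      calc (∫⁻ w in Qset n ⌊(n:ℝ)*z.re⌋ ⌊(n:ℝ)*z.im⌋, (‖μ w - μ z‖₊ : ENNReal))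
          = ∫⁻ w, (Qset n ⌊(n:ℝ)*z.re⌋ ⌊(n:ℝ)*z.im⌋).indicator
              (fun w => (‖μ w - μ z‖₊ : ENNReal)) w :=
            (lintegral_indicator (sq_measurableSet_Qset n hn0 _ _) _).symm
        _ = ∫⁻ w, K (z, w) := by
            refine lintegral_congr fun w => ?_
            rw [hind w]
        _ = ∫⁻ v, K (z, z + v) := h1.symm
    -- step A : pointwise bound
    have hA : ∀ z ∈ S, (‖sqApprox μ n z - μ z‖₊ : ENNReal) ≤
        (n : ENNReal)^2 * ∫⁻ v, K (z, z + v) := by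
      intro z hz
      have hzR : ‖z‖ ≤ R := by simpa using hRS hz
      have hre : |z.re| ≤ R := (Complex.abs_re_le_norm z).trans hzR
      have him : |z.im| ≤ R := (Complex.abs_im_le_norm z).trans hzR
      rw [abs_le] at hre him
      have hbox : -(n:ℝ) ≤ z.re ∧ z.re < n ∧ -(n:ℝ) ≤ z.im ∧ z.im < n :=
        ⟨by linarith [hre.1], by linarith [hre.2], by linarith [him.1], by linarith [him.2]⟩
      set k := ⌊(n:ℝ)*z.re⌋ with hk
      set l := ⌊(n:ℝ)*z.im⌋ with hl
      have hQv : volume (Qset n k l) = ENNReal.ofReal (1/n) * ENNReal.ofReal (1/n) :=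
        sq_volume_Qset n hn0 k l
      have hQfin : volume (Qset n k l) < ⊤ := by
        rw [hQv]
        exact ENNReal.mul_lt_top ENNReal.ofReal_lt_top ENNReal.ofReal_lt_top
      have hμint : IntegrableOn μ (Qset n k l) volume :=
        hint _ (sq_measurableSet_Qset n hn0 k l) hQfin
      have hconst_int : IntegrableOn (fun _ : ℂ => μ z) (Qset n k l) volume :=
        integrableOn_const hQfin.ne
      have hμz : (n:ℂ)^2 * ∫ _ in Qset n k l, μ z = μ z := by
        rw [setIntegral_const, measureReal_def, hQv, ENNReal.toReal_mul,
          ENNReal.toReal_ofReal (by positivity), Complex.real_smul]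
        have hnc : (n:ℂ) ≠ 0 := by exact_mod_cast hn0'.ne'
        push_cast
        field_simp
      have hsub : (∫ w in Qset n k l, (μ w - μ z))
          = (∫ w in Qset n k l, μ w) - ∫ _ in Qset n k l, μ z :=
        integral_sub hμint hconst_int
      have hrepr : sqApprox μ n z - μ z = (n:ℂ)^2 * ∫ w in Qset n k l, (μ w - μ z) := by
        have hup : sqApprox μ n z = (n:ℂ)^2 * ∫ w in Qset n k l, μ w := by
          rw [sqApprox, if_pos hbox]
          rfl
        rw [hup, hsub, mul_sub, hμz]
      rw [hrepr, ← hB z]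
      calc (‖(n:ℂ)^2 * ∫ w in Qset n k l, (μ w - μ z)‖₊ : ENNReal)
          = (n : ENNReal)^2 * (‖∫ w in Qset n k l, (μ w - μ z)‖₊ : ENNReal) := by
            rw [nnnorm_mul, ENNReal.coe_mul, nnnorm_pow]
            norm_num
        _ ≤ (n : ENNReal)^2 * ∫⁻ w in Qset n k l, (‖μ w - μ z‖₊ : ENNReal) :=
            mul_le_mul_right (enorm_integral_le_lintegral_enorm _) _
    -- the small box of translations
    set V : Set ℂ := {v : ℂ | |v.re| < 1/(n:ℝ) ∧ |v.im| < 1/(n:ℝ)} with hVdef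
    have hVrect : V = {v : ℂ | v.re ∈ Set.Ioo (-(1/(n:ℝ))) (1/n) ∧
        v.im ∈ Set.Ioo (-(1/(n:ℝ))) (1/n)} := by
      ext v
      simp [hVdef, abs_lt]
    have hVm : MeasurableSet V := by
      rw [hVrect]; exact sq_measurableSet_rect measurableSet_Ioo measurableSet_Ioo
    have hVvol : volume V = ENNReal.ofReal (2/n) * ENNReal.ofReal (2/n) := by
      rw [hVrect, sq_volume_rect measurableSet_Ioo measurableSet_Ioo, Real.volume_Ioo]
      congr 2 <;> ring
    -- step C : bound for each v
    have hC : ∀ v : ℂ, (∫⁻ z in S, K (z, z + v)) ≤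
        V.indicator (fun _ => ENNReal.ofReal r) v := by
      intro v
      by_cases hv : v ∈ V
      · rw [Set.indicator_of_mem hv]
        obtain ⟨hv1, hv2⟩ := hv
        have hvnorm : ‖v‖ < 2/(n:ℝ) := by
          calc ‖v‖ ≤ |v.re| + |v.im| := Complex.norm_le_abs_re_add_abs_im v
            _ < 1/(n:ℝ) + 1/n := add_lt_add hv1 hv2
            _ = 2/n := by ring
        have hstep : (∫⁻ z in S, K (z, z + v)) ≤ ∫⁻ z in S, (‖f (z + v) - f z‖₊ : ENNReal) := by
          refine lintegral_mono_ae ((ae_restrict_iff' hSm).2 (Filter.Eventually.of_forall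
            fun z hz => ?_))
          have hzR : ‖z‖ ≤ R := by simpa using hRS hz
          have hfz : f z = μ z := by
            rw [hfdef, Set.indicator_of_mem]
            simp only [Metric.mem_closedBall, dist_zero_right]
            linarith
          have hfzv : f (z + v) = μ (z + v) := by
            rw [hfdef, Set.indicator_of_mem]
            simp only [Metric.mem_closedBall, dist_zero_right]
            calc ‖z + v‖ ≤ ‖z‖ + ‖v‖ := norm_add_le z v
              _ ≤ R + 2 := by
                  have : ‖v‖ ≤ 1 := le_of_lt (hvnorm.trans_le h2n1)
                  linarith
          rw [hfz, hfzv, hKapp]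
          split_ifs with h
          · exact le_refl _
          · exact zero_le
        refine hstep.trans ?_
        refine (setLIntegral_le_lintegral S _).trans ?_
        refine hδ ?_
        rw [dist_zero_right]
        linarith
      · have hzero : ∀ z : ℂ, K (z, z + v) = 0 := by
          intro z
          rw [hKapp]
          rw [if_neg]
          rintro ⟨h1, h2⟩
          refine hv ⟨?_, ?_⟩
          · have h1' : ⌊(n:ℝ)*z.re + (n:ℝ)*v.re⌋ = ⌊(n:ℝ)*z.re⌋ := by
              rw [← mul_add]
              simpa [Complex.add_re] using h1
            have := sq_abs_lt_one_of_floor_eq h1'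
            rw [abs_mul, abs_of_pos hn0'] at this
            rw [lt_div_iff₀ hn0']
            linarith [this]
          · have h2' : ⌊(n:ℝ)*z.im + (n:ℝ)*v.im⌋ = ⌊(n:ℝ)*z.im⌋ := by
              rw [← mul_add]
              simpa [Complex.add_im] using h2
            have := sq_abs_lt_one_of_floor_eq h2'
            rw [abs_mul, abs_of_pos hn0'] at this
            rw [lt_div_iff₀ hn0']
            linarith [this]
        simp only [hzero]
        simp
    -- assemble
    have hswap : (∫⁻ z in S, ∫⁻ v, K (z, z + v)) = ∫⁻ v, ∫⁻ z in S, K (z, z + v) := by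
      refine lintegral_lintegral_swap ?_
      exact (hKmeas.comp (measurable_fst.prodMk (measurable_fst.add measurable_snd))).aemeasurable
    calc (∫⁻ z in S, (‖sqApprox μ n z - μ z‖₊ : ENNReal))
        ≤ ∫⁻ z in S, (n : ENNReal)^2 * ∫⁻ v, K (z, z + v) :=
          lintegral_mono_ae ((ae_restrict_iff' hSm).2 (Filter.Eventually.of_forall hA))
      _ = (n : ENNReal)^2 * ∫⁻ z in S, ∫⁻ v, K (z, z + v) :=
          lintegral_const_mul' _ _ (by simp)
      _ = (n : ENNReal)^2 * ∫⁻ v, ∫⁻ z in S, K (z, z + v) := by rw [hswap]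
      _ ≤ (n : ENNReal)^2 * ∫⁻ v, V.indicator (fun _ => ENNReal.ofReal r) v :=
          mul_le_mul_right (lintegral_mono hC) _
      _ = (n : ENNReal)^2 * (ENNReal.ofReal r * volume V) := by
          rw [lintegral_indicator_const hVm]
      _ = ENNReal.ofReal r * ((n : ENNReal)^2 * volume V) := by ring
      _ ≤ ENNReal.ofReal r * 4 := by
          refine mul_le_mul_right ?_ _
          rw [hVvol]
          have hcast : (n : ENNReal)^2 = ENNReal.ofReal ((n:ℝ)^2) := by
            rw [ENNReal.ofReal_pow (by positivity)]
            norm_num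
          rw [hcast, ← ENNReal.ofReal_mul (by positivity), ← ENNReal.ofReal_mul (by positivity)]
          rw [show (4:ENNReal) = ENNReal.ofReal 4 by norm_num]
          refine ENNReal.ofReal_le_ofReal ?_
          rw [show (n:ℝ)^2 * (2/n * (2/n)) = 4 * ((n/n)*(n/n)) by ring, div_self hn0'.ne']
          norm_num
      _ ≤ ε / 4 * 4 := mul_le_mul_left hrε _
      _ = ε := by
          rw [ENNReal.div_mul_cancel (by norm_num) (by norm_num)]
  -- conversion back to Bochner integrals
  have heq : ∀ n : ℕ, (∫ z in S, ‖sqApprox μ n z - μ z‖)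
      = (∫⁻ z in S, (‖sqApprox μ n z - μ z‖₊ : ENNReal)).toReal := by
    intro n
    have hsm : AEStronglyMeasurable (fun z => ‖sqApprox μ n z - μ z‖)
        (volume.restrict S) := by
      have : Measurable fun z => ‖sqApprox μ n z - μ z‖ := by
        have h1 := (sq_sqApprox_measurable μ n).sub hmeas
        exact h1.norm
      exact this.aestronglyMeasurable
    rw [integral_eq_lintegral_of_nonneg_ae (Filter.Eventually.of_forall
      (fun z => norm_nonneg _)) hsm]
    congr 1
    refine lintegral_congr fun z => ?_
    exact ofReal_norm _
  rw [funext heq]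
  have h4 : Tendsto ENNReal.toReal (nhds 0) (nhds (ENNReal.toReal 0)) :=
    ENNReal.tendsto_toReal ENNReal.zero_ne_top
  rw [ENNReal.toReal_zero] at h4
  exact h4.comp key
end
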